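/- arXiv:1108.4061 — 7 statements merged into one kernel-verified Lean document; each statement's English description precedes it below -/
import Mathlib

section
/- Let M and N be relatively prime positive integers with N < M < 2N. Set K = M − N + 1, L = ⌊M/K⌋, and r = K(L+1) − M. Then there exists a matrix A ∈ ℂ^{N×M} such that every column of A has norm 1, A·Aᴴ = (M/N)·I_N (i.e., the rows of A are pairwise orthogonal, each with squared norm M/N, so the columns of A form an M-element unit norm tight frame for ℂ^N), and A has at most rL² + (K−r)(L+1)² nonzero entries. -/
open Finset
namespace SparseUNTF
noncomputable section
open scoped Classical
set_option linter.unusedSectionVars false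
set_option linter.unusedTactic false
variable (M N : ℕ)

def K : ℕ := M - N + 1
def L : ℕ := M / K M N
def R : ℕ := K M N * (L M N + 1) - M
def x : ℝ := (M : ℝ) / (N : ℝ)
def dS : ℝ := ((L M N : ℝ) - 1) * x M N - L M N
def dB : ℝ := (L M N : ℝ) * x M N - ((L M N : ℝ) + 1)

def p : ℕ → ℕ
  | 0 => 0
  | j+1 => p j + (if p j < R M N ∧ 0 ≤ x M N + ((p j : ℝ)+1) * dS M N + ((j:ℝ) - (p j:ℝ)) * dB M N then 1 else 0)

def a (j : ℕ) : ℝ := x M N + (p M N j : ℝ) * dS M N + ((j:ℝ) - (p M N j : ℝ)) * dB M N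

variable {M N}
variable (hN : 0 < N) (h1 : N < M) (h2 : M < 2 * N)

section Basic
include hN h1

lemma hK2 : 2 ≤ K M N := by unfold K; omega
lemma hKM : K M N ≤ M := by unfold K; omega
lemma hMK : M + 1 = N + K M N := by unfold K; omega
lemma hKpos : 0 < K M N := by unfold K; omega
lemma hL1 : 1 ≤ L M N := by
  rw [L, Nat.one_le_div_iff (hKpos hN h1)]; exact hKM hN h1
lemma hKL : K M N * L M N ≤ M := by
  rw [L, mul_comm]; exact Nat.div_mul_le_self _ _
lemma hKL2 : M < K M N * (L M N + 1) := by
  have h := Nat.div_add_mod M (K M N)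
  have h2 := Nat.mod_lt M (hKpos hN h1)
  have : K M N * (L M N + 1) = K M N * L M N + K M N := by ring
  rw [L] at *; omega
lemma hRK : R M N ≤ K M N := by
  have h1' := hKL hN h1
  have : K M N * (L M N + 1) = K M N * L M N + K M N := by ring
  unfold R; omega
lemma hR1 : 1 ≤ R M N := by
  have := hKL2 hN h1; unfold R; omega
lemma hMR : M + R M N = K M N * (L M N + 1) := by
  have := hKL2 hN h1; unfold R; omega
lemma hLK1 : L M N * (K M N - 1) < M := by
  have h3 := hKL hN h1
  have h4 := hL1 hN h1
  have e : L M N * K M N = L M N * (K M N - 1) + L M N := by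
    conv_lhs => rw [show K M N = (K M N - 1) + 1 from by have := hKpos hN h1; omega]
    ring
  rw [mul_comm] at h3
  omega
lemma hNpos : (0:ℝ) < N := by exact_mod_cast hN
lemma hx1 : 1 < x M N := by
  rw [x]; rw [lt_div_iff₀ (hNpos hN h1)]; push_cast; simpa using h1
lemma hx0 : (0:ℝ) ≤ x M N := le_of_lt (lt_trans one_pos (hx1 hN h1))
lemma hdS : dS M N < 0 := by
  have hc : (L M N : ℝ) * ((M:ℝ) - N) < M := by
    have := hLK1 hN h1
    have hKN : K M N - 1 = M - N := by unfold K; omega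
    rw [hKN] at this
    have : ((L M N * (M - N) : ℕ) : ℝ) < (M:ℝ) := by exact_mod_cast this
    rwa [Nat.cast_mul, Nat.cast_sub (le_of_lt h1)] at this
  have hnum : ((L M N : ℝ) - 1) * M - (L M N : ℝ) * N < 0 := by nlinarith
  have : dS M N = (((L M N : ℝ) - 1) * M - (L M N : ℝ) * N) / N := by
    rw [dS, x]; field_simp
  rw [this]
  exact div_neg_of_neg_of_pos hnum (hNpos hN h1)
lemma hdBS : dB M N = dS M N + x M N - 1 := by rw [dB, dS]; ring
lemma hid : x M N + (R M N : ℝ) * dS M N + ((K M N : ℝ) - R M N) * dB M N = 0 := by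
  have e1 : (M:ℝ) + R M N = (K M N : ℝ) * ((L M N : ℝ) + 1) := by
    exact_mod_cast congrArg (Nat.cast : ℕ → ℝ) (hMR hN h1)
  have e2 : (M:ℝ) + 1 = (N:ℝ) + K M N := by
    exact_mod_cast congrArg (Nat.cast : ℕ → ℝ) (hMK hN h1)
  have hN' := hNpos hN h1
  rw [dS, dB, x]
  field_simp
  nlinarith [e1, e2]
end Basic
section Greedy
include hN h1

lemma hKRcast : ((K M N - R M N : ℕ) : ℝ) = (K M N : ℝ) - (R M N : ℝ) :=
  Nat.cast_sub (hRK hN h1)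

omit hN h1 in
lemma a_zero : a M N 0 = x M N := by simp [a, p]

omit hN h1 in
lemma p_succ (j : ℕ) : p M N (j+1)
    = p M N j + (if p M N j < R M N ∧ 0 ≤ a M N j + dS M N then 1 else 0) := by
  rw [p]
  have h : x M N + ((p M N j : ℝ)+1) * dS M N + ((j:ℝ) - (p M N j:ℝ)) * dB M N
      = a M N j + dS M N := by rw [a]; ring
  simp only [h]

omit hN h1 in
lemma a_step (j : ℕ) :
    (p M N (j+1) = p M N j + 1 ∧ a M N (j+1) = a M N j + dS M N) ∨
    (p M N (j+1) = p M N j ∧ a M N (j+1) = a M N j + dB M N) := by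
  by_cases hc : p M N j < R M N ∧ 0 ≤ a M N j + dS M N
  · left
    have hp : p M N (j+1) = p M N j + 1 := by rw [p_succ, if_pos hc]
    refine ⟨hp, ?_⟩
    rw [a, a, hp]; push_cast; ring
  · right
    have hp : p M N (j+1) = p M N j := by rw [p_succ, if_neg hc]; rfl
    refine ⟨hp, ?_⟩
    rw [a, a, hp]; push_cast; ring

lemma inv : ∀ j, j ≤ K M N →
    p M N j ≤ R M N ∧ j ≤ p M N j + (K M N - R M N) ∧
    0 ≤ a M N j ∧ a M N j ≤ x M N := by
  have hdS' := hdS hN h1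
  have hid' := hid hN h1
  have hx1' := hx1 hN h1
  have hRK' := hRK hN h1
  have hKR' := hKRcast hN h1
  intro j
  induction j with
  | zero =>
      intro _
      refine ⟨by simp [p], by omega, ?_, ?_⟩
      · rw [a_zero]; exact hx0 hN h1
      · rw [a_zero]
  | succ j ih =>
      intro hj1
      obtain ⟨i1, i2, i3, i4⟩ := ih (by omega)
      by_cases hc : p M N j < R M N ∧ 0 ≤ a M N j + dS M N
      · have hp : p M N (j+1) = p M N j + 1 := by rw [p_succ, if_pos hc]
        have ha : a M N (j+1) = a M N j + dS M N := by
          rcases a_step (M := M) (N := N) j with ⟨_, h⟩ | ⟨h, _⟩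
          · exact h
          · omega
        refine ⟨by omega, by omega, by linarith [hc.2], by linarith⟩
      · have hp : p M N (j+1) = p M N j := by rw [p_succ, if_neg hc]; rfl
        have ha : a M N (j+1) = a M N j + dB M N := by
          rcases a_step (M := M) (N := N) j with ⟨h, _⟩ | ⟨_, h⟩
          · omega
          · exact h
        rcases lt_or_eq_of_le i1 with hlt | heq
        · -- p j < R, so the small step must have been infeasible
          have hneg : a M N j + dS M N < 0 := by
            by_contra hge
            push_neg at hge
            exact hc ⟨hlt, hge⟩
          have hcastlt : ((p M N j : ℝ)) + 1 ≤ (R M N : ℝ) := by exact_mod_cast hlt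
          -- strict room for big blocks
          have hstrict : j + 1 ≤ p M N j + (K M N - R M N) := by
            by_contra hcon
            have heqj : j = p M N j + (K M N - R M N) := by omega
            have hcast : (j : ℝ) = (p M N j : ℝ) + ((K M N : ℝ) - R M N) := by
              rw [← hKR']; exact_mod_cast congrArg (Nat.cast : ℕ → ℝ) heqj
            have haj : a M N j = ((p M N j : ℝ) - R M N) * dS M N := by
              rw [a, hcast]; linear_combination hid'
            have : 0 ≤ a M N j + dS M N := by
              rw [haj]
              nlinarith [mul_nonneg (by linarith : (0:ℝ) ≤ (R M N : ℝ) - ((p M N j : ℝ) + 1)) (by linarith : (0:ℝ) ≤ -dS M N)]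
            linarith
          refine ⟨by omega, by omega, ?_, ?_⟩
          · -- lower bound
            by_cases hdB0 : 0 ≤ dB M N
            · linarith
            · push_neg at hdB0
              have haj2 : a M N j = ((p M N j : ℝ) - R M N) * dS M N +
                  ((j:ℝ) - (p M N j : ℝ) - (K M N : ℝ) + R M N) * dB M N := by
                rw [a]; linear_combination hid'
              have hcaststr : (j : ℝ) + 1 ≤ (p M N j : ℝ) + ((K M N:ℝ) - R M N) := by
                rw [← hKR']; exact_mod_cast hstrict
              rw [ha, haj2]
              nlinarith [mul_nonneg (by linarith : (0:ℝ) ≤ (R M N : ℝ) - (p M N j : ℝ)) (by linarith : (0:ℝ) ≤ -dS M N),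
                mul_nonneg (by linarith : (0:ℝ) ≤ (p M N j : ℝ) + ((K M N:ℝ) - R M N) - ((j:ℝ)+1)) (by linarith : (0:ℝ) ≤ -dB M N)]
          · -- upper bound
            rw [ha, hdBS hN h1]
            linarith
        · -- p j = R : all small blocks used up
          have hjK : j < K M N := by omega
          have hcastj : (j:ℝ) < (K M N : ℝ) := by exact_mod_cast hjK
          have haj : a M N j = ((j:ℝ) - (K M N : ℝ)) * dB M N := by
            rw [a, heq]; linear_combination hid'
          have hdB0 : dB M N ≤ 0 := by
            by_contra hpos
            push_neg at hpos
            nlinarith [i3, haj]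
          have hcastj1 : (j:ℝ) + 1 ≤ (K M N : ℝ) := by exact_mod_cast hj1
          refine ⟨by omega, by omega, ?_, by linarith⟩
          rw [ha, haj]
          nlinarith [mul_nonneg (by linarith : (0:ℝ) ≤ (K M N:ℝ) - ((j:ℝ)+1)) (by linarith : (0:ℝ) ≤ -dB M N)]

lemma pK : p M N (K M N) = R M N := by
  obtain ⟨i1, i2, _, _⟩ := inv hN h1 (K M N) le_rfl
  have := hRK hN h1
  omega

lemma aK : a M N (K M N) = 0 := by
  rw [a, pK hN h1]
  linear_combination hid hN h1

end Greedy

def ll (M N j : ℕ) : ℕ := if p M N (j+1) = p M N j + 1 then L M N else L M N + 1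

def c (M N j : ℕ) : ℕ := ∑ i ∈ range j, ll M N i

def s (M N j : ℕ) : ℕ := c M N j - j

def w (M N j q : ℕ) : ℝ :=
  (if q = 0 then a M N j else x M N) + (if q + 1 = ll M N j then -(a M N (j+1)) else 0)

def blk (M N m : ℕ) : ℕ := Nat.findGreatest (fun j => c M N j ≤ m) (K M N - 1)

section Blocks
include hN h1

lemma ll_pos (j : ℕ) : 1 ≤ ll M N j := by
  have := hL1 hN h1; unfold ll; split <;> omega

omit hN h1 in
lemma ll_eq (j : ℕ) :
    (ll M N j = L M N ∧ p M N (j+1) = p M N j + 1 ∧ a M N (j+1) = a M N j + dS M N) ∨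
    (ll M N j = L M N + 1 ∧ p M N (j+1) = p M N j ∧ a M N (j+1) = a M N j + dB M N) := by
  rcases a_step (M := M) (N := N) j with ⟨hp, ha⟩ | ⟨hp, ha⟩
  · left; exact ⟨by rw [ll, if_pos hp], hp, ha⟩
  · right
    have hne : ¬ p M N (j+1) = p M N j + 1 := by omega
    exact ⟨by rw [ll, if_neg hne], hp, ha⟩

omit hN h1 in
lemma c_succ (j : ℕ) : c M N (j+1) = c M N j + ll M N j := Finset.sum_range_succ _ _

omit hN h1 in
lemma c_zero : c M N 0 = 0 := rfl

lemma c_ge (j : ℕ) : j ≤ c M N j := by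
  induction j with
  | zero => simp [c]
  | succ j ih => have := ll_pos hN h1 j; rw [c_succ]; omega

lemma c_mono {i j : ℕ} (h : i ≤ j) : c M N i ≤ c M N j := by
  induction j with
  | zero => simp_all [c]
  | succ j ih =>
      rcases Nat.lt_or_ge i (j+1) with h' | h'
      · have := ih (by omega); have := ll_pos hN h1 j; rw [c_succ]; omega
      · have : i = j + 1 := by omega
        subst this; rfl

lemma s_succ (j : ℕ) : s M N (j+1) = s M N j + (ll M N j - 1) := by
  have h1' := c_ge hN h1 j
  have h2' := ll_pos hN h1 j
  have h3' := c_succ (M := M) (N := N) j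
  unfold s; omega

lemma s_mono {i j : ℕ} (h : i ≤ j) : s M N i ≤ s M N j := by
  induction j with
  | zero => simp_all [s]
  | succ j ih =>
      rcases Nat.lt_or_ge i (j+1) with h' | h'
      · have := ih (by omega); rw [s_succ hN h1]; omega
      · have : i = j + 1 := by omega
        subst this; rfl

lemma c_count (k : ℕ) : c M N k + p M N k = k * (L M N + 1) := by
  induction k with
  | zero => simp [c, p]
  | succ k ih =>
      have e2 : (k+1) * (L M N + 1) = k * (L M N + 1) + (L M N + 1) := by ring
      rw [c_succ, e2]
      rcases ll_eq (M := M) (N := N) k with ⟨hl, hp, _⟩ | ⟨hl, hp, _⟩ <;> rw [hl, hp] <;> omega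

lemma c_K : c M N (K M N) = M := by
  have h3 := c_count hN h1 (K M N)
  rw [pK hN h1] at h3
  have h4 := hMR hN h1
  omega

lemma sq_count (k : ℕ) :
    (∑ j ∈ range k, ll M N j ^ 2) + p M N k * (2 * L M N + 1) = k * (L M N + 1) ^ 2 := by
  induction k with
  | zero => simp [p]
  | succ k ih =>
      have e1 : (p M N k + 1)*(2*L M N+1) = p M N k*(2*L M N+1) + (2*L M N+1) := by ring
      have e2 : (k+1)*(L M N+1)^2 = k*(L M N+1)^2 + (L M N+1)^2 := by ring
      have e3 : (L M N+1)^2 = L M N^2 + 2*L M N+1 := by ring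
      rw [Finset.sum_range_succ, e2]
      rcases ll_eq (M := M) (N := N) k with ⟨hl, hp, _⟩ | ⟨hl, hp, _⟩ <;> rw [hl, hp] <;> omega

lemma sq_K : ∑ j ∈ range (K M N), ll M N j ^ 2
    = R M N * L M N ^ 2 + (K M N - R M N) * (L M N + 1) ^ 2 := by
  have h3 := sq_count hN h1 (K M N)
  rw [pK hN h1] at h3
  have h4 := hRK hN h1
  obtain ⟨d, hd⟩ := Nat.exists_eq_add_of_le h4
  rw [hd] at h3 ⊢
  rw [Nat.add_sub_cancel_left]
  have e1 : (R M N + d)*(L M N+1)^2 = R M N*(L M N+1)^2 + d*(L M N+1)^2 := by ring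
  have e2 : R M N*(L M N+1)^2 = R M N*L M N^2 + R M N*(2*L M N+1) := by ring
  omega

lemma s_K : s M N (K M N) = N - 1 := by
  have h3 := c_K hN h1
  have h4 := hMK hN h1
  have h5 := c_ge hN h1 (K M N)
  unfold s; omega

lemma row_bound {j : ℕ} (hj : j < K M N) : s M N j + ll M N j ≤ N := by
  have h3 := s_succ hN h1 j
  have h4 : s M N (j+1) ≤ s M N (K M N) := s_mono hN h1 (by omega)
  have h5 := s_K hN h1
  have h6 := ll_pos hN h1 j
  omega

lemma blk_eq {j q : ℕ} (hj : j < K M N) (hq : q < ll M N j) : blk M N (c M N j + q) = j := by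
  have hb : j ≤ K M N - 1 := by omega
  apply le_antisymm
  · by_contra hcon
    push_neg at hcon
    have hspec : c M N (blk M N (c M N j + q)) ≤ c M N j + q := by
      have h := Nat.findGreatest_spec (P := fun i => c M N i ≤ c M N j + q) (m := 0) (n := K M N - 1)
        (Nat.zero_le _) (by simp [c_zero])
      simpa [blk] using h
    have : c M N (j + 1) ≤ c M N (blk M N (c M N j + q)) := c_mono hN h1 hcon
    rw [c_succ] at this
    omega
  · show j ≤ Nat.findGreatest _ _
    exact Nat.le_findGreatest hb (Nat.le_add_right _ _)

lemma blk_mem {m : ℕ} (hm : m < M) :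
    blk M N m < K M N ∧ c M N (blk M N m) ≤ m ∧ m < c M N (blk M N m) + ll M N (blk M N m) := by
  have hKpos' := hKpos hN h1
  have h0 : blk M N m ≤ K M N - 1 := Nat.findGreatest_le _
  have hspec : c M N (blk M N m) ≤ m := by
    have h := Nat.findGreatest_spec (P := fun i => c M N i ≤ m) (m := 0) (n := K M N - 1)
      (Nat.zero_le _) (by simp [c_zero])
    simpa [blk] using h
  refine ⟨by omega, hspec, ?_⟩
  by_contra hcon
  push_neg at hcon
  rw [← c_succ] at hcon
  rcases Nat.lt_or_ge (blk M N m + 1) (K M N) with h' | h'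
  · have h9 : blk M N m + 1 ≤ blk M N m := by
      have := Nat.le_findGreatest (P := fun j => c M N j ≤ m)
        (by omega : blk M N m + 1 ≤ K M N - 1) hcon
      simpa [blk] using this
    omega
  · have hb : blk M N m + 1 = K M N := by omega
    rw [hb, c_K hN h1] at hcon
    omega

omit hN h1 in
lemma sum_part {β : Type*} [AddCommMonoid β] (f : ℕ → β) (k : ℕ) :
    ∑ m ∈ range (c M N k), f m = ∑ j ∈ range k, ∑ q ∈ range (ll M N j), f (c M N j + q) := by
  induction k with
  | zero => simp [c]
  | succ k ih =>
      rw [Finset.sum_range_succ, ← ih, c_succ, Finset.sum_range_add]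

end Blocks

section Weights
include hN h1

lemma w_nonneg {j q : ℕ} (hj : j < K M N) (hq : q < ll M N j) : 0 ≤ w M N j q := by
  obtain ⟨_, _, ha0, ha1⟩ := inv hN h1 j (le_of_lt hj)
  obtain ⟨_, _, hb0, hb1⟩ := inv hN h1 (j+1) hj
  have hL1' := hL1 hN h1
  rw [w]
  by_cases h1q : q + 1 = ll M N j
  · rw [if_pos h1q]
    by_cases h0 : q = 0
    · rw [if_pos h0]
      have hll1 : ll M N j = 1 := by omega
      rcases ll_eq (M := M) (N := N) j with ⟨hl, _, ha⟩ | ⟨hl, _, ha⟩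
      · have hLe : L M N = 1 := by omega
        have hdse : dS M N = -1 := by rw [dS, hLe]; push_cast; ring
        rw [ha, hdse]; linarith
      · omega
    · rw [if_neg h0]; linarith
  · rw [if_neg h1q]
    by_cases h0 : q = 0
    · rw [if_pos h0]; simpa using ha0
    · rw [if_neg h0]; simpa using hx0 hN h1

lemma w_sum {j : ℕ} (hj : j < K M N) :
    ∑ q ∈ range (ll M N j), w M N j q = (ll M N j : ℝ) := by
  have hl1 := ll_pos hN h1 j
  have e : ∀ q ∈ range (ll M N j), w M N j q =
      (x M N + (if q = 0 then a M N j - x M N else 0)) +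
      (if q = ll M N j - 1 then -(a M N (j+1)) else 0) := by
    intro q hq
    rw [w]
    congr 1
    · by_cases h0 : q = 0 <;> simp [h0]
    · have : (q + 1 = ll M N j) ↔ (q = ll M N j - 1) := by omega
      simp only [this]
  rw [Finset.sum_congr rfl e]
  rw [Finset.sum_add_distrib, Finset.sum_add_distrib, Finset.sum_const,
    Finset.sum_ite_eq' (range (ll M N j)) 0 (fun _ => a M N j - x M N),
    Finset.sum_ite_eq' (range (ll M N j)) (ll M N j - 1) (fun _ => -(a M N (j+1)))]
  rw [if_pos (Finset.mem_range.2 (by omega)), if_pos (Finset.mem_range.2 (by omega))]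
  rw [nsmul_eq_mul]
  simp only [Finset.card_range]
  rcases ll_eq (M := M) (N := N) j with ⟨hl, _, ha⟩ | ⟨hl, _, ha⟩ <;>
    rw [hl, ha] <;> [rw [dS]; rw [dB]] <;> push_cast <;> ring

end Weights

lemma dft {l : ℕ} (hl : 0 < l) {u u' : ℕ} (hu : u < l) (hu' : u' < l) :
    ∑ q ∈ range l, Complex.exp (((2*Real.pi*u*q/l : ℝ) : ℂ) * Complex.I) *
      (starRingEnd ℂ) (Complex.exp (((2*Real.pi*u'*q/l : ℝ) : ℂ) * Complex.I))
    = if u = u' then (l:ℂ) else 0 := by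
  have hl0 : (l:ℝ) ≠ 0 := Nat.cast_ne_zero.2 hl.ne'
  have hl0' : (l:ℂ) ≠ 0 := Nat.cast_ne_zero.2 hl.ne'
  set z : ℂ := Complex.exp (((2*Real.pi*((u:ℝ)-u')/l : ℝ) : ℂ) * Complex.I) with hz
  have hterm : ∀ q ∈ range l, Complex.exp (((2*Real.pi*u*q/l : ℝ) : ℂ) * Complex.I) *
      (starRingEnd ℂ) (Complex.exp (((2*Real.pi*u'*q/l : ℝ) : ℂ) * Complex.I)) = z ^ q := by
    intro q _
    rw [← Complex.exp_conj, ← Complex.exp_add, hz, ← Complex.exp_nat_mul]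
    congr 1
    have hc : (starRingEnd ℂ) (((2*Real.pi*u'*q/l : ℝ) : ℂ) * Complex.I)
        = -(((2*Real.pi*u'*q/l : ℝ) : ℂ)) * Complex.I := by
      rw [map_mul, Complex.conj_I, Complex.conj_ofReal]; ring
    rw [hc]
    push_cast
    field_simp
    ring
  rw [Finset.sum_congr rfl hterm]
  by_cases huu : u = u'
  · subst huu
    have hz1 : z = 1 := by
      rw [hz]; simp
    rw [hz1, if_pos rfl]
    simp
  · have hzl : z ^ l = 1 := by
      rw [hz, ← Complex.exp_nat_mul]
      have harg : (l:ℂ) * ((((2*Real.pi*((u:ℝ)-u')/l : ℝ)) : ℂ) * Complex.I)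
          = (((u:ℤ) - (u':ℤ) : ℤ) : ℂ) * (2 * (Real.pi : ℂ) * Complex.I) := by
        push_cast
        field_simp
      rw [harg, Complex.exp_int_mul_two_pi_mul_I]
    have hz1 : z ≠ 1 := by
      intro h
      rw [hz, Complex.exp_eq_one_iff] at h
      obtain ⟨n, hn⟩ := h
      have h2 : (((2*Real.pi*((u:ℝ)-u')/l : ℝ)) : ℂ) * Complex.I
          = ((((n:ℝ) * (2*Real.pi)) : ℝ) : ℂ) * Complex.I := by
        rw [hn]; push_cast; ring
      have h3 : (2*Real.pi*((u:ℝ)-u')/l : ℝ) = (n:ℝ) * (2*Real.pi) :=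
        Complex.ofReal_inj.1 (mul_right_cancel₀ Complex.I_ne_zero h2)
      have h4 : (u:ℝ) - u' = (n:ℝ) * l := by
        have hpi := Real.pi_ne_zero
        field_simp at h3
        exact mul_left_cancel₀ (mul_ne_zero (two_ne_zero) hpi)
          (show (2*Real.pi) * ((u:ℝ)-u') = (2*Real.pi) * ((n:ℝ)*l) by linear_combination (2*Real.pi) * h3)
      have h5 : (u:ℤ) - u' = n * l := by exact_mod_cast h4
      have h7 : (u:ℤ) - u' ≠ 0 := sub_ne_zero.2 (by exact_mod_cast huu)
      have h6 : (l:ℤ) ∣ |(u:ℤ) - u'| := (dvd_abs _ _).2 ⟨n, by linarith⟩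
      have h8 := Int.le_of_dvd (abs_pos.2 h7) h6
      have h9 : |(u:ℤ) - u'| < l := by
        rw [abs_sub_lt_iff]
        constructor <;> [skip; skip] <;> push_cast <;> omega
      omega
    rw [geom_sum_eq hz1, hzl, if_neg huu]
    simp


def F (M N j n : ℕ) : ℝ :=
  if n < s M N j then x M N else if n = s M N j then x M N - a M N j else 0

section RowSum
include hN h1

lemma tele {n j : ℕ} (hj : j < K M N) :
    (if s M N j ≤ n ∧ n < s M N j + ll M N j then w M N j (n - s M N j) else 0)
      = F M N (j+1) n - F M N j n := by
  have hss := s_succ hN h1 j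
  have hlp := ll_pos hN h1 j
  rcases Nat.lt_or_ge n (s M N j) with hc1 | hc1
  · -- n below block j
    rw [if_neg (by omega), F, F, if_pos (by omega : n < s M N (j+1)), if_pos hc1]
    ring
  rcases Nat.lt_or_ge (s M N (j+1)) n with hc2 | hc2
  · -- n above block j
    rw [if_neg (by omega), F, F, if_neg (by omega), if_neg (by omega),
      if_neg (by omega), if_neg (by omega)]
    ring
  -- s j ≤ n ≤ s (j+1)
  rw [if_pos (by omega)]
  rcases Nat.lt_or_ge n (s M N (j+1)) with hc3 | hc3
  · rcases Nat.eq_or_lt_of_le hc1 with hc4 | hc4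
    · -- n = s j < s (j+1) : first row of a block of size ≥ 2
      rw [w, if_pos (by omega), if_neg (by omega), F, F,
        if_pos hc3, if_neg (by omega), if_pos (by omega)]
      ring
    · -- s j < n < s (j+1) : middle row
      rw [w, if_neg (by omega), if_neg (by omega), F, F,
        if_pos hc3, if_neg (by omega), if_neg (by omega)]
      ring
  · have hc3' : n = s M N (j+1) := by omega
    rcases Nat.eq_or_lt_of_le hc1 with hc4 | hc4
    · -- n = s j = s (j+1) : block of size 1
      rw [w, if_pos (by omega), if_pos (by omega), F, F, if_neg (by omega),
        if_pos hc3', if_neg (by omega), if_pos (by omega)]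
      ring
    · -- n = s (j+1) > s j : last row of a block of size ≥ 2
      rw [w, if_neg (by omega), if_pos (by omega), F, F, if_neg (by omega),
        if_pos hc3', if_neg (by omega), if_neg (by omega)]
      ring

lemma rowsum {n : ℕ} (hn : n < N) :
    ∑ j ∈ range (K M N), (if s M N j ≤ n ∧ n < s M N j + ll M N j
      then w M N j (n - s M N j) else 0) = x M N := by
  have h0 : ∀ j ∈ range (K M N),
      (if s M N j ≤ n ∧ n < s M N j + ll M N j then w M N j (n - s M N j) else 0)
        = F M N (j+1) n - F M N j n := fun j hj => tele hN h1 (Finset.mem_range.1 hj)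
  rw [Finset.sum_congr rfl h0, Finset.sum_range_sub (fun j => F M N j n)]
  have hF0 : F M N 0 n = 0 := by
    rw [F]
    have hs0 : s M N 0 = 0 := by simp [s, c]
    rw [hs0]
    rcases Nat.eq_zero_or_pos n with h | h
    · rw [if_neg (by omega), if_pos h, a_zero]; ring
    · rw [if_neg (by omega), if_neg (by omega)]
  have hFK : F M N (K M N) n = x M N := by
    have hsK := s_K hN h1
    rw [F, hsK]
    rcases Nat.lt_or_ge n (N-1) with h | h
    · rw [if_pos h]
    · have : n = N - 1 := by omega
      rw [if_neg (by omega), if_pos this, aK hN h1]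
      ring
  rw [hF0, hFK]
  ring

end RowSum

def ent (M N j u q : ℕ) : ℂ :=
  ((Real.sqrt (w M N j u) / Real.sqrt (ll M N j) : ℝ) : ℂ) *
    Complex.exp (((2 * Real.pi * u * q / (ll M N j) : ℝ) : ℂ) * Complex.I)

def Af (M N k mm : ℕ) : ℂ :=
  if s M N (blk M N mm) ≤ k ∧ k < s M N (blk M N mm) + ll M N (blk M N mm) then
    ent M N (blk M N mm) (k - s M N (blk M N mm)) (mm - c M N (blk M N mm)) else 0

def A (M N : ℕ) : Matrix (Fin N) (Fin M) ℂ := fun n m => Af M N (n : ℕ) (m : ℕ)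

section MatrixLemmas
include hN h1

lemma norm_ent_sq {j u : ℕ} (hj : j < K M N) (hu : u < ll M N j) (q : ℕ) :
    ‖ent M N j u q‖ ^ 2 = w M N j u / (ll M N j : ℝ) := by
  have hw := w_nonneg hN h1 hj hu
  have hlp := ll_pos hN h1 j
  rw [ent, norm_mul, Complex.norm_exp_ofReal_mul_I, mul_one, Complex.norm_real,
    Real.norm_eq_abs, sq_abs, div_pow, Real.sq_sqrt hw, Real.sq_sqrt (by positivity)]

lemma col_norm (m : Fin M) : ∑ n : Fin N, ‖A M N n m‖ ^ 2 = 1 := by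
  obtain ⟨hjK, hcm, hcm2⟩ := blk_mem hN h1 (m.2 : (m:ℕ) < M)
  set j := blk M N (m:ℕ) with hjdef
  have hrow := row_bound hN h1 hjK
  have hlp := ll_pos hN h1 j
  have h0 : ∑ n : Fin N, ‖A M N n m‖ ^ 2 = ∑ k ∈ range N, ‖Af M N k (m:ℕ)‖ ^ 2 :=
    Fin.sum_univ_eq_sum_range (fun k => ‖Af M N k (m:ℕ)‖ ^ 2) N
  rw [h0]
  have h2 : ∀ k ∈ range N, ‖Af M N k (m:ℕ)‖ ^ 2
      = if s M N j ≤ k ∧ k < s M N j + ll M N j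
          then w M N j (k - s M N j) / (ll M N j : ℝ) else 0 := by
    intro k hk
    rw [Af, ← hjdef]
    by_cases hc : s M N j ≤ k ∧ k < s M N j + ll M N j
    · rw [if_pos hc, if_pos hc, norm_ent_sq hN h1 hjK (by omega)]
    · rw [if_neg hc, if_neg hc, norm_zero]
      norm_num
  rw [Finset.sum_congr rfl h2]
  have h3 : ∀ k ∈ range N, (if s M N j ≤ k ∧ k < s M N j + ll M N j
        then w M N j (k - s M N j) / (ll M N j : ℝ) else 0)
      = if k ∈ Finset.Ico (s M N j) (s M N j + ll M N j)
          then w M N j (k - s M N j) / (ll M N j : ℝ) else 0 := by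
    intro k hk
    simp only [Finset.mem_Ico]
  rw [Finset.sum_congr rfl h3, Finset.sum_ite_mem,
    Finset.inter_eq_right.2 (by
      intro k hk
      rw [Finset.mem_Ico] at hk
      exact Finset.mem_range.2 (by omega)),
    Finset.sum_Ico_eq_sum_range]
  simp only [Nat.add_sub_cancel_left, Nat.add_sub_cancel]
  rw [← Finset.sum_div, w_sum hN h1 hjK]
  exact div_self (Nat.cast_ne_zero.2 (by omega))

end MatrixLemmas

section Gram
include hN h1

lemma block_inner (n n' : ℕ) {j : ℕ} (hjK : j < K M N) :
    ∑ q ∈ range (ll M N j), Af M N n (c M N j + q) * (starRingEnd ℂ) (Af M N n' (c M N j + q))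
      = if s M N j ≤ n ∧ n < s M N j + ll M N j ∧ n = n'
          then ((w M N j (n - s M N j) : ℝ) : ℂ) else 0 := by
  have hlp := ll_pos hN h1 j
  have hAf : ∀ k, ∀ q ∈ range (ll M N j), Af M N k (c M N j + q)
      = if s M N j ≤ k ∧ k < s M N j + ll M N j then ent M N j (k - s M N j) q else 0 := by
    intro k q hq
    rw [Af, blk_eq hN h1 hjK (Finset.mem_range.1 hq), Nat.add_sub_cancel_left]
  by_cases hn : s M N j ≤ n ∧ n < s M N j + ll M N j
  · by_cases hn' : s M N j ≤ n' ∧ n' < s M N j + ll M N j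
    · -- both rows belong to block j
      set u := n - s M N j with hu
      set u' := n' - s M N j with hu'
      have huL : u < ll M N j := by omega
      have huL' : u' < ll M N j := by omega
      have hterm : ∀ q ∈ range (ll M N j),
          Af M N n (c M N j + q) * (starRingEnd ℂ) (Af M N n' (c M N j + q))
          = ((Real.sqrt (w M N j u) / Real.sqrt (ll M N j) *
              (Real.sqrt (w M N j u') / Real.sqrt (ll M N j)) : ℝ) : ℂ) *
            (Complex.exp (((2 * Real.pi * u * q / (ll M N j) : ℝ) : ℂ) * Complex.I) *
              (starRingEnd ℂ) (Complex.exp (((2 * Real.pi * u' * q / (ll M N j) : ℝ) : ℂ) * Complex.I))) := by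
        intro q hq
        rw [hAf n q hq, hAf n' q hq, if_pos hn, if_pos hn', ent, ent, map_mul,
          Complex.conj_ofReal]
        push_cast
        ring
      rw [Finset.sum_congr rfl hterm, ← Finset.mul_sum, dft (by omega) huL huL']
      by_cases huu : u = u'
      · have hnn : n = n' := by omega
        rw [if_pos huu, if_pos ⟨hn.1, hn.2, hnn⟩, huu]
        rw [← Complex.ofReal_natCast, ← Complex.ofReal_mul]
        congr 1
        rw [div_mul_div_comm, Real.mul_self_sqrt (w_nonneg hN h1 hjK huL'),
          Real.mul_self_sqrt (by positivity)]
        rw [div_mul_eq_mul_div, mul_div_assoc, div_self (Nat.cast_ne_zero.2 (by omega)), mul_one]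
      · have hnn : ¬ n = n' := by omega
        rw [if_neg huu, if_neg (by tauto), mul_zero]
    · -- n' not in block j
      have hzero : ∀ q ∈ range (ll M N j),
          Af M N n (c M N j + q) * (starRingEnd ℂ) (Af M N n' (c M N j + q)) = 0 := by
        intro q hq
        rw [hAf n' q hq, if_neg hn', map_zero, mul_zero]
      rw [Finset.sum_congr rfl hzero, Finset.sum_const, smul_zero]
      have : ¬ (s M N j ≤ n ∧ n < s M N j + ll M N j ∧ n = n') := by
        rintro ⟨h1', h2', rfl⟩
        exact hn' ⟨h1', h2'⟩
      rw [if_neg this]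
  · -- n not in block j
    have hzero : ∀ q ∈ range (ll M N j),
        Af M N n (c M N j + q) * (starRingEnd ℂ) (Af M N n' (c M N j + q)) = 0 := by
      intro q hq
      rw [hAf n q hq, if_neg hn, zero_mul]
    rw [Finset.sum_congr rfl hzero, Finset.sum_const, smul_zero, if_neg (by tauto)]

lemma gram : A M N * (A M N).conjTranspose
    = ((M : ℂ) / (N : ℂ)) • (1 : Matrix (Fin N) (Fin N) ℂ) := by
  ext n n'
  rw [Matrix.mul_apply]
  simp only [Matrix.conjTranspose_apply, Matrix.smul_apply, Matrix.one_apply, smul_eq_mul, Complex.star_def]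
  have h0 : ∑ m : Fin M, A M N n m * (starRingEnd ℂ) (A M N n' m)
      = ∑ mm ∈ range M, Af M N (n:ℕ) mm * (starRingEnd ℂ) (Af M N (n':ℕ) mm) :=
    Fin.sum_univ_eq_sum_range (fun mm => Af M N (n:ℕ) mm * (starRingEnd ℂ) (Af M N (n':ℕ) mm)) M
  rw [h0, show (range M) = range (c M N (K M N)) from by rw [c_K hN h1],
    sum_part, Finset.sum_congr rfl
    (fun j hj => block_inner hN h1 (n:ℕ) (n':ℕ) (Finset.mem_range.1 hj))]
  by_cases hnn : n = n'
  · subst hnn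
    rw [if_pos rfl, mul_one]
    have hcongr : ∀ j ∈ range (K M N),
        (if s M N j ≤ (n:ℕ) ∧ (n:ℕ) < s M N j + ll M N j ∧ (n:ℕ) = (n:ℕ)
          then ((w M N j ((n:ℕ) - s M N j) : ℝ) : ℂ) else 0)
        = ((if s M N j ≤ (n:ℕ) ∧ (n:ℕ) < s M N j + ll M N j
            then w M N j ((n:ℕ) - s M N j) else 0 : ℝ) : ℂ) := by
      intro j hj
      by_cases hc : s M N j ≤ (n:ℕ) ∧ (n:ℕ) < s M N j + ll M N j
      · rw [if_pos ⟨hc.1, hc.2, rfl⟩, if_pos hc]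
      · rw [if_neg (by tauto), if_neg hc, Complex.ofReal_zero]
    rw [Finset.sum_congr rfl hcongr, ← Complex.ofReal_sum, rowsum hN h1 n.2, x]
    push_cast
    ring
  · have hnn' : ¬ ((n:ℕ) = (n':ℕ)) := fun h => hnn (Fin.ext h)
    rw [if_neg hnn, mul_zero]
    have hcongr : ∀ j ∈ range (K M N),
        (if s M N j ≤ (n:ℕ) ∧ (n:ℕ) < s M N j + ll M N j ∧ (n:ℕ) = (n':ℕ)
          then ((w M N j ((n:ℕ) - s M N j) : ℝ) : ℂ) else 0) = 0 := by
      intro j hj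
      rw [if_neg (by tauto)]
    rw [Finset.sum_congr rfl hcongr, Finset.sum_const, smul_zero]

end Gram

section Sparse
include hN h1

lemma sparse : {pr : Fin N × Fin M | A M N pr.1 pr.2 ≠ 0}.ncard
    ≤ R M N * L M N ^ 2 + (K M N - R M N) * (L M N + 1) ^ 2 := by
  classical
  set T : Finset (Fin N × Fin M) := Finset.univ.filter
    (fun pr : Fin N × Fin M => s M N (blk M N (pr.2:ℕ)) ≤ (pr.1:ℕ) ∧
      (pr.1:ℕ) < s M N (blk M N (pr.2:ℕ)) + ll M N (blk M N (pr.2:ℕ))) with hT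
  have hsub : {pr : Fin N × Fin M | A M N pr.1 pr.2 ≠ 0} ⊆ (T : Set (Fin N × Fin M)) := by
    intro pr hpr
    simp only [Set.mem_setOf_eq] at hpr
    simp only [hT, Finset.coe_filter, Finset.mem_univ, true_and, Set.mem_setOf_eq]
    by_contra hc
    exact hpr (by rw [A, Af, if_neg hc])
  have h1' : {pr : Fin N × Fin M | A M N pr.1 pr.2 ≠ 0}.ncard ≤ T.card := by
    have := Set.ncard_le_ncard hsub T.finite_toSet
    rwa [Set.ncard_coe_finset] at this
  -- inject T into the sigma type of (column, in-block row index) pairs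
  set S : Finset ((_ : Fin M) × ℕ) := Finset.univ.sigma
    (fun m : Fin M => range (ll M N (blk M N (m:ℕ)))) with hS
  have h2 : T.card ≤ S.card := by
    apply Finset.card_le_card_of_injOn
      (fun pr => ⟨pr.2, (pr.1:ℕ) - s M N (blk M N (pr.2:ℕ))⟩)
    · intro pr hpr
      simp only [hT, Finset.mem_coe, Finset.mem_filter] at hpr
      simp only [hS, Finset.mem_coe, Finset.mem_sigma, Finset.mem_univ, true_and, Finset.mem_range]
      omega
    · intro pr hpr pr' hpr' heq
      simp only [hT, Finset.mem_filter, Finset.coe_filter] at hpr hpr'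
      simp only [Set.mem_setOf_eq] at hpr hpr'
      obtain ⟨hm, hq⟩ := Sigma.mk.inj_iff.1 heq
      have hm' : pr.2 = pr'.2 := hm
      rw [heq_iff_eq] at hq
      rw [hm'] at hq hpr
      have : (pr.1 : ℕ) = (pr'.1 : ℕ) := by omega
      exact Prod.ext (Fin.ext this) hm'
  have h3 : S.card = ∑ m : Fin M, ll M N (blk M N (m:ℕ)) := by
    rw [hS, Finset.card_sigma]
    simp
  have h4 : ∑ m : Fin M, ll M N (blk M N (m:ℕ)) = ∑ mm ∈ range M, ll M N (blk M N mm) :=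
    Fin.sum_univ_eq_sum_range (fun mm => ll M N (blk M N mm)) M
  have h5 : ∑ mm ∈ range M, ll M N (blk M N mm) = ∑ j ∈ range (K M N), ll M N j ^ 2 := by
    rw [show (range M) = range (c M N (K M N)) from by rw [c_K hN h1], sum_part]
    apply Finset.sum_congr rfl
    intro j hj
    have hjK := Finset.mem_range.1 hj
    have : ∀ q ∈ range (ll M N j), ll M N (blk M N (c M N j + q)) = ll M N j := by
      intro q hq
      rw [blk_eq hN h1 hjK (Finset.mem_range.1 hq)]
    rw [Finset.sum_congr rfl this, Finset.sum_const, Finset.card_range, smul_eq_mul, sq]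
  calc {pr : Fin N × Fin M | A M N pr.1 pr.2 ≠ 0}.ncard ≤ T.card := h1'
    _ ≤ S.card := h2
    _ = ∑ j ∈ range (K M N), ll M N j ^ 2 := by rw [h3, h4, h5]
    _ = R M N * L M N ^ 2 + (K M N - R M N) * (L M N + 1) ^ 2 := sq_K hN h1

end Sparse
end
end SparseUNTF

/-- Let `M, N` be relatively prime with `N < M < 2N`, `K = M − N + 1`,
`L = ⌊M/K⌋` and `r = K(L+1) − M`.  Then there is an `M`-element unit norm tight
frame for `ℂ^N` (given by the columns of an `N × M` synthesis matrix `A` with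
unit-norm columns and `A Aᴴ = (M/N) I`) whose synthesis matrix has at most
`rL² + (K−r)(L+1)²` nonzero entries. -/
theorem sparse_low_redundancy_tight_frame (N M : ℕ) (hcop : Nat.Coprime M N)
    (hN : 0 < N) (h1 : N < M) (h2 : M < 2 * N)
    (K L r : ℕ) (hK : K = M - N + 1) (hL : L = M / K) (hr : r = K * (L + 1) - M) :
    ∃ A : Matrix (Fin N) (Fin M) ℂ,
      (∀ m : Fin M, ∑ n : Fin N, ‖A n m‖ ^ 2 = 1) ∧
      A * A.conjTranspose = ((M : ℂ) / (N : ℂ)) • 1 ∧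
      {p : Fin N × Fin M | A p.1 p.2 ≠ 0}.ncard ≤ r * L ^ 2 + (K - r) * (L + 1) ^ 2 := by
  have hKe : SparseUNTF.K M N = K := by rw [SparseUNTF.K, hK]
  have hLe : SparseUNTF.L M N = L := by rw [SparseUNTF.L, hKe, hL]
  have hRe : SparseUNTF.R M N = r := by rw [SparseUNTF.R, hKe, hLe, hr]
  refine ⟨SparseUNTF.A M N, SparseUNTF.col_norm hN h1, SparseUNTF.gram hN h1, ?_⟩
  have := SparseUNTF.sparse hN h1 (M := M) (N := N)
  rwa [hKe, hLe, hRe] at this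
end

section
/- Let N < M < 2N be positive integers, g = gcd(M,N), M' = M/g, N' = N/g, K' = M' − N' + 1, L' = ⌊M'/K'⌋, and r' = K'(L'+1) − M'. Then there exists a matrix A ∈ ℂ^{N×M} such that every column of A has norm 1, A·Aᴴ = (M/N)·I_N, and A has at most g·(r'L'² + (K'−r')(L'+1)²) nonzero entries. -/
open Finset Complex

namespace SLRTF


def tt (Mp k L i : ℕ) : ℕ := min (i * (Mp - L * k) / k) (min i (Mp - (k + 1) * L))

def SS (Mp k L i : ℕ) : ℕ := i * L + tt Mp k L i

def ss (Mp k L i : ℕ) : ℕ := SS Mp k L (i + 1) - SS Mp k L i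

section Comb
variable {Mp Np k L : ℕ} (hk : 0 < k) (hNp : 0 < Np) (hMp : Mp = Np + k)
  (hL : L = Mp / (k + 1))

include hk hNp hMp hL

omit hNp hMp in
lemma hLk : (k + 1) * L ≤ Mp := by
  subst hL
  calc (k+1) * (Mp / (k+1)) = Mp / (k+1) * (k+1) := by ring
  _ ≤ Mp := Nat.div_mul_le_self _ _

omit hNp hMp in
lemma hMK : Mp < (k + 1) * (L + 1) := by
  have h1 := Nat.div_add_mod Mp (k+1)
  have h2 := Nat.mod_lt Mp (show 0 < k+1 by omega)
  have h3 : (k+1) * (L+1) = (k+1) * L + (k+1) := by ring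
  subst hL
  omega

lemma hL1 : 1 ≤ L := by
  subst hL
  exact (Nat.one_le_div_iff (by omega)).2 (by omega)

omit hk hNp hMp hL in
lemma tt_mono (i : ℕ) : tt Mp k L i ≤ tt Mp k L (i + 1) := by
  unfold tt
  have h1 : i * (Mp - L * k) / k ≤ (i+1) * (Mp - L*k) / k :=
    Nat.div_le_div_right (Nat.mul_le_mul_right _ (by omega))
  omega

omit hNp hMp hL in
lemma tt_step (i : ℕ) : tt Mp k L (i + 1) ≤ tt Mp k L i + 1 := by
  unfold tt
  rcases le_or_gt k (Mp - L * k) with hD | hD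
  · have h1 : i ≤ i * (Mp - L * k) / k := by
      calc i = i * k / k := by rw [Nat.mul_div_cancel _ hk]
      _ ≤ i * (Mp - L * k) / k := Nat.div_le_div_right (Nat.mul_le_mul_left _ hD)
    have h2 : i + 1 ≤ (i+1) * (Mp - L * k) / k := by
      calc i + 1 = (i+1) * k / k := by rw [Nat.mul_div_cancel _ hk]
      _ ≤ _ := Nat.div_le_div_right (Nat.mul_le_mul_left _ hD)
    omega
  · have hr : (i+1) * (Mp - L*k) = i * (Mp - L*k) + (Mp - L*k) := by ring
    have h1 : (i+1) * (Mp - L * k) / k ≤ i * (Mp - L * k) / k + 1 := by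
      calc (i+1) * (Mp - L * k) / k ≤ (i * (Mp - L*k) + k) / k :=
            Nat.div_le_div_right (by omega)
      _ = i * (Mp - L*k) / k + 1 := Nat.add_div_right _ hk
    omega

omit hk hNp hMp hL in
lemma SS_zero : SS Mp k L 0 = 0 := by simp [SS, tt]

lemma SS_last : SS Mp k L (k + 1) = Mp := by
  have h1 := hLk hk hL
  have h2 := hMK hk hL
  have hr1 : (k+1) * (L+1) = (k+1) * L + (k+1) := by ring
  have hlk : L * k ≤ Mp := by
    have : L * k ≤ (k+1) * L := by nlinarith
    omega
  have hcap : (k+1) * (Mp - L * k) = k * (Mp - (k+1) * L) + Mp := by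
    zify [hlk, h1]; ring
  have hc1 : Mp - (k+1)*L ≤ (k+1) * (Mp - L*k) / k := by
    have e1 : Mp - (k+1)*L = k * (Mp - (k+1)*L) / k := (Nat.mul_div_cancel_left _ hk).symm
    rw [e1, hcap]
    exact Nat.div_le_div_right (by omega)
  unfold SS tt
  omega

omit hk hNp hMp hL in
lemma SS_succ_sub (i : ℕ) : SS Mp k L (i+1) = SS Mp k L i + (tt Mp k L (i+1) - tt Mp k L i) + L := by
  have h1 := tt_mono (Mp := Mp) (k := k) (L := L) i
  have hr : (i+1) * L = i * L + L := by ring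
  unfold SS
  omega

lemma ss_bounds (i : ℕ) : L ≤ ss Mp k L i ∧ ss Mp k L i ≤ L + 1 := by
  have h1 := tt_mono (Mp := Mp) (k := k) (L := L) i
  have h2 := tt_step (Mp := Mp) (L := L) hk i
  have h3 := SS_succ_sub (Mp := Mp) (k := k) (L := L) i
  unfold ss
  omega

omit hk hNp hMp hL in
lemma SS_add (i : ℕ) : SS Mp k L (i + 1) = SS Mp k L i + ss Mp k L i := by
  have h1 := tt_mono (Mp := Mp) (k := k) (L := L) i
  have h3 := SS_succ_sub (Mp := Mp) (k := k) (L := L) i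
  unfold ss
  omega

omit hk hNp hMp hL in
lemma SS_mono {i j : ℕ} (h : i ≤ j) : SS Mp k L i ≤ SS Mp k L j := by
  induction j with
  | zero =>
    have : i = 0 := by omega
    subst this; exact le_refl _
  | succ j ih =>
    rcases Nat.lt_or_ge i (j+1) with h' | h'
    · have h2 := SS_add (Mp := Mp) (k := k) (L := L) j
      have h3 := ih (by omega)
      omega
    · have : i = j + 1 := by omega
      subst this; exact le_refl _

lemma tubeU (i : ℕ) : k * SS Mp k L i ≤ i * Mp := by
  have h1 := hLk hk hL
  have hlk : L * k ≤ Mp := by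
    have : L * k ≤ (k+1) * L := by nlinarith
    omega
  obtain ⟨D, hD⟩ : ∃ D, Mp = L * k + D := ⟨Mp - L*k, by omega⟩
  have e1 : Mp - L * k = D := by omega
  have h2 : tt Mp k L i ≤ i * D / k := by
    unfold tt; rw [e1]; exact min_le_left _ _
  have h3 : i * D / k * k ≤ i * D := Nat.div_mul_le_self _ _
  have h4 : k * tt Mp k L i ≤ k * (i * D / k) := Nat.mul_le_mul_left _ h2
  have hr0 : k * (i * D / k) = i * D / k * k := by ring
  have hr1 : k * SS Mp k L i = k * (i*L) + k * tt Mp k L i := by unfold SS; ring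
  have hr2 : i * Mp = k * (i*L) + i * D := by rw [hD]; ring
  omega

lemma tubeL {j : ℕ} (hj : j ≤ k) : j * Mp ≤ k * SS Mp k L (j + 1) := by
  have h1 := hLk hk hL
  have h2 := hMK hk hL
  have hlk : L * k ≤ Mp := by
    have : L * k ≤ (k+1) * L := by nlinarith
    omega
  obtain ⟨D, hD⟩ : ∃ D, Mp = L * k + D := ⟨Mp - L*k, by omega⟩
  obtain ⟨cap, hcap⟩ : ∃ cap, Mp = (k+1) * L + cap := ⟨Mp - (k+1)*L, by omega⟩
  have e1 : Mp - L * k = D := by omega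
  have e2 : Mp - (k+1) * L = cap := by omega
  -- branch (a)
  have hdm := Nat.div_add_mod ((j+1) * D) k
  have hmlt := Nat.mod_lt ((j+1) * D) hk
  have ha : j * Mp ≤ k * ((j+1) * L) + k * ((j+1) * D / k) := by
    have hMk : k ≤ Mp := by omega
    have hr1 : (j+1) * Mp = k * ((j+1)*L) + (j+1) * D := by rw [hD]; ring
    have hr2 : (j+1) * Mp = j * Mp + Mp := by ring
    omega
  -- branch (b)
  have hb : j * Mp ≤ k * ((j+1) * L) + k * (j+1) := by
    calc j * Mp ≤ j * ((k+1) * (L+1)) := Nat.mul_le_mul_left _ (le_of_lt h2)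
    _ ≤ (j+1) * k * (L+1) := by nlinarith
    _ = k * ((j+1) * L) + k * (j+1) := by ring
  -- branch (c)
  have hc : j * Mp ≤ k * ((j+1) * L) + k * cap := by
    obtain ⟨d, hd⟩ : ∃ d, k = j + d := ⟨k - j, by omega⟩
    have hr1 : k * Mp = k * ((k+1) * L) + k * cap := by rw [hcap]; ring
    have hr2 : k * Mp = j * Mp + d * Mp := by rw [hd]; ring
    have hr3 : k * ((k+1)*L) = k * ((j+1)*L) + k * (d * L) := by rw [hd]; ring
    have hr4 : d * (L * k) ≤ d * Mp := Nat.mul_le_mul_left _ (by omega)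
    have hr5 : d * (L * k) = k * (d * L) := by ring
    omega
  have hmin : tt Mp k L (j+1) = (j+1) * D / k ∨ tt Mp k L (j+1) = j+1 ∨
      tt Mp k L (j+1) = cap := by
    unfold tt; rw [e1, e2]; omega
  have hr : k * SS Mp k L (j+1) = k * ((j+1)*L) + k * tt Mp k L (j+1) := by
    unfold SS; ring
  rcases hmin with e | e | e <;> rw [e] at hr <;> omega

end Comb
/-- intersection length of block `i` (interval `[SS i * Np, SS (i+1) * Np]`)
with row `r` (interval `[r * Mp, (r+1) * Mp]`), in the common refinement scale. -/
def oo (Mp Np k L i r : ℕ) : ℕ :=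
  min (SS Mp k L (i+1) * Np) ((r+1) * Mp) - max (SS Mp k L i * Np) (r * Mp)

/-- the block containing column `c` -/
def blk (Mp k L c : ℕ) : ℕ := Nat.findGreatest (fun i => SS Mp k L i ≤ c) k

section P2
variable {Mp Np k L : ℕ} (hk : 0 < k) (hNp : 0 < Np) (hMp : Mp = Np + k)
  (hL : L = Mp / (k + 1))


omit hk hNp hMp hL in
lemma blk_le (c : ℕ) : blk Mp k L c ≤ k := Nat.findGreatest_le _

omit hk hNp hMp hL in
lemma blk_spec {i p : ℕ} (hi : i ≤ k) (hp : p < ss Mp k L i) :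
    blk Mp k L (SS Mp k L i + p) = i := by
  rw [blk, Nat.findGreatest_eq_iff]
  refine ⟨hi, fun _ => by omega, fun n hn hnk hSn => ?_⟩
  have h1 : SS Mp k L (i+1) ≤ SS Mp k L n := SS_mono hn
  have h2 := SS_add (Mp := Mp) (k := k) (L := L) i
  omega

include hk hNp hMp hL in
lemma row_lb {i r : ℕ} (hpos : SS Mp k L i * Np < (r+1) * Mp) :
    SS Mp k L i ≤ r + i := by
  have tU := tubeU hk hNp hMp hL i
  have hr1 : SS Mp k L i * Mp = SS Mp k L i * Np + k * SS Mp k L i := by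
    rw [hMp]; ring
  have hr2 : (r+1+i) * Mp = (r+1) * Mp + i * Mp := by ring
  have h3 : SS Mp k L i * Mp < (r+1+i) * Mp := by omega
  have := Nat.lt_of_mul_lt_mul_right h3
  omega

include hk hNp hMp hL in
lemma row_ub {i r : ℕ} (hi : i ≤ k) (hpos : r * Mp < SS Mp k L (i+1) * Np) :
    r + i + 1 ≤ SS Mp k L (i+1) := by
  have tL := tubeL hk hNp hMp hL hi
  have hr1 : SS Mp k L (i+1) * Mp = SS Mp k L (i+1) * Np + k * SS Mp k L (i+1) := by
    rw [hMp]; ring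
  have hr2 : (r+i) * Mp = r * Mp + i * Mp := by ring
  have h3 : (r+i) * Mp < SS Mp k L (i+1) * Mp := by omega
  have := Nat.lt_of_mul_lt_mul_right h3
  omega

include hk hNp hMp hL in
/-- rows meeting block `i` lie in `[SS i - i, SS (i+1) - i - 1]` -/
lemma rowRange {i r : ℕ} (hi : i ≤ k) (hpos : 0 < oo Mp Np k L i r) :
    SS Mp k L i ≤ r + i ∧ r + i + 1 ≤ SS Mp k L (i+1) := by
  have h1 : SS Mp k L i * Np < (r+1) * Mp ∧ r * Mp < SS Mp k L (i+1) * Np := by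
    unfold oo at hpos; omega
  exact ⟨row_lb hk hNp hMp hL h1.1, row_ub hk hNp hMp hL hi h1.2⟩

include hk hNp hMp hL in
lemma sum_oo_col {i : ℕ} (hi : i ≤ k) :
    ∑ r ∈ range Np, oo Mp Np k L i r = ss Mp k L i * Np := by
  set F : ℕ → ℕ := fun r => min (SS Mp k L (i+1) * Np) (max (SS Mp k L i * Np) (r * Mp)) with hF
  have hmono : Monotone F := by
    intro x y hxy
    have : x * Mp ≤ y * Mp := Nat.mul_le_mul_right _ hxy
    simp only [hF]; omega
  have hab : SS Mp k L i * Np ≤ SS Mp k L (i+1) * Np :=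
    Nat.mul_le_mul_right _ (SS_mono (by omega))
  have hterm : ∀ r, oo Mp Np k L i r = F (r+1) - F r := by
    intro r
    have hr : (r+1) * Mp = r * Mp + Mp := by ring
    simp only [hF, oo]; omega
  calc ∑ r ∈ range Np, oo Mp Np k L i r = ∑ r ∈ range Np, (F (r+1) - F r) := by
        exact Finset.sum_congr rfl fun r _ => hterm r
  _ = F Np - F 0 := Finset.sum_range_tsub hmono Np
  _ = ss Mp k L i * Np := by
      have h1 : SS Mp k L (i+1) * Np ≤ Np * Mp := by
        have : SS Mp k L (i+1) ≤ Mp := le_trans (SS_mono (show i+1 ≤ k+1 by omega)) (le_of_eq (SS_last hk hNp hMp hL))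
        calc SS Mp k L (i+1) * Np ≤ Mp * Np := Nat.mul_le_mul_right _ this
        _ = Np * Mp := by ring
      have h2 : ss Mp k L i * Np = SS Mp k L (i+1) * Np - SS Mp k L i * Np := by
        rw [ss, Nat.sub_mul]
      simp only [hF]
      omega

include hk hNp hMp hL in
lemma sum_oo_row {r : ℕ} (hr : r < Np) :
    ∑ i ∈ range (k+1), oo Mp Np k L i r = Mp := by
  set G : ℕ → ℕ := fun i => min ((r+1) * Mp) (max (r * Mp) (SS Mp k L i * Np)) with hG
  have hmono : Monotone G := by
    intro x y hxy
    have : SS Mp k L x * Np ≤ SS Mp k L y * Np := Nat.mul_le_mul_right _ (SS_mono hxy)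
    simp only [hG]; omega
  have hterm : ∀ i, oo Mp Np k L i r = G (i+1) - G i := by
    intro i
    have hxy : SS Mp k L i * Np ≤ SS Mp k L (i+1) * Np :=
      Nat.mul_le_mul_right _ (SS_mono (by omega))
    have hab : r * Mp + Mp = (r+1) * Mp := by ring
    simp only [hG, oo]; omega
  calc ∑ i ∈ range (k+1), oo Mp Np k L i r = ∑ i ∈ range (k+1), (G (i+1) - G i) :=
        Finset.sum_congr rfl fun i _ => hterm i
  _ = G (k+1) - G 0 := Finset.sum_range_tsub hmono _
  _ = Mp := by
      have h1 : (r+1) * Mp ≤ SS Mp k L (k+1) * Np := by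
        rw [SS_last hk hNp hMp hL]
        calc (r+1) * Mp ≤ Np * Mp := Nat.mul_le_mul_right _ (by omega)
        _ = Mp * Np := by ring
      have h2 : r * Mp + Mp = (r+1) * Mp := by ring
      have h3 : SS Mp k L 0 * Np = 0 := by simp [SS, tt]
      simp only [hG]
      omega

end P2

/-- generic: sum over `range (g*n)` splits into copies -/
lemma sum_range_mul {β : Type*} [AddCommMonoid β] (f : ℕ → β) (g n : ℕ) :
    ∑ x ∈ range (g * n), f x = ∑ t ∈ range g, ∑ r ∈ range n, f (t * n + r) := by
  induction g with
  | zero => simp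
  | succ g ih =>
    have : (g + 1) * n = g * n + n := by ring
    rw [this, Finset.sum_range_add, ih, Finset.sum_range_succ]



noncomputable def zeta (s : ℕ) : ℂ := Complex.exp ((2 * Real.pi / s : ℝ) * Complex.I)

lemma zeta_abs (s : ℕ) : ‖zeta s‖ = 1 := Complex.norm_exp_ofReal_mul_I _

lemma zeta_ne_zero (s : ℕ) : zeta s ≠ 0 := Complex.exp_ne_zero _

lemma conj_zeta (s : ℕ) : (starRingEnd ℂ) (zeta s) = (zeta s)⁻¹ := by
  rw [zeta, ← Complex.exp_conj, ← Complex.exp_neg]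
  congr 1
  rw [map_mul, Complex.conj_ofReal, Complex.conj_I]
  ring

lemma zeta_pow_self {s : ℕ} (hs : 0 < s) : zeta s ^ s = 1 := by
  rw [zeta, ← Complex.exp_nat_mul]
  have hs' : (s : ℂ) ≠ 0 := Nat.cast_ne_zero.2 hs.ne'
  have : (s : ℂ) * ((2 * Real.pi / s : ℝ) * Complex.I) = 2 * Real.pi * Complex.I := by
    push_cast
    field_simp
  rw [this, Complex.exp_two_pi_mul_I]

lemma zeta_zpow_ne_one {s : ℕ} (hs : 0 < s) {d : ℤ} (hd : ¬ (s:ℤ) ∣ d) :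
    zeta s ^ d ≠ 1 := by
  intro h
  rw [zeta, ← Complex.exp_int_mul, Complex.exp_eq_one_iff] at h
  obtain ⟨m, hm⟩ := h
  have hs' : (s : ℂ) ≠ 0 := Nat.cast_ne_zero.2 hs.ne'
  have hπ : (Real.pi : ℂ) ≠ 0 := Complex.ofReal_ne_zero.2 Real.pi_ne_zero
  have hI : Complex.I ≠ 0 := Complex.I_ne_zero
  have hcast : ((2 * Real.pi / s : ℝ) : ℂ) = 2 * (Real.pi : ℂ) / s := by
    push_cast; ring
  rw [hcast] at hm
  field_simp at hm
  have hne : (2 : ℂ) * Real.pi * Complex.I ≠ 0 := by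
    simp [hπ, hI]
  have hd2 : (d : ℂ) = (m : ℂ) * s := by
    apply mul_right_cancel₀ hne
    linear_combination (2 * (Real.pi : ℂ) * Complex.I) * hm
  have hd3 : d = m * s := by exact_mod_cast hd2
  exact hd ⟨m, by rw [hd3]; ring⟩

lemma geom_zeta_zero {s : ℕ} (hs : 0 < s) {d : ℤ} (hd : ¬ (s:ℤ) ∣ d) :
    ∑ p ∈ range s, (zeta s ^ d) ^ p = 0 := by
  rw [geom_sum_eq (zeta_zpow_ne_one hs hd) s]
  have : (zeta s ^ d) ^ s = 1 := by
    rw [← zpow_natCast (zeta s ^ d) s, ← zpow_mul, mul_comm, zpow_mul,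
      zpow_natCast, zeta_pow_self hs, one_zpow]
  rw [this, sub_self, zero_div]


/-- synthesis matrix entries for one coprime copy -/
noncomputable def BB (Mp Np k L r c : ℕ) : ℂ :=
  (Real.sqrt ((oo Mp Np k L (blk Mp k L c) r : ℝ) /
      ((Np : ℝ) * (ss Mp k L (blk Mp k L c) : ℝ))) : ℂ) *
    zeta (ss Mp k L (blk Mp k L c)) ^ (r * (c - SS Mp k L (blk Mp k L c)))

/-- the full synthesis matrix entries -/
noncomputable def AA (Mp Np k L n m : ℕ) : ℂ :=
  if n / Np = m / Mp then BB Mp Np k L (n % Np) (m % Mp) else 0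

lemma normSq_BB (Mp Np k L r c : ℕ) :
    Complex.normSq (BB Mp Np k L r c) =
      (oo Mp Np k L (blk Mp k L c) r : ℝ) /
        ((Np : ℝ) * (ss Mp k L (blk Mp k L c) : ℝ)) := by
  have hx : (0:ℝ) ≤ (oo Mp Np k L (blk Mp k L c) r : ℝ) /
      ((Np : ℝ) * (ss Mp k L (blk Mp k L c) : ℝ)) := by positivity
  rw [BB, map_mul, Complex.normSq_ofReal, map_pow, Complex.normSq_eq_norm_sq, zeta_abs]
  rw [Real.mul_self_sqrt hx]
  simp

lemma BB_eq_zero {Mp Np k L r c : ℕ} (h : oo Mp Np k L (blk Mp k L c) r = 0) :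
    BB Mp Np k L r c = 0 := by
  rw [BB, h]
  simp

lemma BB_apply {Mp k L i p : ℕ} (Np : ℕ) (hi : i ≤ k) (hp : p < ss Mp k L i) (r : ℕ) :
    BB Mp Np k L r (SS Mp k L i + p) =
      (Real.sqrt ((oo Mp Np k L i r : ℝ) / ((Np : ℝ) * (ss Mp k L i : ℝ))) : ℂ) *
        zeta (ss Mp k L i) ^ (r * p) := by
  rw [BB, blk_spec hi hp, Nat.add_sub_cancel_left]

lemma zeta_combine (s a b p : ℕ) :
    zeta s ^ (a * p) * (zeta s)⁻¹ ^ (b * p) = (zeta s ^ ((a:ℤ) - (b:ℤ))) ^ p := by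
  rw [inv_pow, ← zpow_natCast (zeta s) (a*p), ← zpow_natCast (zeta s) (b*p), ← zpow_neg,
    ← zpow_add₀ (zeta_ne_zero s), ← zpow_natCast (zeta s ^ ((a:ℤ) - (b:ℤ))) p, ← zpow_mul]
  congr 1
  push_cast
  ring

lemma prod_BB {Mp k L i p : ℕ} (Np : ℕ) (hi : i ≤ k) (hp : p < ss Mp k L i) (r r' : ℕ) :
    BB Mp Np k L r (SS Mp k L i + p) * (starRingEnd ℂ) (BB Mp Np k L r' (SS Mp k L i + p)) =
      ((Real.sqrt ((oo Mp Np k L i r : ℝ) / ((Np : ℝ) * (ss Mp k L i : ℝ))) *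
        Real.sqrt ((oo Mp Np k L i r' : ℝ) / ((Np : ℝ) * (ss Mp k L i : ℝ))) : ℝ) : ℂ) *
        (zeta (ss Mp k L i) ^ ((r:ℤ) - (r':ℤ))) ^ p := by
  rw [BB_apply Np hi hp r, BB_apply Np hi hp r', map_mul, Complex.conj_ofReal, map_pow,
    conj_zeta, ← zeta_combine]
  push_cast
  ring

lemma sum_blocks {β : Type*} [AddCommMonoid β] (Mp k L : ℕ) (f : ℕ → β) (j : ℕ) :
    ∑ c ∈ range (SS Mp k L j), f c
      = ∑ i ∈ range j, ∑ p ∈ range (ss Mp k L i), f (SS Mp k L i + p) := by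
  induction j with
  | zero => rw [SS_zero]; simp
  | succ j ih =>
    rw [SS_add (Mp := Mp) (k := k) (L := L) j, Finset.sum_range_add, ih,
      Finset.sum_range_succ]

section Main
variable {Mp Np k L : ℕ} (hk : 0 < k) (hNp : 0 < Np) (hMp : Mp = Np + k)
  (hL : L = Mp / (k + 1))

include hk hNp hMp hL

lemma ss_pos (i : ℕ) : 0 < ss Mp k L i :=
  lt_of_lt_of_le (hL1 hk hNp hMp hL) (ss_bounds hk hNp hMp hL i).1

lemma main_col {c : ℕ} (hc : c < Mp) :
    ∑ r ∈ range Np, Complex.normSq (BB Mp Np k L r c) = 1 := by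
  have hik : blk Mp k L c ≤ k := blk_le c
  have hss : 0 < ss Mp k L (blk Mp k L c) := ss_pos hk hNp hMp hL _
  have hsum := sum_oo_col hk hNp hMp hL hik
  have hNp' : ((Np:ℝ)) ≠ 0 := Nat.cast_ne_zero.2 hNp.ne'
  have hss' : ((ss Mp k L (blk Mp k L c) : ℝ)) ≠ 0 := Nat.cast_ne_zero.2 hss.ne'
  calc ∑ r ∈ range Np, Complex.normSq (BB Mp Np k L r c)
      = ∑ r ∈ range Np, ((oo Mp Np k L (blk Mp k L c) r : ℝ) /
          ((Np : ℝ) * (ss Mp k L (blk Mp k L c) : ℝ))) :=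
        Finset.sum_congr rfl fun r _ => normSq_BB Mp Np k L r c
  _ = (∑ r ∈ range Np, (oo Mp Np k L (blk Mp k L c) r : ℝ)) /
        ((Np : ℝ) * (ss Mp k L (blk Mp k L c) : ℝ)) := by rw [Finset.sum_div]
  _ = 1 := by
      rw [← Nat.cast_sum, hsum]
      push_cast
      field_simp

lemma offdiag_block_zero {i r r' : ℕ} (hi : i ≤ k) (hr : r < Np) (hr' : r' < Np)
    (hne : r ≠ r') :
    ∑ p ∈ range (ss Mp k L i),
      BB Mp Np k L r (SS Mp k L i + p) * (starRingEnd ℂ) (BB Mp Np k L r' (SS Mp k L i + p))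
      = 0 := by
  have heq : ∀ p ∈ range (ss Mp k L i),
      BB Mp Np k L r (SS Mp k L i + p) * (starRingEnd ℂ) (BB Mp Np k L r' (SS Mp k L i + p)) =
      ((Real.sqrt ((oo Mp Np k L i r : ℝ) / ((Np : ℝ) * (ss Mp k L i : ℝ))) *
        Real.sqrt ((oo Mp Np k L i r' : ℝ) / ((Np : ℝ) * (ss Mp k L i : ℝ))) : ℝ) : ℂ) *
        (zeta (ss Mp k L i) ^ ((r:ℤ) - (r':ℤ))) ^ p := fun p hp =>
    prod_BB Np hi (Finset.mem_range.1 hp) r r'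
  rw [Finset.sum_congr rfl heq, ← Finset.mul_sum]
  rcases Nat.eq_zero_or_pos (oo Mp Np k L i r) with h0 | hpos
  · rw [h0]
    norm_num
  rcases Nat.eq_zero_or_pos (oo Mp Np k L i r') with h0' | hpos'
  · rw [h0']
    norm_num
  -- both rows meet block i : they are within distance < ss i
  have hb1 := rowRange hk hNp hMp hL hi hpos
  have hb2 := rowRange hk hNp hMp hL hi hpos'
  have hSa := SS_add (Mp := Mp) (k := k) (L := L) i
  have hdvd : ¬ ((ss Mp k L i : ℤ) ∣ ((r:ℤ) - (r':ℤ))) := by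
    intro hdv
    have hne' : ((r:ℤ) - (r':ℤ)) ≠ 0 := by
      intro h
      apply hne
      omega
    have hle := Int.le_of_dvd (abs_pos.2 hne') ((dvd_abs _ _).2 hdv)
    have habs : |((r:ℤ) - (r':ℤ))| < (ss Mp k L i : ℤ) := by
      rw [abs_lt]
      constructor <;> [skip; skip] <;> omega
    omega
  rw [geom_zeta_zero (ss_pos hk hNp hMp hL i) hdvd, mul_zero]

lemma main_row {r r' : ℕ} (hr : r < Np) (hr' : r' < Np) :
    ∑ c ∈ range Mp, BB Mp Np k L r c * (starRingEnd ℂ) (BB Mp Np k L r' c)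
      = if r = r' then ((Mp : ℂ) / (Np : ℂ)) else 0 := by
  have hrange : range Mp = range (SS Mp k L (k+1)) := by rw [SS_last hk hNp hMp hL]
  rw [hrange, sum_blocks]
  by_cases hrr : r = r'
  · subst hrr
    simp only [if_pos rfl]
    have hNp' : ((Np:ℝ)) ≠ 0 := Nat.cast_ne_zero.2 hNp.ne'
    have hblock : ∀ i ∈ range (k+1),
        ∑ p ∈ range (ss Mp k L i),
          BB Mp Np k L r (SS Mp k L i + p) * (starRingEnd ℂ) (BB Mp Np k L r (SS Mp k L i + p))
        = ((oo Mp Np k L i r : ℝ) / (Np : ℝ) : ℝ) := by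
      intro i hik
      have hik' : i ≤ k := by simpa using Nat.lt_succ_iff.1 (Finset.mem_range.1 hik)
      have hss : 0 < ss Mp k L i := ss_pos hk hNp hMp hL i
      have hss' : ((ss Mp k L i : ℝ)) ≠ 0 := Nat.cast_ne_zero.2 hss.ne'
      have hterm : ∀ p ∈ range (ss Mp k L i),
          BB Mp Np k L r (SS Mp k L i + p) * (starRingEnd ℂ) (BB Mp Np k L r (SS Mp k L i + p))
          = ((oo Mp Np k L i r : ℝ) / ((Np : ℝ) * (ss Mp k L i : ℝ)) : ℝ) := by
        intro p hp
        have hp' := Finset.mem_range.1 hp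
        have hblk := blk_spec (Mp := Mp) (k := k) (L := L) hik' hp'
        rw [Complex.mul_conj, normSq_BB, hblk]
      have hssC : ((ss Mp k L i : ℕ) : ℂ) ≠ 0 := Nat.cast_ne_zero.2 hss.ne'
      have hNpC : ((Np : ℕ) : ℂ) ≠ 0 := Nat.cast_ne_zero.2 hNp.ne'
      rw [Finset.sum_congr rfl hterm, Finset.sum_const, Finset.card_range, nsmul_eq_mul]
      push_cast
      field_simp
    rw [Finset.sum_congr rfl hblock]
    have hs := sum_oo_row hk hNp hMp hL hr
    push_cast
    rw [← Finset.sum_div]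
    congr 1
    exact_mod_cast congrArg (fun x : ℕ => (x : ℂ)) hs
  · simp only [if_neg hrr]
    exact Finset.sum_eq_zero fun i hik =>
      offdiag_block_zero hk hNp hMp hL
        (Nat.lt_succ_iff.1 (Finset.mem_range.1 hik)) hr hr' hrr

end Main

lemma SS_eq_sum (Mp k L : ℕ) (j : ℕ) :
    SS Mp k L j = ∑ i ∈ range j, ss Mp k L i := by
  induction j with
  | zero => rw [SS_zero]; simp
  | succ j ih => rw [SS_add (Mp := Mp) (k := k) (L := L) j, Finset.sum_range_succ, ih]

section Count
variable {Mp Np k L : ℕ} (hk : 0 < k) (hNp : 0 < Np) (hMp : Mp = Np + k)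
  (hL : L = Mp / (k + 1))

include hk hNp hMp hL

lemma sum_ss_sq :
    ∑ i ∈ range (k+1), ss Mp k L i * ss Mp k L i
      = (k+1) * (L*L) + (2*L+1) * (Mp - (k+1)*L) := by
  have hsum : ∑ i ∈ range (k+1), ss Mp k L i = Mp := by
    rw [← SS_eq_sum, SS_last hk hNp hMp hL]
  have hid : ∀ i ∈ range (k+1),
      ss Mp k L i * ss Mp k L i + (2*L+1)*L = L*L + (2*L+1) * ss Mp k L i := by
    intro i _
    have hb := ss_bounds hk hNp hMp hL i
    rcases (by omega : ss Mp k L i = L ∨ ss Mp k L i = L + 1) with h | h <;> rw [h] <;> ring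
  have hS := Finset.sum_congr rfl hid
  rw [Finset.sum_add_distrib, Finset.sum_add_distrib, Finset.sum_const, Finset.sum_const,
    Finset.card_range, ← Finset.mul_sum, hsum, smul_eq_mul, smul_eq_mul] at hS
  have h1 := hLk hk hL
  have h2 := hMK hk hL
  obtain ⟨cap, hcap⟩ : ∃ cap, Mp = (k+1) * L + cap := ⟨Mp - (k+1)*L, by omega⟩
  have e1 : Mp - (k+1)*L = cap := by omega
  have hr1 : (2*L+1)*Mp = (2*L+1)*((k+1)*L) + (2*L+1)*cap := by rw [hcap]; ring
  have hr2 : (k+1)*((2*L+1)*L) = (2*L+1)*((k+1)*L) := by ring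
  rw [e1]
  omega

lemma sum_blk_card :
    ∑ c ∈ range Mp, ss Mp k L (blk Mp k L c)
      = (k+1) * (L*L) + (2*L+1) * (Mp - (k+1)*L) := by
  have hrange : range Mp = range (SS Mp k L (k+1)) := by rw [SS_last hk hNp hMp hL]
  rw [hrange, sum_blocks]
  rw [← sum_ss_sq hk hNp hMp hL]
  refine Finset.sum_congr rfl fun i hi => ?_
  have hik : i ≤ k := Nat.lt_succ_iff.1 (Finset.mem_range.1 hi)
  have : ∀ p ∈ range (ss Mp k L i), ss Mp k L (blk Mp k L (SS Mp k L i + p)) = ss Mp k L i := by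
    intro p hp
    rw [blk_spec hik (Finset.mem_range.1 hp)]
  rw [Finset.sum_congr rfl this, Finset.sum_const, Finset.card_range, smul_eq_mul]

end Count

lemma divmod_helper {Np : ℕ} (hNp : 0 < Np) (t r : ℕ) (hr : r < Np) :
    (t * Np + r) / Np = t ∧ (t * Np + r) % Np = r := by
  constructor
  · rw [add_comm, Nat.add_mul_div_right _ _ hNp, Nat.div_eq_of_lt hr, zero_add]
  · rw [add_comm, Nat.add_mul_mod_self_right, Nat.mod_eq_of_lt hr]

section Assemble
variable {Mp Np k L : ℕ} (hk : 0 < k) (hNp : 0 < Np) (hMp : Mp = Np + k)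
  (hL : L = Mp / (k + 1))

include hk hNp hMp hL

lemma colsum (g m : ℕ) (hg : 0 < g) (hm : m < g * Mp) :
    ∑ x ∈ range (g * Np), Complex.normSq (AA Mp Np k L x m) = 1 := by
  have hMp0 : 0 < Mp := by omega
  have hu : m / Mp < g := (Nat.div_lt_iff_lt_mul hMp0).2 hm
  have hc : m % Mp < Mp := Nat.mod_lt _ hMp0
  rw [sum_range_mul]
  have hinner : ∀ t ∈ range g,
      ∑ r ∈ range Np, Complex.normSq (AA Mp Np k L (t * Np + r) m)
        = if t = m / Mp then 1 else 0 := by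
    intro t _
    have hre : ∀ r ∈ range Np, Complex.normSq (AA Mp Np k L (t * Np + r) m)
        = if t = m / Mp then Complex.normSq (BB Mp Np k L r (m % Mp)) else 0 := by
      intro r hr
      have hdm := divmod_helper hNp t r (Finset.mem_range.1 hr)
      simp only [AA, hdm.1, hdm.2]
      by_cases h : t = m / Mp
      · rw [if_pos h, if_pos h]
      · rw [if_neg h, if_neg h, map_zero]
    rw [Finset.sum_congr rfl hre]
    by_cases h : t = m / Mp
    · simp only [if_pos h]
      exact main_col hk hNp hMp hL hc
    · simp only [if_neg h, Finset.sum_const_zero]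
  rw [Finset.sum_congr rfl hinner, Finset.sum_ite_eq' (range g) (m / Mp) (fun _ => (1:ℝ)),
    if_pos (Finset.mem_range.2 hu)]

lemma rowsum (g n n' : ℕ) (hg : 0 < g) (hn : n < g * Np) (hn' : n' < g * Np) :
    ∑ x ∈ range (g * Mp), AA Mp Np k L n x * (starRingEnd ℂ) (AA Mp Np k L n' x)
      = if n = n' then ((Mp : ℂ) / (Np : ℂ)) else 0 := by
  have hMp0 : 0 < Mp := by omega
  have hr : n % Np < Np := Nat.mod_lt _ hNp
  have hr' : n' % Np < Np := Nat.mod_lt _ hNp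
  have ht : n / Np < g := (Nat.div_lt_iff_lt_mul hNp).2 hn
  rw [sum_range_mul]
  have hterm : ∀ u ∈ range g, ∀ c ∈ range Mp,
      AA Mp Np k L n (u * Mp + c) * (starRingEnd ℂ) (AA Mp Np k L n' (u * Mp + c))
      = (if n / Np = u then BB Mp Np k L (n % Np) c else 0) *
        (starRingEnd ℂ) (if n' / Np = u then BB Mp Np k L (n' % Np) c else 0) := by
    intro u _ c hc
    have hdm := divmod_helper hMp0 u c (Finset.mem_range.1 hc)
    simp only [AA, hdm.1, hdm.2]
  rw [Finset.sum_congr rfl (fun u hu => Finset.sum_congr rfl (hterm u hu))]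
  by_cases htt : n / Np = n' / Np
  · have hinner : ∀ u ∈ range g,
        (∑ c ∈ range Mp, (if n / Np = u then BB Mp Np k L (n % Np) c else 0) *
          (starRingEnd ℂ) (if n' / Np = u then BB Mp Np k L (n' % Np) c else 0))
        = if u = n / Np then (if n % Np = n' % Np then ((Mp:ℂ)/(Np:ℂ)) else 0) else 0 := by
      intro u _
      by_cases hu : u = n / Np
      · rw [if_pos hu]
        have h1 : n / Np = u := hu.symm
        have h2 : n' / Np = u := by rw [← htt]; exact hu.symm
        simp only [if_pos h1, if_pos h2]
        exact main_row hk hNp hMp hL hr hr'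
      · rw [if_neg hu]
        refine Finset.sum_eq_zero fun c _ => ?_
        rw [if_neg (fun h => hu h.symm), zero_mul]
    rw [Finset.sum_congr rfl hinner,
      Finset.sum_ite_eq' (range g) (n / Np) (fun _ => if n % Np = n' % Np then ((Mp:ℂ)/(Np:ℂ)) else 0),
      if_pos (Finset.mem_range.2 ht)]
    have hiff : n = n' ↔ n % Np = n' % Np := by
      constructor
      · intro h; rw [h]
      · intro h
        have d1 := Nat.div_add_mod n Np
        have d2 := Nat.div_add_mod n' Np
        rw [← htt] at d2
        omega
    by_cases hrr : n % Np = n' % Np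
    · rw [if_pos hrr, if_pos (hiff.2 hrr)]
    · rw [if_neg hrr, if_neg (fun h => hrr (hiff.1 h))]
  · have hnn : n ≠ n' := fun h => htt (by rw [h])
    rw [if_neg hnn]
    refine Finset.sum_eq_zero fun u _ => Finset.sum_eq_zero fun c _ => ?_
    by_cases h1 : n / Np = u
    · have h2 : ¬ (n' / Np = u) := fun h => htt (h1.trans h.symm)
      rw [if_neg h2, map_zero, mul_zero]
    · rw [if_neg h1, zero_mul]

lemma count_bound {g N M : ℕ} (hg : 0 < g) (hNg : N = g * Np) (hMg : M = g * Mp) :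
    {p : Fin N × Fin M | AA Mp Np k L p.1.val p.2.val ≠ 0}.ncard ≤
      g * ((k+1) * (L*L) + (2*L+1) * (Mp - (k+1)*L)) := by
  classical
  have hMp0 : 0 < Mp := by omega
  set ib : ℕ → ℕ := fun c => blk Mp k L (c % Mp) with hib
  set T : Finset (Fin N × Fin M) := Finset.univ.filter (fun p =>
    p.1.val / Np = p.2.val / Mp ∧
    SS Mp k L (ib p.2.val) ≤ p.1.val % Np + ib p.2.val ∧
    p.1.val % Np + ib p.2.val + 1 ≤ SS Mp k L (ib p.2.val + 1)) with hT
  have hsub : {p : Fin N × Fin M | AA Mp Np k L p.1.val p.2.val ≠ 0} ⊆ ↑T := by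
    intro p hp
    simp only [Set.mem_setOf_eq, AA] at hp
    by_cases hif : p.1.val / Np = p.2.val / Mp
    · rw [if_pos hif] at hp
      have hoo : 0 < oo Mp Np k L (ib p.2.val) (p.1.val % Np) :=
        Nat.pos_of_ne_zero (fun h => hp (BB_eq_zero h))
      have hrange := rowRange hk hNp hMp hL (blk_le (p.2.val % Mp)) hoo
      simp only [hT, Finset.coe_filter, Set.mem_setOf_eq]
      exact ⟨Finset.mem_univ p, hif, hrange.1, hrange.2⟩
    · rw [if_neg hif] at hp
      exact absurd rfl hp
  have h1 : {p : Fin N × Fin M | AA Mp Np k L p.1.val p.2.val ≠ 0}.ncard ≤ T.card := by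
    rw [← Set.ncard_coe_finset]
    exact Set.ncard_le_ncard hsub (T : Set (Fin N × Fin M)).toFinite
  have h2 : T.card = ∑ m ∈ (Finset.univ : Finset (Fin M)),
      (T.filter (fun p => p.2 = m)).card :=
    Finset.card_eq_sum_card_fiberwise (fun p _ => Finset.mem_univ p.2)
  have h3 : ∀ m : Fin M, (T.filter (fun p => p.2 = m)).card ≤ ss Mp k L (ib m.val) := by
    intro m
    have := Finset.card_range (ss Mp k L (ib m.val))
    rw [← Finset.card_range (ss Mp k L (ib m.val))]
    apply Finset.card_le_card_of_injOn
      (fun p => p.1.val % Np + ib m.val - SS Mp k L (ib m.val))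
    · intro p hp
      have hp : p ∈ T.filter (fun p => p.2 = m) := hp
      simp only [hT, Finset.mem_filter, Finset.mem_univ, true_and] at hp
      obtain ⟨⟨hdiv, hlo, hhi⟩, hpm⟩ := hp
      have hSa := SS_add (Mp := Mp) (k := k) (L := L) (ib m.val)
      rw [hpm] at hlo hhi
      exact Finset.mem_range.2 (by dsimp only; omega)
    · intro p1 hp1 p2 hp2 heq
      simp only [hT, Finset.mem_coe, Finset.mem_filter, Finset.mem_univ, true_and] at hp1 hp2
      obtain ⟨⟨hdiv1, hlo1, hhi1⟩, hpm1⟩ := hp1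
      obtain ⟨⟨hdiv2, hlo2, hhi2⟩, hpm2⟩ := hp2
      rw [hpm1] at hlo1 hhi1 hdiv1
      rw [hpm2] at hlo2 hhi2 hdiv2
      simp only at heq
      have hmod : p1.1.val % Np = p2.1.val % Np := by omega
      have d1 := Nat.div_add_mod p1.1.val Np
      have d2 := Nat.div_add_mod p2.1.val Np
      have hdd : p1.1.val / Np = p2.1.val / Np := by rw [hdiv1, hdiv2]
      rw [← hdd] at d2
      have hvv : p1.1.val = p2.1.val := by omega
      have : p1.1 = p2.1 := Fin.ext hvv
      exact Prod.ext this (hpm1.trans hpm2.symm)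
  have h4 : ∑ m ∈ (Finset.univ : Finset (Fin M)), (T.filter (fun p => p.2 = m)).card
      ≤ ∑ m ∈ (Finset.univ : Finset (Fin M)), ss Mp k L (ib m.val) :=
    Finset.sum_le_sum fun m _ => h3 m
  have h5 : ∑ m ∈ (Finset.univ : Finset (Fin M)), ss Mp k L (ib m.val)
      = g * ((k+1) * (L*L) + (2*L+1) * (Mp - (k+1)*L)) := by
    rw [Fin.sum_univ_eq_sum_range (fun x => ss Mp k L (ib x)) M]
    rw [hMg, sum_range_mul]
    have : ∀ u ∈ range g, ∑ c ∈ range Mp, ss Mp k L (ib (u * Mp + c))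
        = (k+1) * (L*L) + (2*L+1) * (Mp - (k+1)*L) := by
      intro u _
      have hre : ∀ c ∈ range Mp, ss Mp k L (ib (u * Mp + c)) = ss Mp k L (blk Mp k L c) := by
        intro c hc
        have hdm := divmod_helper hMp0 u c (Finset.mem_range.1 hc)
        rw [hib]
        simp only [hdm.2]
      rw [Finset.sum_congr rfl hre]
      exact sum_blk_card hk hNp hMp hL
    rw [Finset.sum_congr rfl this, Finset.sum_const, Finset.card_range, smul_eq_mul]
  omega

end Assemble

end SLRTF



/-- Let `N < M < 2N`, `g = gcd(M,N)`, `M' = M/g`, `N' = N/g`, `K' = M' − N' + 1`,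
`L' = ⌊M'/K'⌋`, `r' = K'(L'+1) − M'`.  Then there is an `M`-element unit norm
tight frame for `ℂ^N` whose `N × M` synthesis matrix `A` (unit-norm columns,
`A Aᴴ = (M/N) I`) has at most `g(r'L'² + (K'−r')(L'+1)²)` nonzero entries. -/
theorem sparse_low_redundancy_tight_frame_gcd (N M : ℕ) (hN : 0 < N)
    (h1 : N < M) (h2 : M < 2 * N)
    (g M' N' K' L' r' : ℕ) (hg : g = Nat.gcd M N) (hM' : M' = M / g) (hN' : N' = N / g)
    (hK' : K' = M' - N' + 1) (hL' : L' = M' / K') (hr' : r' = K' * (L' + 1) - M') :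
    ∃ A : Matrix (Fin N) (Fin M) ℂ,
      (∀ m : Fin M, ∑ n : Fin N, ‖A n m‖ ^ 2 = 1) ∧
      A * A.conjTranspose = ((M : ℂ) / (N : ℂ)) • 1 ∧
      {p : Fin N × Fin M | A p.1 p.2 ≠ 0}.ncard ≤
        g * (r' * L' ^ 2 + (K' - r') * (L' + 1) ^ 2) := by

  have hg0 : 0 < g := by rw [hg]; exact Nat.gcd_pos_of_pos_right M hN
  have hdM : g ∣ M := hg ▸ Nat.gcd_dvd_left M N
  have hdN : g ∣ N := hg ▸ Nat.gcd_dvd_right M N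
  have hMg : M = g * M' := by rw [hM']; exact (Nat.mul_div_cancel' hdM).symm
  have hNg : N = g * N' := by rw [hN']; exact (Nat.mul_div_cancel' hdN).symm
  have hNp : 0 < N' := Nat.pos_of_ne_zero fun h => by rw [h, mul_zero] at hNg; omega
  have hMM : N' < M' := by
    have hlt : g * N' < g * M' := by rw [← hNg, ← hMg]; omega
    exact lt_of_mul_lt_mul_left hlt (Nat.zero_le g)
  set k := M' - N' with hkdef
  have hk : 0 < k := by omega
  have hMp : M' = N' + k := by omega
  have hKk : K' = k + 1 := by omega
  have hLd : L' = M' / (k + 1) := by rw [← hKk]; exact hL'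
  refine ⟨Matrix.of (fun (n : Fin N) (m : Fin M) => SLRTF.AA M' N' k L' n.val m.val),
    ?_, ?_, ?_⟩
  · intro m
    have e1 : ∀ n : Fin N,
        ‖(Matrix.of (fun (n : Fin N) (m : Fin M) => SLRTF.AA M' N' k L' n.val m.val)) n m‖^2
        = Complex.normSq (SLRTF.AA M' N' k L' n.val m.val) := fun n => by
      rw [Matrix.of_apply, Complex.sq_norm]
    rw [Finset.sum_congr rfl (fun n _ => e1 n)]
    rw [Fin.sum_univ_eq_sum_range (fun x => Complex.normSq (SLRTF.AA M' N' k L' x m.val)) N]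
    rw [hNg]
    exact SLRTF.colsum hk hNp hMp hLd g m.val hg0 (by rw [← hMg]; exact m.isLt)
  · ext n n'
    rw [Matrix.mul_apply]
    simp only [Matrix.conjTranspose_apply, Matrix.of_apply, Matrix.smul_apply,
      Matrix.one_apply, smul_eq_mul, Complex.star_def]
    rw [Fin.sum_univ_eq_sum_range (fun x => SLRTF.AA M' N' k L' n.val x *
      (starRingEnd ℂ) (SLRTF.AA M' N' k L' n'.val x)) M]
    conv_lhs => rw [hMg]
    rw [SLRTF.rowsum hk hNp hMp hLd g n.val n'.val hg0
      (by rw [← hNg]; exact n.isLt) (by rw [← hNg]; exact n'.isLt)]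
    have hgC : (g : ℂ) ≠ 0 := Nat.cast_ne_zero.2 hg0.ne'
    have hMN : (M : ℂ) / (N : ℂ) = (M' : ℂ) / (N' : ℂ) := by
      rw [hMg, hNg]; push_cast; rw [mul_div_mul_left _ _ hgC]
    by_cases h : n = n'
    · rw [if_pos (show n.val = n'.val by rw [h]), if_pos h, hMN, mul_one]
    · rw [if_neg (fun hh => h (Fin.ext hh)), if_neg h, mul_zero]
  · have hbound := SLRTF.count_bound hk hNp hMp hLd hg0 hNg hMg
    have hc1 := SLRTF.hLk hk hLd
    have hc2 := SLRTF.hMK hk hLd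
    obtain ⟨cap, hcap⟩ : ∃ cap, M' = (k+1)*L' + cap := ⟨M' - (k+1)*L', by omega⟩
    have hr3 : (k+1)*(L'+1) = (k+1)*L' + (k+1) := by ring
    have hr4 : r' + cap = k + 1 := by rw [hr', hKk]; omega
    have hKr : K' - r' = cap := by omega
    have e1 : M' - (k+1)*L' = cap := by omega
    have hkey : r' * L'^2 + cap * (L'+1)^2 = (k+1)*(L'*L') + (2*L'+1)*cap := by
      calc r' * L'^2 + cap * (L'+1)^2 = (r' + cap) * (L'*L') + (2*L'+1)*cap := by ring
      _ = (k+1)*(L'*L') + (2*L'+1)*cap := by rw [hr4]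
    rw [hKr, hkey, ← e1]
    exact hbound
end

section
/- Let L ≥ 2 be an integer and let λ_1, …, λ_L be positive real numbers satisfying Σ_{i=1}^{L−1} λ_i < L ≤ Σ_{i=1}^{L} λ_i. Then there exists a matrix B ∈ ℂ^{L×L} such that every column of B has norm 1, the rows of B are pairwise orthogonal, row i has squared norm λ_i for i = 1, …, L−1, and row L has squared norm c_L := L − Σ_{i=1}^{L−1} λ_i, which satisfies 0 < c_L ≤ λ_L. (Such a matrix is a general D_L block for λ_1, …, λ_L, obtained by scaling the rows of the L×L DFT matrix.) -/
open Complex Finset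

lemma dft_orth (L : ℕ) (hL : 0 < L) (i k : Fin L) :
    ∑ j : Fin L, Complex.exp (2 * Real.pi * Complex.I * (i : ℕ) * (j : ℕ) / L) *
      (starRingEnd ℂ) (Complex.exp (2 * Real.pi * Complex.I * (k : ℕ) * (j : ℕ) / L)) =
    if i = k then (L : ℂ) else 0 := by
  have hLC : (L : ℂ) ≠ 0 := Nat.cast_ne_zero.mpr hL.ne'
  set z : ℂ := Complex.exp (2 * Real.pi * Complex.I * (((i : ℕ) : ℂ) - ((k : ℕ) : ℂ)) / L) with hz
  have hterm : ∀ j : Fin L,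
      Complex.exp (2 * Real.pi * Complex.I * (i : ℕ) * (j : ℕ) / L) *
        (starRingEnd ℂ) (Complex.exp (2 * Real.pi * Complex.I * (k : ℕ) * (j : ℕ) / L)) =
      z ^ (j : ℕ) := by
    intro j
    rw [← Complex.exp_conj, ← Complex.exp_add, hz, ← Complex.exp_nat_mul]
    congr 1
    have hc : (starRingEnd ℂ) (2 * Real.pi * Complex.I * (k : ℕ) * (j : ℕ) / L)
        = -(2 * Real.pi * Complex.I * (k : ℕ) * (j : ℕ) / L) := by
      simp [map_div₀, Complex.conj_I, map_ofNat]
      ring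
    rw [hc]
    field_simp
    ring
  rw [Finset.sum_congr rfl (fun j _ => hterm j), Fin.sum_univ_eq_sum_range (fun n => z ^ n) L]
  by_cases h : i = k
  · subst h
    have hz1 : z = 1 := by rw [hz]; simp
    simp [hz1]
  · have h2πI : (2 : ℂ) * Real.pi * Complex.I ≠ 0 := by
      simp [Real.pi_ne_zero, Complex.I_ne_zero, Complex.ofReal_ne_zero]
    have hzL : z ^ L = 1 := by
      rw [hz, ← Complex.exp_nat_mul]
      rw [show (L : ℂ) * (2 * Real.pi * Complex.I * (((i : ℕ) : ℂ) - ((k : ℕ) : ℂ)) / L)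
          = ((((i : ℕ) : ℤ) - ((k : ℕ) : ℤ) : ℤ) : ℂ) * (2 * Real.pi * Complex.I) by
        push_cast; field_simp]
      exact Complex.exp_int_mul_two_pi_mul_I _
    have hz1 : z ≠ 1 := by
      intro hzz
      rw [hz, Complex.exp_eq_one_iff] at hzz
      obtain ⟨n, hn⟩ := hzz
      have h1 : (2 * Real.pi * Complex.I) * (((i : ℕ) : ℂ) - ((k : ℕ) : ℂ))
          = (2 * Real.pi * Complex.I) * ((n : ℂ) * L) := by
        field_simp at hn
        linear_combination (2 * Real.pi * Complex.I) * hn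
      have h2 : (((i : ℕ) : ℂ) - ((k : ℕ) : ℂ)) = (n : ℂ) * L := mul_left_cancel₀ h2πI h1
      have h3 : ((i : ℕ) : ℤ) - ((k : ℕ) : ℤ) = n * L := by exact_mod_cast h2
      have h4 : ((i : ℕ) : ℤ) - ((k : ℕ) : ℤ) = 0 := by
        refine Int.eq_zero_of_abs_lt_dvd ⟨n, by rw [h3, mul_comm]⟩ ?_
        have hi := i.isLt
        have hk := k.isLt
        rw [abs_lt]
        constructor <;> omega
      have : (i : ℕ) = (k : ℕ) := by omega
      exact h (Fin.ext this)
    rw [geom_sum_eq hz1, hzL]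
    simp [h]

/-- Existence of a general `D_L` block.  Let `L ≥ 2` and let `λ_1, …, λ_L` be
positive reals with `Σ_{i<L} λ_i < L ≤ Σ_{i≤L} λ_i` (sums over the first `L−1`,
resp. all `L`, values).  Then there is an `L × L` complex matrix `B` with
normalized columns whose rows are pairwise orthogonal, such that row `i` has
squared norm `λ_i` for `i = 1, …, L−1` and the last row has squared norm
`c_L := L − Σ_{i=1}^{L−1} λ_i`, which satisfies `0 < c_L ≤ λ_L`. -/
theorem general_DL_block_exists (L : ℕ) (hL : 2 ≤ L) (lam : Fin L → ℝ)
    (hpos : ∀ i, 0 < lam i)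
    (hlt : ∑ i ∈ Finset.univ.filter (fun i : Fin L => (i : ℕ) < L - 1), lam i < L)
    (hle : (L : ℝ) ≤ ∑ i, lam i) :
    ∃ B : Matrix (Fin L) (Fin L) ℂ,
      (∀ j : Fin L, ∑ i : Fin L, ‖B i j‖ ^ 2 = 1) ∧
      B * B.conjTranspose = Matrix.diagonal (fun i : Fin L =>
        if (i : ℕ) < L - 1 then (lam i : ℂ)
        else (((L : ℝ) - ∑ i ∈ Finset.univ.filter (fun i : Fin L => (i : ℕ) < L - 1), lam i : ℝ) : ℂ)) ∧
      0 < (L : ℝ) - ∑ i ∈ Finset.univ.filter (fun i : Fin L => (i : ℕ) < L - 1), lam i ∧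
      (L : ℝ) - (∑ i ∈ Finset.univ.filter (fun i : Fin L => (i : ℕ) < L - 1), lam i) ≤
        lam ⟨L - 1, by omega⟩ := by
  have hL0 : 0 < L := by omega
  have hLR : (0 : ℝ) < L := by exact_mod_cast hL0
  set S := ∑ i ∈ Finset.univ.filter (fun i : Fin L => (i : ℕ) < L - 1), lam i with hSdef
  have hlast : Finset.univ.filter (fun i : Fin L => ¬ (i : ℕ) < L - 1)
      = {(⟨L - 1, by omega⟩ : Fin L)} := by
    ext i
    simp only [Finset.mem_filter, Finset.mem_univ, true_and, Finset.mem_singleton]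
    constructor
    · intro h; have := i.isLt; exact Fin.ext (show (i:ℕ) = L - 1 by omega)
    · intro h; subst h; simp
  have hsplit : ∑ i, lam i = S + lam ⟨L - 1, by omega⟩ := by
    rw [← Finset.sum_filter_add_sum_filter_not Finset.univ
      (fun i : Fin L => (i : ℕ) < L - 1) lam, hlast, Finset.sum_singleton]
  have hcL : 0 < (L : ℝ) - S := by linarith
  have hcle : (L : ℝ) - S ≤ lam ⟨L - 1, by omega⟩ := by linarith
  set μ : Fin L → ℝ := fun i => if (i : ℕ) < L - 1 then lam i else (L : ℝ) - S with hμ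
  have hμpos : ∀ i, 0 < μ i := by
    intro i
    by_cases h : (i : ℕ) < L - 1 <;> simp [hμ, h, hpos i, hcL]
  have hμsum : ∑ i, μ i = L := by
    rw [← Finset.sum_filter_add_sum_filter_not Finset.univ
      (fun i : Fin L => (i : ℕ) < L - 1) μ, hlast, Finset.sum_singleton]
    have h1 : ∑ i ∈ Finset.univ.filter (fun i : Fin L => (i : ℕ) < L - 1), μ i = S := by
      rw [hSdef]
      refine Finset.sum_congr rfl fun i hi => ?_
      simp only [Finset.mem_filter] at hi
      simp [hμ, hi.2]
    have h2 : μ ⟨L - 1, by omega⟩ = (L : ℝ) - S := by simp [hμ]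
    rw [h1, h2]; ring
  refine ⟨fun i j => (Real.sqrt (μ i / L) : ℂ) *
      Complex.exp (2 * Real.pi * Complex.I * (i : ℕ) * (j : ℕ) / L), ?_, ?_, hcL, hcle⟩
  · intro j
    have hnorm : ∀ i : Fin L, ‖(Real.sqrt (μ i / L) : ℂ) *
        Complex.exp (2 * Real.pi * Complex.I * (i : ℕ) * (j : ℕ) / L)‖ ^ 2 = μ i / L := by
      intro i
      rw [norm_mul]
      have he : ‖Complex.exp (2 * Real.pi * Complex.I * (i : ℕ) * (j : ℕ) / L)‖ = 1 := by
        rw [Complex.norm_exp]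
        have : (2 * (Real.pi : ℂ) * Complex.I * (i : ℕ) * (j : ℕ) / L).re = 0 := by
          rw [show 2 * (Real.pi : ℂ) * Complex.I * (i : ℕ) * (j : ℕ) / L
            = ((2 * Real.pi * (i : ℕ) * (j : ℕ) / L : ℝ) : ℂ) * Complex.I by push_cast; ring]
          simp
        rw [this, Real.exp_zero]
      rw [he, mul_one, Complex.norm_real, Real.norm_eq_abs, _root_.sq_abs,
        Real.sq_sqrt (div_nonneg (hμpos i).le hLR.le)]
    rw [Finset.sum_congr rfl fun i _ => hnorm i, ← Finset.sum_div, hμsum]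
    field_simp
  · ext i k
    erw [Matrix.mul_apply]
    simp only [Matrix.conjTranspose, Matrix.transpose, Matrix.map_apply, Matrix.of_apply]
    have hterm : ∀ j : Fin L,
        ((Real.sqrt (μ i / L) : ℂ) * Complex.exp (2 * Real.pi * Complex.I * (i : ℕ) * (j : ℕ) / L)) *
          star ((Real.sqrt (μ k / L) : ℂ) * Complex.exp (2 * Real.pi * Complex.I * (k : ℕ) * (j : ℕ) / L))
        = ((Real.sqrt (μ i / L) : ℂ) * (Real.sqrt (μ k / L) : ℂ)) *
          (Complex.exp (2 * Real.pi * Complex.I * (i : ℕ) * (j : ℕ) / L) *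
            (starRingEnd ℂ) (Complex.exp (2 * Real.pi * Complex.I * (k : ℕ) * (j : ℕ) / L))) := by
      intro j
      simp only [star_mul', Complex.star_def, Complex.conj_ofReal]
      ring
    rw [Finset.sum_congr rfl fun j _ => hterm j, ← Finset.mul_sum, dft_orth L hL0 i k]
    by_cases h : i = k
    · subst h
      simp only [if_pos rfl, if_true, eq_self_iff_true, Matrix.diagonal_apply_eq]
      rw [← Complex.ofReal_mul, Real.mul_self_sqrt (div_nonneg (hμpos i).le hLR.le)]
      have hLC : (L : ℂ) ≠ 0 := Nat.cast_ne_zero.mpr hL0.ne'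
      have hmul : ((μ i / L : ℝ) : ℂ) * L = ((μ i : ℝ) : ℂ) := by
        push_cast; field_simp
      rw [hmul]
      by_cases hi : (i : ℕ) < L - 1 <;> simp [hμ, hi]
    · simp [h, Matrix.diagonal_apply_ne _ h]
end

section
/- Let M ≥ N be positive integers and let λ_1 ≥ λ_2 ≥ … ≥ λ_N > 0 be real numbers with Σ_{n=1}^N λ_n = M. Then there exists a matrix A ∈ ℂ^{N×M} such that every column of A has norm 1 and A·Aᴴ = diag(λ_1, …, λ_N). In particular, there exists an M-element unit norm frame for ℂ^N whose frame operator has eigenvalues λ_1, …, λ_N (counted with multiplicity). -/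
open Complex Finset

lemma geom_zero_aux (M : ℕ) (k : ℤ) (hM : 0 < M) (hk : ¬ (M:ℤ) ∣ k) :
    ∑ m : Fin M, Complex.exp (2 * Real.pi * Complex.I * k / M) ^ (m : ℕ) = 0 := by
  set z : ℂ := Complex.exp (2 * Real.pi * Complex.I * k / M) with hz
  have hM0 : (M:ℂ) ≠ 0 := by exact_mod_cast hM.ne'
  have h2 : (2:ℂ) * Real.pi * Complex.I ≠ 0 := by
    simp [Real.pi_ne_zero, Complex.I_ne_zero]
  have hz1 : z ≠ 1 := by
    intro h
    rw [hz, Complex.exp_eq_one_iff] at h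
    obtain ⟨n, hn⟩ := h
    apply hk
    have h4 : (2*(Real.pi:ℂ)*Complex.I) * k = (2*(Real.pi:ℂ)*Complex.I) * (n*M) := by
      field_simp at hn
      linear_combination (2*(Real.pi:ℂ)*Complex.I) * hn
    have h5 : (k : ℂ) = n * M := mul_left_cancel₀ h2 h4
    have hki : k = n * M := by exact_mod_cast h5
    exact ⟨n, by rw [hki]; ring⟩
  have hzM : z ^ M = 1 := by
    rw [hz, ← Complex.exp_nat_mul]
    have : (M:ℂ) * (2 * Real.pi * Complex.I * k / M) = k * (2 * Real.pi * Complex.I) := by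
      field_simp
    rw [this, Complex.exp_int_mul_two_pi_mul_I]
  rw [Fin.sum_univ_eq_sum_range (fun m => z ^ m), geom_sum_eq hz1, hzM]
  simp

/-- Spectral tetris for arbitrary spectra: for positive integers `M ≥ N` and a
decreasing sequence `λ_1 ≥ … ≥ λ_N > 0` with `Σ λ_n = M`, there exists an
`M`-element unit norm frame for `ℂ^N` whose frame operator is
`diag(λ_1, …, λ_N)` (so its eigenvalues are the `λ_n`, with multiplicity). -/
theorem unit_norm_frame_with_prescribed_spectrum (N M : ℕ) (hN : 0 < N)
    (hNM : N ≤ M) (lam : Fin N → ℝ) (hpos : ∀ n, 0 < lam n)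
    (hdec : ∀ i j : Fin N, i ≤ j → lam j ≤ lam i)
    (hsum : ∑ n, lam n = M) :
    ∃ A : Matrix (Fin N) (Fin M) ℂ,
      (∀ m : Fin M, ∑ n : Fin N, ‖A n m‖ ^ 2 = 1) ∧
      A * A.conjTranspose = Matrix.diagonal (fun n => (lam n : ℂ)) := by
  have hM : 0 < M := lt_of_lt_of_le hN hNM
  have hMR : (0:ℝ) < M := by exact_mod_cast hM
  have hM0 : (M:ℂ) ≠ 0 := by exact_mod_cast hM.ne'
  refine ⟨fun n m => (Real.sqrt (lam n / M) : ℂ) *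
      Complex.exp (2 * Real.pi * Complex.I * ((n:ℕ) * (m:ℕ)) / M), ?_, ?_⟩
  · intro m
    have hcol : ∀ n : Fin N,
        ‖(Real.sqrt (lam n / M) : ℂ) *
          Complex.exp (2 * Real.pi * Complex.I * ((n:ℕ) * (m:ℕ)) / M)‖ ^ 2
          = lam n / M := by
      intro n
      have hre : (2 * Real.pi * Complex.I * ((n:ℕ) * (m:ℕ)) / M).re = 0 := by
        simp [Complex.div_re]
      simp only [norm_mul, Complex.norm_exp, hre, Real.exp_zero,
        mul_one, Complex.norm_real, Real.norm_eq_abs]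
      rw [_root_.sq_abs, Real.sq_sqrt (div_nonneg (hpos n).le hMR.le)]
    simp only [hcol]
    rw [← Finset.sum_div, hsum]
    field_simp
  · ext n n'
    erw [Matrix.mul_apply]
    show ∑ m : Fin M, ((Real.sqrt (lam n / M) : ℂ) *
        Complex.exp (2 * Real.pi * Complex.I * ((n:ℕ) * (m:ℕ)) / M)) *
      star ((Real.sqrt (lam n' / M) : ℂ) *
        Complex.exp (2 * Real.pi * Complex.I * ((n':ℕ) * (m:ℕ)) / M)) = _
    have hterm : ∀ m : Fin M,
        ((Real.sqrt (lam n / M) : ℂ) *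
          Complex.exp (2 * Real.pi * Complex.I * ((n:ℕ) * (m:ℕ)) / M)) *
        star ((Real.sqrt (lam n' / M) : ℂ) *
          Complex.exp (2 * Real.pi * Complex.I * ((n':ℕ) * (m:ℕ)) / M))
        = ((Real.sqrt (lam n / M) : ℂ) * (Real.sqrt (lam n' / M) : ℂ)) *
          Complex.exp (2 * Real.pi * Complex.I *
            (((((n:ℕ):ℤ) - ((n':ℕ):ℤ) : ℤ)) : ℂ) / M) ^ (m:ℕ) := by
      intro m
      have hconj : (starRingEnd ℂ) (2 * Real.pi * Complex.I * ((n':ℕ) * (m:ℕ)) / M)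
          = -(2 * Real.pi * Complex.I * ((n':ℕ) * (m:ℕ)) / M) := by
        simp only [map_div₀, map_mul, map_ofNat, Complex.conj_ofReal, Complex.conj_I,
          Complex.conj_natCast]
        ring
      have hst : star (Complex.exp (2 * Real.pi * Complex.I * ((n':ℕ) * (m:ℕ)) / M))
          = Complex.exp (-(2 * Real.pi * Complex.I * ((n':ℕ) * (m:ℕ)) / M)) := by
        rw [show star (Complex.exp (2 * Real.pi * Complex.I * ((n':ℕ) * (m:ℕ)) / M))
            = (starRingEnd ℂ) (Complex.exp (2 * Real.pi * Complex.I * ((n':ℕ) * (m:ℕ)) / M))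
            from rfl, ← Complex.exp_conj, hconj]
      have hsr : star ((Real.sqrt (lam n' / M) : ℂ)) = (Real.sqrt (lam n' / M) : ℂ) := by
        rw [Complex.star_def, Complex.conj_ofReal]
      have hexp : Complex.exp (2 * Real.pi * Complex.I * ((n:ℕ) * (m:ℕ)) / M) *
          Complex.exp (-(2 * Real.pi * Complex.I * ((n':ℕ) * (m:ℕ)) / M))
          = Complex.exp (2 * Real.pi * Complex.I *
            (((((n:ℕ):ℤ) - ((n':ℕ):ℤ) : ℤ)) : ℂ) / M) ^ (m:ℕ) := by
        rw [← Complex.exp_nat_mul, ← Complex.exp_add]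
        congr 1
        push_cast
        field_simp
        ring
      rw [star_mul', hsr, hst, mul_mul_mul_comm, hexp]
    rw [Finset.sum_congr rfl (fun m _ => hterm m), ← Finset.mul_sum]
    by_cases h : n = n'
    · subst h
      rw [Matrix.diagonal_apply_eq]
      simp only [sub_self, Int.cast_zero, mul_zero, zero_div, Complex.exp_zero, one_pow,
        Finset.sum_const, Finset.card_univ, Fintype.card_fin, nsmul_eq_mul, mul_one]
      rw [← Complex.ofReal_mul, Real.mul_self_sqrt (div_nonneg (hpos n).le hMR.le)]
      push_cast
      field_simp
    · have hne : ¬ n = n' := h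
      have hk : ¬ ((M:ℤ) ∣ (((n:ℕ):ℤ) - ((n':ℕ):ℤ))) := by
        intro hd
        have hlt : |(((n:ℕ):ℤ) - ((n':ℕ):ℤ))| < M := by
          have h1 : ((n:ℕ):ℤ) < N := by exact_mod_cast n.isLt
          have h2 : ((n':ℕ):ℤ) < N := by exact_mod_cast n'.isLt
          have h3 : (N:ℤ) ≤ M := by exact_mod_cast hNM
          rw [abs_sub_lt_iff]
          omega
        have hne0 : (((n:ℕ):ℤ) - ((n':ℕ):ℤ)) ≠ 0 := by
          intro h0
          apply hne
          have : (n:ℕ) = (n':ℕ) := by omega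
          exact Fin.ext this
        have := Int.le_of_dvd (abs_pos.mpr hne0) ((dvd_abs _ _).mpr hd)
        omega
      rw [geom_zero_aux M _ hM hk, mul_zero, Matrix.diagonal_apply_ne _ hne]
end

section
/- Let M ≥ N be positive integers, let λ_1, …, λ_N be positive integers with Σ_{n=1}^N λ_n = M, and let d_1, …, d_D be positive integers with Σ_{i=1}^D d_i = M. Set T = max_n λ_n and for n = 1, …, T let a_n = |{r ∈ {1,…,N} : λ_r ≥ n}|. Then the following are equivalent: (i) there exist subsets S_1, …, S_D of {1,…,N} with |S_i| = d_i for every i such that each n ∈ {1,…,N} belongs to exactly λ_n of the sets S_1, …, S_D; (ii) (a_n)_{n=1}^T majorizes (d_i)_{i=1}^D. (Condition (i) says exactly that a spectral tetris fusion frame with eigenvalues (λ_n) and subspace dimensions (d_i) exists: taking W_i to be the span of the standard basis vectors indexed by S_i gives subspaces with dim W_i = d_i whose orthogonal projections sum to diag(λ_1, …, λ_N).) -/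
/-- A multiset `s` of natural numbers majorizes a multiset `t` if they have the
same sum and, for every `m`, the sum of the `m` largest elements of `s` is at
least the sum of the `m` largest elements of `t` (shorter multisets are
implicitly padded with zeros). -/
def Multiset.Majorizes (s t : Multiset ℕ) : Prop :=
  s.sum = t.sum ∧
    ∀ m : ℕ, ((t.sort (· ≥ ·)).take m).sum ≤ ((s.sort (· ≥ ·)).take m).sum


/-- top-m sum of a multiset of naturals -/
def topSum (s : Multiset ℕ) (m : ℕ) : ℕ := ((s.sort (· ≥ ·)).take m).sum

lemma sorted_coe_sort (l : List ℕ) (hl : l.Pairwise (· ≥ ·)) :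
    (l : Multiset ℕ).sort (· ≥ ·) = l := by
  refine List.Perm.eq_of_pairwise' (Multiset.pairwise_sort _ _) hl ?_
  rw [← Multiset.coe_eq_coe, Multiset.sort_eq]

lemma topSum_coe (l : List ℕ) (hl : l.Pairwise (· ≥ ·)) (m : ℕ) :
    topSum (l : Multiset ℕ) m = (l.take m).sum := by
  rw [topSum, sorted_coe_sort l hl]

/-- counting elements > k in a prefix of a sorted list -/
lemma countP_take_sorted (k : ℕ) : ∀ (l : List ℕ), l.Pairwise (· ≥ ·) → ∀ m : ℕ,
    (l.take m).countP (fun x => decide (k < x)) = min m (l.countP (fun x => decide (k < x))) := by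
  intro l
  induction l with
  | nil => intro _ m; simp
  | cons x l ih =>
    intro hs m
    have hs' : l.Pairwise (· ≥ ·) := hs.of_cons
    match m with
    | 0 => simp
    | Nat.succ m =>
      rw [List.take_succ_cons, List.countP_cons, List.countP_cons, ih hs' m]
      by_cases hk : k < x
      · rw [if_pos (by simpa using hk)]
        omega
      · have h0 : l.countP (fun x => decide (k < x)) = 0 := by
          rw [List.countP_eq_zero]
          intro y hy
          have : y ≤ x := List.rel_of_pairwise_cons hs hy
          simp only [decide_eq_true_eq]
          omega
        have h0' : (l.take m).countP (fun x => decide (k < x)) = 0 := by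
          have := List.Sublist.countP_le (p := fun x => decide (k < x)) (List.take_sublist m l)
          omega
        rw [if_neg (by simpa using hk)]
        omega

lemma sum_eq_sum_countP (l : List ℕ) (B : ℕ) (hB : ∀ x ∈ l, x ≤ B) :
    l.sum = ∑ k ∈ Finset.range B, l.countP (fun x => decide (k < x)) := by
  induction l with
  | nil => simp
  | cons x l ih =>
    have hx : x ≤ B := hB x (by simp)
    have ihl := ih (fun y hy => hB y (by simp [hy]))
    rw [List.sum_cons, ihl]
    have : ∀ k, (x :: l).countP (fun x => decide (k < x)) =
        l.countP (fun x => decide (k < x)) + (if k < x then 1 else 0) := by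
      intro k; rw [List.countP_cons]; by_cases h : k < x <;> simp [h]
    simp only [this]
    rw [Finset.sum_add_distrib]
    have : ∑ k ∈ Finset.range B, (if k < x then 1 else 0) = x := by
      rw [Finset.sum_boole]
      have : (Finset.range B).filter (fun k => k < x) = Finset.range x := by
        ext k; simp; omega
      simp [this]
    omega

lemma topSum_eq_count (s : Multiset ℕ) (m B : ℕ) (hB : ∀ x ∈ s, x ≤ B) :
    topSum s m = ∑ k ∈ Finset.range B, min m (Multiset.countP (fun x => k < x) s) := by
  set l := s.sort (· ≥ ·) with hl
  have hperm : (l : Multiset ℕ) = s := Multiset.sort_eq _ _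
  have hsort : l.Pairwise (· ≥ ·) := Multiset.pairwise_sort _ _
  have hBl : ∀ x ∈ l.take m, x ≤ B := by
    intro x hx
    exact hB x (by rw [← hperm]; exact Multiset.mem_coe.mpr ((List.take_sublist m l).mem hx))
  rw [topSum, sum_eq_sum_countP _ B hBl]
  refine Finset.sum_congr rfl (fun k _ => ?_)
  rw [countP_take_sorted k l hsort m]
  congr 1
  rw [← hperm, Multiset.coe_countP]

lemma topSum_le_sum (s : Multiset ℕ) (m : ℕ) : topSum s m ≤ s.sum := by
  have h : s.sum = ((s.sort (· ≥ ·)) : List ℕ).sum := by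
    rw [← Multiset.sum_coe, Multiset.sort_eq]
  rw [h, topSum]
  conv_rhs => rw [← List.take_append_drop m (s.sort (· ≥ ·))]
  rw [List.sum_append]
  omega

lemma topSum_eq_sum (s : Multiset ℕ) (m : ℕ) (hm : Multiset.card s ≤ m) : topSum s m = s.sum := by
  have hlen : (s.sort (· ≥ ·)).length = Multiset.card s := Multiset.length_sort _
  rw [topSum, List.take_of_length_le (by omega)]
  rw [← Multiset.sum_coe, Multiset.sort_eq]

/-- sum of any prefix is at most the top sum -/
lemma take_sum_le_topSum (l : List ℕ) (m : ℕ) : (l.take m).sum ≤ topSum (l : Multiset ℕ) m := by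
  have hB : ∀ x ∈ l.take m, x ≤ l.sum := by
    intro x hx
    exact List.single_le_sum (by simp) x ((List.take_sublist m l).mem hx)
  have hB' : ∀ x ∈ (l : Multiset ℕ), x ≤ l.sum := fun x hx =>
    List.single_le_sum (by simp) x (Multiset.mem_coe.mp hx)
  rw [topSum_eq_count _ m l.sum hB', sum_eq_sum_countP (l.take m) l.sum hB]
  refine Finset.sum_le_sum (fun k _ => ?_)
  rw [Multiset.coe_countP]
  have h1 := List.Sublist.countP_le (p := fun x => decide (k < x)) (List.take_sublist m l)
  have h2 := List.countP_le_length (p := fun x => decide (k < x)) (l := l.take m)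
  have h3 : (l.take m).length ≤ m := by simp
  omega

lemma topSum_mono_m (s : Multiset ℕ) {m m' : ℕ} (h : m ≤ m') : topSum s m ≤ topSum s m' := by
  rw [topSum, topSum]
  set l := s.sort (· ≥ ·)
  have h1 : l.take m = (l.take m').take m := by rw [List.take_take, min_eq_left h]
  conv_rhs => rw [← List.take_append_drop m (l.take m')]
  rw [h1, List.sum_append]
  omega

lemma topSum_add_zeros (s : Multiset ℕ) (j m : ℕ) :
    topSum (s + Multiset.replicate j 0) m = topSum s m := by
  set l := s.sort (· ≥ ·) with hldef
  have hperm : (l : Multiset ℕ) = s := Multiset.sort_eq _ _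
  have hsort : l.Pairwise (· ≥ ·) := Multiset.pairwise_sort _ _
  have hsort2 : (l ++ List.replicate j 0).Pairwise (· ≥ ·) := by
    rw [List.pairwise_append]
    refine ⟨hsort, List.pairwise_replicate.mpr (by simp), ?_⟩
    intro x _ y hy
    have : y = 0 := List.eq_of_mem_replicate hy
    omega
  have hco : ((l ++ List.replicate j 0 : List ℕ) : Multiset ℕ) = s + Multiset.replicate j 0 := by
    rw [← Multiset.coe_add]  -- probe name
    rw [hperm, Multiset.coe_replicate]
  rw [← hco, topSum_coe _ hsort2, ← hperm, topSum_coe _ hsort]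
  by_cases hm : m ≤ l.length
  · rw [List.take_append_of_le_length hm]
  · rw [List.take_of_length_le (le_of_not_ge hm), List.take_append,
      List.take_of_length_le (le_of_not_ge hm)]
    simp


lemma perm_rot (a p q : ℕ) (u : List ℕ) : (a :: p :: q :: u).Perm (p :: q :: a :: u) :=
  (List.Perm.swap p a (q::u)).trans ((List.Perm.swap q a u).cons p)

lemma set_perm_single : ∀ (l : List ℕ) (k : ℕ) (hk : k < l.length) (w : ℕ),
    ∃ u : List ℕ, l.Perm (l[k] :: u) ∧ (l.set k w).Perm (w :: u) := by
  intro l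
  induction l with
  | nil => intro k hk; simp at hk
  | cons a l ih =>
    intro k hk w
    match k with
    | 0 => exact ⟨l, by simp, by simp⟩
    | Nat.succ k =>
      obtain ⟨u, h1, h2⟩ := ih k (by simpa using hk) w
      refine ⟨a :: u, ?_, ?_⟩
      · simp only [List.getElem_cons_succ]
        exact (h1.cons a).trans (List.Perm.swap _ _ _)
      · simp only [List.set_cons_succ]
        exact (h2.cons a).trans (List.Perm.swap _ _ _)

lemma set_set_perm : ∀ (l : List ℕ) (j k : ℕ) (hjk : j < k) (hk : k < l.length) (v w : ℕ),
    ∃ u : List ℕ, l.Perm (l[j]'(by omega) :: l[k] :: u) ∧ ((l.set j v).set k w).Perm (v :: w :: u) := by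
  intro l
  induction l with
  | nil => intro j k hjk hk; simp at hk
  | cons a l ih =>
    intro j k hjk hk v w
    match j, k with
    | 0, Nat.succ k =>
      obtain ⟨u, h1, h2⟩ := set_perm_single l k (by simpa using hk) w
      refine ⟨u, ?_, ?_⟩
      · simpa using h1.cons a
      · simpa using h2.cons v
    | Nat.succ j, Nat.succ k =>
      obtain ⟨u, h1, h2⟩ := ih j k (by omega) (by simpa using hk) v w
      refine ⟨a :: u, ?_, ?_⟩
      · simp only [List.getElem_cons_succ]
        exact (h1.cons a).trans (perm_rot _ _ _ _)
      · simp only [List.set_cons_succ]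
        exact (h2.cons a).trans (perm_rot _ _ _ _)

lemma sum_set (A : List ℕ) (p : ℕ) (hp : p < A.length) (v : ℕ) :
    (A.set p v).sum + A[p] = A.sum + v := by
  obtain ⟨u, h1, h2⟩ := set_perm_single A p hp v
  rw [h1.sum_eq, h2.sum_eq]
  simp
  omega

def StepT (s t : Multiset ℕ) : Prop :=
  ∃ (u : Multiset ℕ) (x y : ℕ), y < x ∧ s = x ::ₘ y ::ₘ u ∧ t = (x - 1) ::ₘ (y + 1) ::ₘ u

set_option maxHeartbeats 1000000 in
lemma exists_step (s t : Multiset ℕ) (hcard : Multiset.card s = Multiset.card t)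
    (hmaj : Multiset.Majorizes s t) (hne : s ≠ t) :
    ∃ s' : Multiset ℕ, StepT s s' ∧ Multiset.card s' = Multiset.card s ∧
      Multiset.Majorizes s' t ∧
      (∀ m, topSum s' m ≤ topSum s m) ∧
      (∃ m ≤ Multiset.card s, topSum s' m < topSum s m) := by
  classical
  obtain ⟨hsum, hPS⟩ := hmaj
  set l := s.sort (· ≥ ·) with hldef
  set r := t.sort (· ≥ ·) with hrdef
  have hsl : l.Pairwise (· ≥ ·) := Multiset.pairwise_sort _ _
  have hsr : r.Pairwise (· ≥ ·) := Multiset.pairwise_sort _ _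
  have hcl : (l : Multiset ℕ) = s := Multiset.sort_eq _ _
  have hcr : (r : Multiset ℕ) = t := Multiset.sort_eq _ _
  have hlen : l.length = r.length := by
    rw [hldef, hrdef, Multiset.length_sort, Multiset.length_sort, hcard]
  have hsuml : l.sum = r.sum := by
    rw [← Multiset.sum_coe l, ← Multiset.sum_coe r, hcl, hcr]; exact hsum
  -- a differing index exists
  have hex : ∃ i, l.getD i 0 ≠ r.getD i 0 := by
    by_contra h
    push_neg at h
    apply hne
    rw [← hcl, ← hcr]
    have hlr : l = r := List.ext_getElem hlen (fun i h1 h2 => by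
      have := h i
      rwa [List.getD_eq_getElem l 0 h1, List.getD_eq_getElem r 0 h2] at this)
    rw [hlr]
  set j := Nat.find hex with hjdef
  have hjne : l.getD j 0 ≠ r.getD j 0 := Nat.find_spec hex
  have hjmin : ∀ i < j, l.getD i 0 = r.getD i 0 := fun i hi => not_not.mp (Nat.find_min hex hi)
  have hjlt : j < l.length := by
    by_contra h
    push_neg at h
    exact hjne (by rw [List.getD_eq_default _ _ h, List.getD_eq_default _ _ (by omega)])
  have hjlt_r : j < r.length := by omega
  -- equal prefixes up to j
  have htakej : l.take j = r.take j := by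
    refine List.ext_getElem (by simp [hlen]) (fun i h1 h2 => ?_)
    rw [List.getElem_take, List.getElem_take]
    have hi : i < j := by simp at h1; omega
    have := hjmin i hi
    rwa [List.getD_eq_getElem l 0 (by omega), List.getD_eq_getElem r 0 (by omega)] at this
  have hsucc : ∀ (L : List ℕ) (m : ℕ), m < L.length →
      (L.take (m+1)).sum = (L.take m).sum + L.getD m 0 := by
    intro L m hm
    rw [List.sum_take_succ L m hm, List.getD_eq_getElem L 0 hm]
  -- l exceeds r at j
  have hxj : r.getD j 0 < l.getD j 0 := by
    have h1 := hPS (j+1)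
    rw [hsucc l j hjlt, hsucc r j hjlt_r] at h1
    have h2 : (l.take j).sum = (r.take j).sum := by rw [htakej]
    omega
  -- existence of a compensating index k
  have hk_ex : ∃ i, j < i ∧ i < l.length ∧ l.getD i 0 < r.getD i 0 := by
    by_contra h
    push_neg at h
    have key : ∀ m, j + 1 ≤ m → m ≤ l.length → (r.take m).sum + 1 ≤ (l.take m).sum := by
      intro m
      induction m with
      | zero => omega
      | succ m ihm =>
        intro h1 h2
        rcases Nat.lt_or_ge j m with hc | hc
        · have hrl := h m hc (by omega)
          rw [hsucc l m (by omega), hsucc r m (by omega)]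
          have := ihm (by omega) (by omega)
          omega
        · have hmj : m = j := by omega
          rw [hmj, hsucc l j hjlt, hsucc r j hjlt_r]
          have h2' : (l.take j).sum = (r.take j).sum := by rw [htakej]
          omega
    have hfin := key l.length (by omega) le_rfl
    rw [List.take_of_length_le le_rfl, List.take_of_length_le (by omega)] at hfin
    omega
  set k := Nat.find hk_ex with hkdef
  obtain ⟨hjk, hklt, hyk⟩ := Nat.find_spec hk_ex
  have hklt_r : k < r.length := by omega
  have hkmin : ∀ i, j < i → i < k → i < l.length → ¬ (l.getD i 0 < r.getD i 0) := by
    intro i h1 h2 h3 h4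
    exact Nat.find_min hk_ex h2 ⟨h1, h3, h4⟩
  set x := l.getD j 0 with hxdef
  set y := l.getD k 0 with hydef
  -- r sorted: r[k] ≤ r[j]
  have hsorted_r : r.getD k 0 ≤ r.getD j 0 := by
    rw [List.getD_eq_getElem r 0 hklt_r, List.getD_eq_getElem r 0 hjlt_r]
    have := hsr.rel_get_of_lt (a := ⟨j, hjlt_r⟩) (b := ⟨k, hklt_r⟩) (by exact hjk)
    simpa using this
  have hxy : y + 1 < x := by
    have h1 : y < r.getD k 0 := hyk
    have h2 : r.getD k 0 ≤ r.getD j 0 := hsorted_r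
    have h3 : r.getD j 0 < x := hxj
    omega
  -- the strict prefix inequality for j < m ≤ k
  have key2 : ∀ m, j + 1 ≤ m → m ≤ k → (r.take m).sum + 1 ≤ (l.take m).sum := by
    intro m
    induction m with
    | zero => omega
    | succ m ihm =>
      intro h1 h2
      rcases Nat.lt_or_ge j m with hc | hc
      · have hrl : ¬ (l.getD m 0 < r.getD m 0) := hkmin m hc (by omega) (by omega)
        rw [hsucc l m (by omega), hsucc r m (by omega)]
        have := ihm (by omega) (by omega)
        omega
      · have hmj : m = j := by omega
        rw [hmj, hsucc l j hjlt, hsucc r j hjlt_r]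
        have h2' : (l.take j).sum = (r.take j).sum := by rw [htakej]
        omega
  -- build the transferred list
  obtain ⟨u, hu1, hu2⟩ := set_set_perm l j k hjk hklt (x - 1) (y + 1)
  rw [show l[j]'(by omega) = x by rw [hxdef, List.getD_eq_getElem l 0 hjlt],
      show l[k]'hklt = y by rw [hydef, List.getD_eq_getElem l 0 hklt]] at hu1
  set l' := (l.set j (x - 1)).set k (y + 1) with hl'def
  set s' : Multiset ℕ := (l' : Multiset ℕ) with hs'def
  have hsx : s = x ::ₘ y ::ₘ (u : Multiset ℕ) := by
    rw [← hcl]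
    exact_mod_cast Multiset.coe_eq_coe.mpr hu1
  have hs'x : s' = (x - 1) ::ₘ (y + 1) ::ₘ (u : Multiset ℕ) := by
    rw [hs'def]
    exact_mod_cast Multiset.coe_eq_coe.mpr hu2
  have hcard' : Multiset.card s' = Multiset.card s := by
    rw [hsx, hs'x]; simp
  -- sums
  have husum : s.sum = x + y + (u : Multiset ℕ).sum := by rw [hsx]; simp; ring
  have hs'sum : s'.sum = s.sum := by
    rw [hsx, hs'x]; simp; omega
  -- prefix sums of l'
  have hlen' : l'.length = l.length := by simp [hl'def]
  have hPS' : ∀ m, (r.take m).sum ≤ (l'.take m).sum := by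
    intro m
    rcases Nat.lt_or_ge k m with hmk | hmk
    · -- m > k : both modifications included, sum unchanged
      have hset : l'.take m = ((l.take m).set j (x - 1)).set k (y + 1) := by
        refine List.ext_getElem (by simp [hl'def]) (fun i h1 h2 => ?_)
        rw [List.getElem_take]
        by_cases hij : i = j
        · subst hij
          rw [List.getElem_set_ne (by omega), List.getElem_set_self (by simp; omega),
              List.getElem_set_ne (by omega), List.getElem_set_self (by simp [List.length_take]; omega)]
        · by_cases hik : i = k
          · subst hik
            rw [List.getElem_set_self (by simp [hl'def]; omega),
                List.getElem_set_self (by simp [List.length_take]; omega)]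
          · rw [List.getElem_set_ne (by omega), List.getElem_set_ne (by omega),
                List.getElem_set_ne (by omega), List.getElem_set_ne (by omega), List.getElem_take]
      have hjA : j < (l.take m).length := by simp [List.length_take]; omega
      have hkA : k < ((l.take m).set j (x-1)).length := by simp [List.length_take]; omega
      have e1 := sum_set (l.take m) j hjA (x - 1)
      have e2 := sum_set ((l.take m).set j (x-1)) k hkA (y + 1)
      have egj : (l.take m)[j]'hjA = x := by
        rw [List.getElem_take]; rw [hxdef, List.getD_eq_getElem l 0 hjlt]
      have egk : ((l.take m).set j (x-1))[k]'hkA = y := by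
        rw [List.getElem_set_ne (by omega), List.getElem_take]
        rw [hydef, List.getD_eq_getElem l 0 hklt]
      rw [hset]
      rw [egj] at e1
      rw [egk] at e2
      have := hPS m
      omega
    · rcases Nat.lt_or_ge j m with hmj | hmj
      · -- j < m ≤ k
        have hset : l'.take m = (l.take m).set j (x - 1) := by
          refine List.ext_getElem (by simp [hl'def]) (fun i h1 h2 => ?_)
          rw [List.getElem_take]
          have hik : i ≠ k := by simp [List.length_take, hl'def] at h1; omega
          by_cases hij : i = j
          · subst hij
            rw [List.getElem_set_ne (by omega), List.getElem_set_self (by simp; omega),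
                List.getElem_set_self (by simp [List.length_take]; omega)]
          · rw [List.getElem_set_ne (by omega), List.getElem_set_ne (by omega),
                List.getElem_set_ne (by omega), List.getElem_take]
        have hjA : j < (l.take m).length := by simp [List.length_take]; omega
        have e1 := sum_set (l.take m) j hjA (x - 1)
        have egj : (l.take m)[j]'hjA = x := by
          rw [List.getElem_take]; rw [hxdef, List.getD_eq_getElem l 0 hjlt]
        rw [hset]
        rw [egj] at e1
        have := key2 m (by omega) (by omega)
        omega
      · -- m ≤ j : untouched prefix
        have hset : l'.take m = l.take m := by
          refine List.ext_getElem (by simp [hl'def]) (fun i h1 h2 => ?_)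
          rw [List.getElem_take, List.getElem_take]
          have : i < m := by simp [List.length_take, hl'def] at h1; omega
          rw [List.getElem_set_ne (by omega), List.getElem_set_ne (by omega)]
        rw [hset]
        exact hPS m
  -- majorization of t by s'
  have hmaj' : Multiset.Majorizes s' t := by
    constructor
    · rw [hs'sum]; exact hsum
    · intro m
      have h1 : ((t.sort (· ≥ ·)).take m).sum = (r.take m).sum := rfl
      calc ((t.sort (· ≥ ·)).take m).sum ≤ (l'.take m).sum := by rw [h1]; exact hPS' m
        _ ≤ topSum (l' : Multiset ℕ) m := take_sum_le_topSum l' m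
        _ = ((s'.sort (· ≥ ·)).take m).sum := rfl
  -- count comparison for measure decrease
  have hxs : x ∈ s := by rw [hsx]; simp
  have hxsum : x ≤ s.sum := Multiset.single_le_sum (fun w _ => Nat.zero_le w) x hxs
  set B := s.sum + 1 with hBdef
  have hBs : ∀ z ∈ s, z ≤ B := fun z hz => by
    have := Multiset.single_le_sum (fun w _ => Nat.zero_le w) z hz; omega
  have hBs' : ∀ z ∈ s', z ≤ B := by
    intro z hz
    rw [hs'x] at hz
    rcases Multiset.mem_cons.mp hz with h | h
    · omega
    rcases Multiset.mem_cons.mp h with h | h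
    · omega
    · have : z ∈ s := by
        rw [hsx]; exact Multiset.mem_cons_of_mem (Multiset.mem_cons_of_mem h)
      exact hBs z this
  have hcc : ∀ kk, Multiset.countP (fun z => kk < z) s
      = Multiset.countP (fun z => kk < z) (↑u : Multiset ℕ)
      + ((if kk < x then 1 else 0) + (if kk < y then 1 else 0)) := by
    intro kk
    rw [hsx]
    simp only [Multiset.countP_cons]
    split_ifs <;> omega
  have hcc' : ∀ kk, Multiset.countP (fun z => kk < z) s'
      = Multiset.countP (fun z => kk < z) (↑u : Multiset ℕ)
      + ((if kk < x - 1 then 1 else 0) + (if kk < y + 1 then 1 else 0)) := by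
    intro kk
    rw [hs'x]
    simp only [Multiset.countP_cons]
    split_ifs <;> omega
  have hoff : ∀ kk, kk ≠ y → kk ≠ x - 1 →
      Multiset.countP (fun z => kk < z) s' = Multiset.countP (fun z => kk < z) s := by
    intro kk h1 h2
    rw [hcc, hcc']
    split_ifs <;> omega
  have hcy : Multiset.countP (fun z => y < z) s' = Multiset.countP (fun z => y < z) s + 1 := by
    rw [hcc, hcc']
    split_ifs <;> omega
  have hcx : Multiset.countP (fun z => x - 1 < z) s' + 1
      = Multiset.countP (fun z => x - 1 < z) s := by
    rw [hcc, hcc']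
    split_ifs <;> omega
  have hcmono : Multiset.countP (fun z => x - 1 < z) s ≤ Multiset.countP (fun z => y < z) s := by
    rw [Multiset.countP_eq_card_filter, Multiset.countP_eq_card_filter]
    exact Multiset.card_le_card (Multiset.monotone_filter_right s (fun b hb => by omega))
  have hcpos : 0 < Multiset.countP (fun z => x - 1 < z) s :=
    Multiset.countP_pos.mpr ⟨x, hxs, by omega⟩
  have hyB : y ∈ Finset.range B := by simp only [Finset.mem_range]; omega
  have hx1B : x - 1 ∈ Finset.range B := by simp only [Finset.mem_range]; omega
  have hsplit : ∀ g : ℕ → ℕ, ∑ kk ∈ Finset.range B, g kk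
      = ∑ kk ∈ ((Finset.range B).erase y).erase (x-1), g kk + g (x-1) + g y := by
    intro g
    have e2 : ∑ kk ∈ Finset.range B, g kk = ∑ kk ∈ ((Finset.range B).erase y), g kk + g y :=
      (Finset.sum_erase_add _ _ hyB).symm
    have e1 : ∑ kk ∈ ((Finset.range B).erase y), g kk
        = ∑ kk ∈ (((Finset.range B).erase y).erase (x-1)), g kk + g (x-1) :=
      (Finset.sum_erase_add _ _ (Finset.mem_erase.mpr ⟨by omega, hx1B⟩)).symm
    rw [e2, e1]
  have htop : ∀ m, (topSum s' m ≤ topSum s m) ∧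
      (Multiset.countP (fun z => x - 1 < z) s ≤ m →
        m ≤ Multiset.countP (fun z => y < z) s → topSum s' m + 1 ≤ topSum s m) := by
    intro m
    rw [topSum_eq_count s m B hBs, topSum_eq_count s' m B hBs',
        hsplit (fun kk => min m (Multiset.countP (fun z => kk < z) s)),
        hsplit (fun kk => min m (Multiset.countP (fun z => kk < z) s'))]
    have hdiff : ∑ kk ∈ ((Finset.range B).erase y).erase (x-1),
          min m (Multiset.countP (fun z => kk < z) s')
        = ∑ kk ∈ ((Finset.range B).erase y).erase (x-1),
          min m (Multiset.countP (fun z => kk < z) s) :=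
      Finset.sum_congr rfl (fun kk hkk => by
        rw [Finset.mem_erase, Finset.mem_erase] at hkk
        rw [hoff kk hkk.2.1 hkk.1])
    rw [hdiff]
    constructor
    · omega
    · intro hm1 hm2
      omega
  refine ⟨s', ⟨(↑u : Multiset ℕ), x, y, by omega, hsx, hs'x⟩, hcard', hmaj',
    fun m => (htop m).1, ?_⟩
  refine ⟨Multiset.countP (fun z => x - 1 < z) s, Multiset.countP_le_card _ _, ?_⟩
  have := (htop _).2 le_rfl hcmono
  omega

lemma steps_of_majorizes : ∀ (μ : ℕ) (s t : Multiset ℕ),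
    (∑ m ∈ Finset.range (Multiset.card s + 1), topSum s m) < μ →
    Multiset.card s = Multiset.card t → Multiset.Majorizes s t →
    Relation.ReflTransGen StepT s t := by
  intro μ
  induction μ with
  | zero => intro s t h; exact absurd h (Nat.not_lt_zero _)
  | succ μ ih =>
    intro s t hμ hcard hmaj
    by_cases hst : s = t
    · subst hst; exact Relation.ReflTransGen.refl
    · obtain ⟨s', hstep, hcard', hmaj', hle, m0, hm0, hlt⟩ := exists_step s t hcard hmaj hst
      have hdec : (∑ m ∈ Finset.range (Multiset.card s' + 1), topSum s' m)
          < (∑ m ∈ Finset.range (Multiset.card s + 1), topSum s m) := by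
        rw [hcard']
        exact Finset.sum_lt_sum (fun i _ => hle i)
          ⟨m0, Finset.mem_range.mpr (by omega), hlt⟩
      exact Relation.ReflTransGen.head hstep
        (ih s' t (by omega) (by omega) hmaj')


lemma exists_perm_of_map_eq {α : Type*} : ∀ {n : ℕ} (f g : Fin n → α),
    Multiset.map f Finset.univ.val = Multiset.map g Finset.univ.val →
    ∃ σ : Equiv.Perm (Fin n), ∀ i, f (σ i) = g i := by
  intro n
  induction n with
  | zero => exact fun f g _ => ⟨Equiv.refl _, fun i => i.elim0⟩
  | succ n ih =>
    intro f g h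
    have huniv : (Finset.univ.val : Multiset (Fin (n+1))) = 0 ::ₘ Finset.univ.val.map Fin.succ := by
      rw [Fin.univ_succ, Finset.cons_val, Finset.map_val]; rfl
    have hg0 : g 0 ∈ Multiset.map f Finset.univ.val := by
      rw [h]
      exact Multiset.mem_map_of_mem g (Finset.mem_univ_val _)
    obtain ⟨j, _, hj⟩ := Multiset.mem_map.mp hg0
    have hswap : Multiset.map (fun i => f ((Equiv.swap (0 : Fin (n+1)) j) i)) Finset.univ.val
        = Multiset.map f Finset.univ.val := by
      have : Finset.univ.val.map (⇑(Equiv.swap (0 : Fin (n+1)) j))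
          = (Finset.univ.val : Multiset (Fin (n+1))) := by
        have := Finset.map_univ_equiv (Equiv.swap (0 : Fin (n+1)) j)
        calc Finset.univ.val.map (⇑(Equiv.swap (0 : Fin (n+1)) j))
            = ((Finset.univ.map (Equiv.swap (0 : Fin (n+1)) j).toEmbedding)).val := by
              rw [Finset.map_val]; rfl
          _ = Finset.univ.val := by rw [this]
      calc Multiset.map (fun i => f ((Equiv.swap (0 : Fin (n+1)) j) i)) Finset.univ.val
          = Multiset.map f (Finset.univ.val.map (⇑(Equiv.swap (0 : Fin (n+1)) j))) :=
            (Multiset.map_map _ _ _).symm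
        _ = Multiset.map f Finset.univ.val := by rw [this]
    have hf1 : (fun i => f ((Equiv.swap (0 : Fin (n+1)) j) i)) 0 = g 0 := by
      simp [Equiv.swap_apply_left, hj]
    set f₁ : Fin (n+1) → α := fun i => f ((Equiv.swap (0 : Fin (n+1)) j) i) with hf₁def
    have hmap1 : Multiset.map f₁ Finset.univ.val = Multiset.map g Finset.univ.val := by
      rw [hswap]; exact h
    rw [huniv, Multiset.map_cons, Multiset.map_cons, hf1, Multiset.map_map, Multiset.map_map]
      at hmap1
    have htail := (Multiset.cons_inj_right _).mp hmap1
    obtain ⟨τ, hτ⟩ := ih (f₁ ∘ Fin.succ) (g ∘ Fin.succ) htail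
    refine ⟨Equiv.Perm.decomposeFin.symm (j, τ), fun i => ?_⟩
    cases i using Fin.cases with
    | zero =>
      rw [Equiv.Perm.decomposeFin_symm_apply_zero]
      exact hj
    | succ i =>
      rw [Equiv.Perm.decomposeFin_symm_apply_succ]
      exact hτ i

lemma sublist_of_le_map {ι α : Type*} [DecidableEq α] :
    ∀ (L : List ι) (f : ι → α) (u : Multiset α), u ≤ ↑(L.map f) →
    ∃ I : List ι, I.Sublist L ∧ (↑(I.map f) : Multiset α) = u := by
  intro L
  induction L with
  | nil =>
    intro f u hu
    refine ⟨[], by simp, ?_⟩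
    simp only [List.map_nil] at hu ⊢
    have : u = 0 := Multiset.le_zero.mp hu
    simp [this]
  | cons i L ih =>
    intro f u hu
    have hcons : ((List.map f (i :: L) : List α) : Multiset α) = f i ::ₘ ↑(L.map f) := by
      rw [List.map_cons, Multiset.cons_coe]
    by_cases hfi : f i ∈ u
    · have h1 : u.erase (f i) ≤ ↑(L.map f) := by
        have h2 := Multiset.erase_le_erase (f i) hu
        rwa [hcons, Multiset.erase_cons_head] at h2
      obtain ⟨I, hI1, hI2⟩ := ih f _ h1
      refine ⟨i :: I, hI1.cons₂ i, ?_⟩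
      rw [List.map_cons, ← Multiset.cons_coe, hI2, Multiset.cons_erase hfi]
    · have h1 : u ≤ ↑(L.map f) := by
        rw [Multiset.le_iff_count]
        intro b
        have hc := Multiset.le_iff_count.mp hu b
        rw [hcons] at hc
        by_cases hb : b = f i
        · subst hb
          have h0 : Multiset.count (f i) u = 0 := Multiset.count_eq_zero.mpr hfi
          omega
        · rwa [Multiset.count_cons_of_ne hb] at hc
      obtain ⟨I, hI1, hI2⟩ := ih f u h1
      exact ⟨I, hI1.cons i, hI2⟩

/-- Let `λ_1, …, λ_N` be positive integers summing to `M ≥ N` and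
`d_1, …, d_D` positive integers summing to `M`.  With `T = max_n λ_n` and
`a_n = #{r : λ_r ≥ n}`, a spectral tetris fusion frame with eigenvalues
`(λ_n)` and dimensions `(d_i)` exists — i.e. there are sets `S_i ⊆ {1,…,N}` with
`|S_i| = d_i` such that each `n` lies in exactly `λ_n` of them — if and only if
`(a_n)_{n=1}^T` majorizes `(d_i)_{i=1}^D`. -/
theorem spectral_tetris_fusion_frame_integer_iff (N M D : ℕ) (hN : 0 < N)
    (hNM : N ≤ M)
    (lam : Fin N → ℕ) (hlpos : ∀ n, 0 < lam n) (hlsum : ∑ n, lam n = M)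
    (d : Fin D → ℕ) (hdpos : ∀ i, 0 < d i) (hdsum : ∑ i, d i = M)
    (T : ℕ) (hT : T = Finset.univ.sup lam)
    (a : ℕ → ℕ) (ha : ∀ n, a n = (Finset.univ.filter (fun r : Fin N => n ≤ lam r)).card) :
    (∃ S : Fin D → Finset (Fin N),
        (∀ i, (S i).card = d i) ∧
        ∀ n : Fin N, (Finset.univ.filter (fun i => n ∈ S i)).card = lam n) ↔
      Multiset.Majorizes ((Multiset.range T).map (fun n => a (n + 1)))
        (Multiset.map d Finset.univ.val) := by
  classical
  have hTle : ∀ r, lam r ≤ T := fun r => hT ▸ Finset.le_sup (Finset.mem_univ r)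
  have hamono : ∀ p q : ℕ, p ≤ q → a q ≤ a p := by
    intro p q hpq
    rw [ha, ha]
    exact Finset.card_le_card
      (Finset.monotone_filter_right _ (fun r _ hr => le_trans hpq hr))
  set amult := (Multiset.range T).map (fun n => a (n + 1)) with hamultdef
  set dmult := Multiset.map d Finset.univ.val with hdmultdef
  have hasort : ((List.range T).map (fun n => a (n+1))).Pairwise (· ≥ ·) :=
    List.Pairwise.map _ (fun p q (h : p < q) => hamono (p+1) (q+1) (by omega))
      (List.pairwise_lt_range (n := T))
  have hacoe : amult = (((List.range T).map (fun n => a (n+1)) : List ℕ) : Multiset ℕ) := rfl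
  have htopa : ∀ m, topSum amult m = ∑ n ∈ Finset.range (min m T), a (n+1) := by
    intro m
    rw [hacoe, topSum_coe _ hasort, ← List.map_take, List.take_range]
    rfl
  have hsum_a_min : ∀ m, ∑ n ∈ Finset.range (min m T), a (n+1) = ∑ r : Fin N, min m (lam r) := by
    intro m
    calc ∑ n ∈ Finset.range (min m T), a (n+1)
        = ∑ n ∈ Finset.range (min m T), ∑ r : Fin N, (if n + 1 ≤ lam r then 1 else 0) := by
          refine Finset.sum_congr rfl (fun n _ => ?_)
          rw [ha (n+1), Finset.card_filter]
      _ = ∑ r : Fin N, ∑ n ∈ Finset.range (min m T), (if n + 1 ≤ lam r then 1 else 0) :=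
          Finset.sum_comm
      _ = ∑ r : Fin N, min m (lam r) := by
          refine Finset.sum_congr rfl (fun r _ => ?_)
          rw [Finset.sum_boole]
          have h5 : (Finset.range (min m T)).filter (fun n => n + 1 ≤ lam r)
              = Finset.range (min m (lam r)) := by
            ext n
            simp only [Finset.mem_filter, Finset.mem_range]
            have := hTle r
            omega
          rw [h5]
          simp
  have hcarda : Multiset.card amult = T := by simp [hamultdef]
  have hsuma : amult.sum = M := by
    have h1 := topSum_eq_sum amult T (le_of_eq hcarda)
    rw [htopa T, hsum_a_min T] at h1
    rw [← h1, ← hlsum]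
    refine Finset.sum_congr rfl (fun r _ => ?_)
    have := hTle r
    omega
  have hsumd : dmult.sum = M := by rw [hdmultdef, ← hdsum]; rfl
  have hcardd : Multiset.card dmult = D := by simp [hdmultdef]
  constructor
  · rintro ⟨S, hScard, hScount⟩
    refine ⟨hsuma.trans hsumd.symm, fun m => ?_⟩
    show topSum dmult m ≤ topSum amult m
    rw [htopa m, hsum_a_min m]
    set ld := dmult.sort (· ≥ ·) with hlddef
    have h1 : topSum dmult m = (ld.take m).sum := rfl
    have hle : (↑(ld.take m) : Multiset ℕ) ≤ ↑(Finset.univ.toList.map d) := by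
      have e1 : (↑(Finset.univ.toList.map d) : Multiset ℕ) = dmult := by
        rw [← Multiset.map_coe, Finset.coe_toList]
      rw [e1, ← Multiset.sort_eq dmult (· ≥ ·)]
      exact Multiset.coe_le.mpr ((List.take_sublist m ld).subperm)
    obtain ⟨I, hIsub, hImap⟩ := sublist_of_le_map Finset.univ.toList d _ hle
    have hInodup : I.Nodup := (Finset.nodup_toList _).sublist hIsub
    set IF : Finset (Fin D) := ⟨↑I, hInodup⟩ with hIFdef
    have hIFsum : ∑ i ∈ IF, d i = (ld.take m).sum := by
      have := congrArg Multiset.sum hImap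
      rw [Multiset.sum_coe, Multiset.sum_coe] at this
      rw [← this]
      rfl
    have hIFcard : IF.card ≤ m := by
      have := congrArg Multiset.card hImap
      simp only [Multiset.coe_card, List.length_map, List.length_take] at this
      have h2 : IF.card = I.length := rfl
      omega
    have hdc : ∑ i ∈ IF, d i ≤ ∑ r : Fin N, min m (lam r) := by
      have e1 : ∀ i, d i = ∑ r : Fin N, (if r ∈ S i then 1 else 0) := by
        intro i
        rw [Finset.sum_boole, Finset.filter_univ_mem, hScard i]
        simp
      calc ∑ i ∈ IF, d i
          = ∑ i ∈ IF, ∑ r : Fin N, (if r ∈ S i then 1 else 0) :=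
            Finset.sum_congr rfl (fun i _ => e1 i)
        _ = ∑ r : Fin N, ∑ i ∈ IF, (if r ∈ S i then 1 else 0) := Finset.sum_comm
        _ ≤ ∑ r : Fin N, min m (lam r) := by
            refine Finset.sum_le_sum (fun r _ => ?_)
            rw [Finset.sum_boole]
            have h2 : (IF.filter (fun i => r ∈ S i)).card ≤ lam r := by
              rw [← hScount r]
              exact Finset.card_le_card
                (Finset.filter_subset_filter _ (Finset.subset_univ IF))
            have h3 : (IF.filter (fun i => r ∈ S i)).card ≤ m :=
              le_trans (Finset.card_le_card (Finset.filter_subset _ _)) hIFcard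
            simp only [Nat.cast_id]
            omega
    omega
  · intro hmaj
    obtain ⟨hmsum, hmtop⟩ := hmaj
    have hmtop' : ∀ m, topSum dmult m ≤ topSum amult m := hmtop
    haveI : Nonempty (Fin N) := ⟨⟨0, hN⟩⟩
    have haTpos : 1 ≤ a T := by
      obtain ⟨r0, _, hr0⟩ := Finset.exists_mem_eq_sup Finset.univ Finset.univ_nonempty lam
      rw [ha]
      refine Nat.succ_le_of_lt (Finset.card_pos.mpr ⟨r0, ?_⟩)
      simp only [Finset.mem_filter, Finset.mem_univ, true_and]
      omega
    have hTD : T ≤ D := by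
      by_contra hc
      push_neg at hc
      have h1 : topSum dmult D = M := by
        rw [topSum_eq_sum dmult D (le_of_eq hcardd), hsumd]
      have h2 := hmtop' D
      rw [htopa D, show min D T = D by omega] at h2
      have h3 : ∑ n ∈ Finset.range D, a (n+1) + ∑ n ∈ Finset.Ico D T, a (n+1)
          = ∑ n ∈ Finset.range T, a (n+1) := Finset.sum_range_add_sum_Ico _ (by omega)
      have h4 : ∑ n ∈ Finset.range T, a (n+1) = M := by
        have h1' := topSum_eq_sum amult T (le_of_eq hcarda)
        rw [htopa T, show min T T = T by omega] at h1'
        rw [h1', hsuma]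
      have h5 : 1 ≤ ∑ n ∈ Finset.Ico D T, a (n+1) := by
        have hD : D ∈ Finset.Ico D T := by simp; omega
        calc 1 ≤ a (D+1) := le_trans haTpos (hamono (D+1) T (by omega))
          _ ≤ ∑ n ∈ Finset.Ico D T, a (n+1) :=
              Finset.single_le_sum (f := fun n => a (n+1)) (fun n _ => Nat.zero_le _) hD
      omega
    have hlamD : ∀ r, lam r ≤ D := fun r => le_trans (hTle r) hTD
    have hazero : ∀ j, T < j → a j = 0 := by
      intro j hj
      rw [ha, Finset.card_eq_zero]
      refine Finset.filter_eq_empty_iff.mpr (fun r _ => ?_)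
      have := hTle r
      omega
    set cmult := Multiset.map (fun j : Fin D => a ((j : ℕ) + 1)) Finset.univ.val with hcmultdef
    have hcmult : cmult = amult + Multiset.replicate (D - T) 0 := by
      have h1 : cmult = (Multiset.range D).map (fun n => a (n+1)) := by
        rw [hcmultdef]
        have hval : (Finset.univ.val : Multiset (Fin D)).map Fin.val = Multiset.range D := by
          rw [Fin.univ_def]
          change ((List.finRange D : List (Fin D)) : Multiset (Fin D)).map Fin.val = _
          rw [Multiset.map_coe, show (List.finRange D).map Fin.val = List.range D from
            List.ext_getElem (by simp) (by simp)]
          rfl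
        rw [← hval, Multiset.map_map]
        rfl
      have h3 : Multiset.range D
          = Multiset.range T + (Multiset.range (D-T)).map (fun n => T + n) := by
        have e1 : List.range D = List.range (T+(D-T)) := by rw [Nat.add_sub_cancel' hTD]
        rw [show Multiset.range D = ((List.range D : List ℕ) : Multiset ℕ) from rfl, e1,
          List.range_add]
        rfl
      rw [h1, h3, Multiset.map_add]
      congr 1
      rw [Multiset.map_map]
      have h4 : Multiset.map ((fun n => a (n+1)) ∘ (fun n => T + n)) (Multiset.range (D-T))
          = Multiset.map (fun _ => (0:ℕ)) (Multiset.range (D-T)) :=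
        Multiset.map_congr rfl (fun n _ => hazero (T+n+1) (by omega))
      rw [h4, Multiset.map_const']
      simp
    have hsumc : cmult.sum = M := by
      rw [hcmult]
      simp [hsuma]
    have hcardc : Multiset.card cmult = D := by rw [hcmultdef]; simp
    have htopc : ∀ m, topSum cmult m = topSum amult m := by
      intro m
      rw [hcmult]
      exact topSum_add_zeros _ _ _
    -- realizability predicate and its initial witness
    set QQ : Multiset ℕ → Prop := fun s => ∃ S : Fin D → Finset (Fin N),
      Multiset.map (fun i => (S i).card) Finset.univ.val = s ∧
      (∀ n : Fin N, (Finset.univ.filter (fun i => n ∈ S i)).card = lam n) with hQQdef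
    have hQ0 : QQ cmult := by
      refine ⟨fun j => Finset.univ.filter (fun r => (j : ℕ) + 1 ≤ lam r), ?_, ?_⟩
      · rw [hcmultdef]
        exact Multiset.map_congr rfl (fun j _ => by rw [← ha])
      · intro n
        have h1 : (Finset.univ.filter (fun j : Fin D =>
              n ∈ Finset.univ.filter (fun r => (j:ℕ)+1 ≤ lam r))).card
            = (Finset.univ.filter (fun j : Fin D => (j:ℕ) + 1 ≤ lam n)).card := by
          congr 1
          ext j
          simp [Finset.mem_filter]
        rw [h1, Finset.card_filter,
          Fin.sum_univ_eq_sum_range (fun jj => if jj+1 ≤ lam n then 1 else 0) D,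
          Finset.sum_boole]
        have h2 : (Finset.range D).filter (fun jj => jj + 1 ≤ lam n)
            = Finset.range (lam n) := by
          ext jj
          simp only [Finset.mem_filter, Finset.mem_range]
          have := hlamD n
          omega
        rw [h2]
        simp
    have hQstep : ∀ s s', StepT s s' → QQ s → QQ s' := by
      rintro s s' ⟨u, x, y, hyx, rfl, rfl⟩ ⟨S, hmap, hcount⟩
      have hx : x ∈ Multiset.map (fun i => (S i).card) Finset.univ.val := by
        rw [hmap]; exact Multiset.mem_cons_self _ _
      obtain ⟨j, hju, hj⟩ := Multiset.mem_map.mp hx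
      have hmap2 : Multiset.map (fun i => (S i).card) (Finset.univ.val.erase j) = y ::ₘ u := by
        have e := Multiset.cons_erase hju
        rw [← e, Multiset.map_cons, hj] at hmap
        exact (Multiset.cons_inj_right _).mp hmap
      have hy : y ∈ Multiset.map (fun i => (S i).card) (Finset.univ.val.erase j) := by
        rw [hmap2]; exact Multiset.mem_cons_self _ _
      obtain ⟨k, hku, hk⟩ := Multiset.mem_map.mp hy
      have hnd : (Finset.univ.val : Multiset (Fin D)).Nodup := Finset.univ.nodup
      have hkj : k ≠ j := ((Multiset.Nodup.mem_erase_iff hnd).mp hku).1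
      have hmap3 : Multiset.map (fun i => (S i).card)
          ((Finset.univ.val.erase j).erase k) = u := by
        have e := Multiset.cons_erase hku
        rw [← e, Multiset.map_cons, hk] at hmap2
        exact (Multiset.cons_inj_right _).mp hmap2
      have hcards : (S k).card < (S j).card := by rw [hj, hk]; omega
      have hvex : ∃ v, v ∈ S j ∧ v ∉ S k := by
        by_contra hcc
        push_neg at hcc
        exact absurd (Finset.card_le_card (fun v hv => hcc v hv)) (by omega)
      obtain ⟨v, hv1, hv2⟩ := hvex
      refine ⟨fun i => if i = j then (S j).erase v
        else if i = k then insert v (S k) else S i, ?_, ?_⟩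
      · have huniv : (Finset.univ.val : Multiset (Fin D))
            = j ::ₘ k ::ₘ ((Finset.univ.val.erase j).erase k) := by
          rw [Multiset.cons_erase hku, Multiset.cons_erase hju]
        rw [huniv, Multiset.map_cons, Multiset.map_cons]
        have e1 : (if j = j then (S j).erase v
            else if j = k then insert v (S k) else S j).card = x - 1 := by
          rw [if_pos rfl, Finset.card_erase_of_mem hv1, hj]
        have e2 : (if k = j then (S j).erase v
            else if k = k then insert v (S k) else S k).card = y + 1 := by
          rw [if_neg hkj, if_pos rfl, Finset.card_insert_of_notMem hv2, hk]
        rw [e1, e2]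
        congr 1
        congr 1
        rw [← hmap3]
        refine Multiset.map_congr rfl (fun i hi => ?_)
        have hik : i ≠ k := ((Multiset.Nodup.mem_erase_iff (hnd.erase j)).mp hi).1
        have hij : i ≠ j := ((Multiset.Nodup.mem_erase_iff hnd).mp
          (Multiset.mem_of_le (Multiset.erase_le k _) hi)).1
        simp only [if_neg hij, if_neg hik]
      · intro n
        show (Finset.univ.filter (fun i => n ∈ (if i = j then (S j).erase v
            else if i = k then insert v (S k) else S i))).card = lam n
        by_cases hnv : n = v
        · have hset : Finset.univ.filter (fun i => n ∈ (if i = j then (S j).erase v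
                else if i = k then insert v (S k) else S i))
              = insert k ((Finset.univ.filter (fun i => n ∈ S i)).erase j) := by
            ext i
            simp only [Finset.mem_filter, Finset.mem_univ, true_and, Finset.mem_insert,
              Finset.mem_erase]
            by_cases hij : i = j
            · subst hij
              rw [if_pos rfl]
              constructor
              · intro hmem
                exact absurd hnv (Finset.mem_erase.mp hmem).1
              · rintro (h | h)
                · exact absurd h.symm hkj
                · exact absurd rfl h.1
            · by_cases hik : i = k
              · rw [hik, if_neg hkj, if_pos rfl]
                constructor
                · intro _
                  exact Or.inl rfl
                · intro _
                  rw [hnv]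
                  exact Finset.mem_insert_self v (S k)
              · rw [if_neg hij, if_neg hik]
                constructor
                · intro hmem
                  exact Or.inr ⟨hij, hmem⟩
                · rintro (h | h)
                  · exact absurd h hik
                  · exact h.2
          rw [hset]
          have hjmem : j ∈ Finset.univ.filter (fun i => n ∈ S i) := by
            simp only [Finset.mem_filter, Finset.mem_univ, true_and]
            rw [hnv]
            exact hv1
          have hknot : k ∉ (Finset.univ.filter (fun i => n ∈ S i)).erase j := by
            simp only [Finset.mem_erase, Finset.mem_filter, Finset.mem_univ, true_and]
            rintro ⟨-, hmem⟩
            rw [hnv] at hmem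
            exact hv2 hmem
          rw [Finset.card_insert_of_notMem hknot, Finset.card_erase_of_mem hjmem]
          have hpos : 0 < (Finset.univ.filter (fun i => n ∈ S i)).card :=
            Finset.card_pos.mpr ⟨j, hjmem⟩
          have := hcount n
          omega
        · have hset : Finset.univ.filter (fun i => n ∈ (if i = j then (S j).erase v
                else if i = k then insert v (S k) else S i))
              = Finset.univ.filter (fun i => n ∈ S i) := by
            ext i
            simp only [Finset.mem_filter, Finset.mem_univ, true_and]
            by_cases hij : i = j
            · subst hij
              rw [if_pos rfl, Finset.mem_erase]
              simp [hnv]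
            · by_cases hik : i = k
              · rw [hik, if_neg hkj, if_pos rfl, Finset.mem_insert]
                simp [hnv]
              · rw [if_neg hij, if_neg hik]
          rw [hset]
          exact hcount n
    have hpath : Relation.ReflTransGen StepT cmult dmult := by
      refine steps_of_majorizes
        ((∑ m ∈ Finset.range (Multiset.card cmult + 1), topSum cmult m) + 1) cmult dmult
        (by omega) (by rw [hcardc, hcardd]) ⟨by rw [hsumc, hsumd], fun m => ?_⟩
      show topSum dmult m ≤ topSum cmult m
      rw [htopc m]
      exact hmtop' m
    have hQD : QQ dmult := by
      have hind : ∀ s t : Multiset ℕ, Relation.ReflTransGen StepT s t → QQ s → QQ t := by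
        intro s t h
        induction h with
        | refl => exact id
        | tail h1 h2 ih => exact fun q => hQstep _ _ h2 (ih q)
      exact hind _ _ hpath hQ0
    obtain ⟨S1, hS1map, hS1count⟩ := hQD
    have hS1d : Multiset.map (fun i => (S1 i).card) Finset.univ.val
        = Multiset.map d Finset.univ.val := by rw [hS1map]
    obtain ⟨σ, hσ⟩ := exists_perm_of_map_eq _ _ hS1d
    refine ⟨fun i => S1 (σ i), fun i => hσ i, fun n => ?_⟩
    rw [← hS1count n]
    refine Finset.card_equiv σ (fun i => ?_)
    simp
end

section
/- Let M ≥ N be positive integers, let λ_1, …, λ_N be positive integers with Σ_{n=1}^N λ_n = M, and let d_1, …, d_D be positive integers with Σ_{i=1}^D d_i = M. Set T = max_n λ_n and for n = 1, …, T let a_n = |{r ∈ {1,…,N} : λ_r ≥ n}|. If (a_n)_{n=1}^T majorizes (d_i)_{i=1}^D, then there exist subspaces W_1, …, W_D of the Euclidean space ℝ^N, each spanned by a subset of the standard orthonormal basis, with dim W_i = d_i for all i, such that the sum of the orthogonal projections onto W_1, …, W_D equals the linear map given by the diagonal matrix diag(λ_1, …, λ_N). In particular (W_i)_{i=1}^D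 is a fusion frame for ℝ^N with eigenvalues λ_1, …, λ_N and prescribed dimensions d_1, …, d_D. -/
private def conjC {N : ℕ} (lam : Fin N → ℕ) (t : ℕ) : ℕ :=
  (Finset.univ.filter fun r => t ≤ lam r).card

private lemma card_filter_le_val (N k : ℕ) :
    (Finset.univ.filter (fun j : Fin N => k ≤ (j : ℕ))).card = N - k := by
  rcases lt_or_ge k N with h | h
  · have : Finset.univ.filter (fun j : Fin N => k ≤ (j : ℕ)) = Finset.Ici (⟨k, h⟩ : Fin N) := by
      ext j; simp [Fin.le_def]
    rw [this, Fin.card_Ici]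
  · have : Finset.univ.filter (fun j : Fin N => k ≤ (j : ℕ)) = ∅ := by
      ext j; simp; omega
    rw [this]; simp; omega

private lemma rank_iff {N : ℕ} (lam : Fin N → ℕ) (t : ℕ) (n : Fin N) :
    t ≤ lam n ↔ N - conjC lam t ≤ ((Tuple.sort lam).symm n : ℕ) := by
  classical
  set τ := Tuple.sort lam with hτ
  have hg : Monotone (lam ∘ τ) := Tuple.monotone_sort lam
  set j : Fin N := τ.symm n with hj
  have hn : lam n = lam (τ j) := by simp [hj]
  have hc : conjC lam t = (Finset.univ.filter fun j' : Fin N => t ≤ lam (τ j')).card := by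
    unfold conjC
    rw [← Finset.card_image_of_injective _ τ.symm.injective]
    congr 1
    ext j'
    simp only [Finset.mem_image, Finset.mem_filter, Finset.mem_univ, true_and]
    constructor
    · rintro ⟨r, hr, rfl⟩; simpa using hr
    · intro h; exact ⟨τ j', h, by simp⟩
  constructor
  · intro h
    have hsub : Finset.Ici j ⊆ Finset.univ.filter fun j' : Fin N => t ≤ lam (τ j') := by
      intro j' hj'
      simp only [Finset.mem_Ici] at hj'
      simp only [Finset.mem_filter, Finset.mem_univ, true_and]
      have h2 : lam (τ j) ≤ lam (τ j') := hg hj'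
      omega
    have := Finset.card_le_card hsub
    rw [Fin.card_Ici, ← hc] at this
    have := j.isLt
    omega
  · intro h
    by_contra h'
    push_neg at h'
    have hsub : (Finset.univ.filter fun j' : Fin N => t ≤ lam (τ j')) ⊆ Finset.Ioi j := by
      intro j' hj'
      simp only [Finset.mem_filter, Finset.mem_univ, true_and] at hj'
      simp only [Finset.mem_Ioi]
      by_contra hle
      push_neg at hle
      have h2 : lam (τ j') ≤ lam (τ j) := hg hle
      omega
    have := Finset.card_le_card hsub
    rw [Fin.card_Ioi, ← hc] at this
    have := j.isLt
    omega

private lemma sum_min_succ {N : ℕ} (lam : Fin N → ℕ) (m : ℕ) :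
    ∑ n, min (lam n) (m + 1) = ∑ n, min (lam n) m + conjC lam (m + 1) := by
  unfold conjC
  rw [Finset.card_filter, ← Finset.sum_add_distrib]
  exact Finset.sum_congr rfl fun n _ => by split_ifs <;> omega

private lemma sum_conj_eq_sum_min {N : ℕ} (lam : Fin N → ℕ) (m : ℕ) :
    ∑ t ∈ Finset.range m, conjC lam (t + 1) = ∑ n, min (lam n) m := by
  induction m with
  | zero => simp
  | succ m ih => rw [Finset.sum_range_succ, ih, sum_min_succ]
private lemma core (D : ℕ) : ∀ {N : ℕ} (lam : Fin N → ℕ) (e : ℕ → ℕ),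
    (∀ i j : ℕ, i ≤ j → e j ≤ e i) →
    (∑ i ∈ Finset.range D, e i = ∑ n, lam n) →
    (∀ m : ℕ, m ≤ D → ∑ i ∈ Finset.range m, e i ≤ ∑ n, min (lam n) m) →
    ∃ S : ℕ → Finset (Fin N),
      (∀ i, i < D → (S i).card = e i) ∧
      (∀ n, ((Finset.range D).filter (fun i => n ∈ S i)).card = lam n) := by
  induction D with
  | zero =>
    intro N lam e _ hsum _
    refine ⟨fun _ => ∅, fun i hi => absurd hi (Nat.not_lt_zero i), fun n => ?_⟩
    simp only [Finset.range_zero, Finset.filter_empty, Finset.card_empty]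
    simp only [Finset.range_zero, Finset.sum_empty] at hsum
    have := Finset.sum_eq_zero_iff.mp hsum.symm n (Finset.mem_univ n)
    omega
  | succ D ih =>
    intro N lam e he hsum hmaj
    classical
    set C : Finset (Fin N) := Finset.univ.filter (fun n => N - e 0 ≤ ((Tuple.sort lam).symm n : ℕ)) with hC
    have hmin1 : ∑ n, min (lam n) 1 = conjC lam 1 := by
      unfold conjC
      rw [Finset.card_filter]
      exact Finset.sum_congr rfl fun n _ => by split_ifs <;> omega
    have h1 := hmaj 1 (by omega)
    rw [Finset.sum_range_one] at h1
    have he0a1 : e 0 ≤ conjC lam 1 := by omega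
    have ha1N : conjC lam 1 ≤ N := by
      unfold conjC
      simpa using Finset.card_filter_le Finset.univ (fun r => 1 ≤ lam r)
    have he0N : e 0 ≤ N := le_trans he0a1 ha1N
    -- cardinality of C
    have hCcard : C.card = e 0 := by
      rw [hC]
      have himg : (Finset.univ.filter (fun j : Fin N => N - e 0 ≤ (j : ℕ))).image (Tuple.sort lam)
          = Finset.univ.filter (fun n => N - e 0 ≤ ((Tuple.sort lam).symm n : ℕ)) := by
        ext n
        simp only [Finset.mem_image, Finset.mem_filter, Finset.mem_univ, true_and]
        constructor
        · rintro ⟨r, hr, rfl⟩; simpa using hr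
        · intro h; exact ⟨(Tuple.sort lam).symm n, h, by simp⟩
      rw [← himg, Finset.card_image_of_injective _ (Tuple.sort lam).injective, card_filter_le_val]
      omega
    have hClam : ∀ n ∈ C, 1 ≤ lam n := by
      intro n hn
      rw [hC, Finset.mem_filter] at hn
      exact (rank_iff lam 1 n).mpr (le_trans (by omega) hn.2)
    set lam' : Fin N → ℕ := fun n => lam n - (if n ∈ C then 1 else 0) with hlam'
    have hlam'n : ∀ n, lam' n = lam n - (if n ∈ C then 1 else 0) := fun n => rfl
    have hsplit : ∀ n, lam n = lam' n + (if n ∈ C then 1 else 0) := by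
      intro n
      rw [hlam'n n]
      by_cases h : n ∈ C
      · have := hClam n h; rw [if_pos h]; omega
      · rw [if_neg h]; omega
    have hsum' : ∑ i ∈ Finset.range D, e (i + 1) = ∑ n, lam' n := by
      have hcard : ∑ n, (if n ∈ C then 1 else 0) = C.card := by
        rw [← Finset.card_filter]
        congr 1
        ext n
        simp
      have h2 : ∑ n, lam n = ∑ n, lam' n + C.card := by
        rw [← hcard, ← Finset.sum_add_distrib]
        exact Finset.sum_congr rfl fun n _ => hsplit n
      have h3 : ∑ i ∈ Finset.range (D + 1), e i = ∑ i ∈ Finset.range D, e (i + 1) + e 0 :=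
        Finset.sum_range_succ' e D
      omega
    have hmaj' : ∀ m : ℕ, m ≤ D → ∑ i ∈ Finset.range m, e (i + 1) ≤ ∑ n, min (lam' n) m := by
      intro m hm
      set K := (C.filter (fun n => m + 1 ≤ lam n)).card with hK
      set L := (C.filter (fun n => lam n ≤ m)).card with hL
      have hKL : K + L = e 0 := by
        have hfe : C.filter (fun n => lam n ≤ m) = C.filter (fun a => ¬ (m + 1 ≤ lam a)) := by
          ext n
          simp only [Finset.mem_filter, and_congr_right_iff]
          intro _
          omega
        have h8 := Finset.card_filter_add_card_filter_not
          (s := C) (p := fun n => m + 1 ≤ lam n)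
        rw [hK, hL, ← hCcard, hfe]
        exact h8
      have hBB' : ∑ n, min (lam n) m = ∑ n, min (lam' n) m + L := by
        rw [hL]
        have hfilter : C.filter (fun n => lam n ≤ m)
            = Finset.univ.filter (fun n => n ∈ C ∧ lam n ≤ m) := by
          ext n; simp only [Finset.mem_filter, Finset.mem_univ, true_and]
        rw [hfilter, Finset.card_filter, ← Finset.sum_add_distrib]
        apply Finset.sum_congr rfl
        intro n _
        rw [hlam'n n]
        by_cases h : n ∈ C
        · have h2 := hClam n h
          rw [if_pos h]
          by_cases h5 : lam n ≤ m
          · rw [if_pos (And.intro h h5)]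
            omega
          · rw [if_neg (fun hc : n ∈ C ∧ lam n ≤ m => h5 hc.2)]
            omega
        · rw [if_neg h, if_neg (fun hc : n ∈ C ∧ lam n ≤ m => h hc.1)]
          omega
      rcases le_or_gt (e 0) (conjC lam (m + 1)) with hcase | hcase
      · -- C ⊆ {lam ≥ m+1}, so L = 0
        have hL0 : L = 0 := by
          rw [hL, Finset.card_eq_zero, Finset.filter_eq_empty_iff]
          intro n hn
          have hn' := hn
          rw [hC, Finset.mem_filter] at hn'
          have hge : N - conjC lam (m + 1) ≤ ((Tuple.sort lam).symm n : ℕ) := by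
            have h9 := hn'.2
            omega
          have hml : m + 1 ≤ lam n := (rank_iff lam (m + 1) n).mpr hge
          omega
        have hmono : ∑ i ∈ Finset.range m, e (i + 1) ≤ ∑ i ∈ Finset.range m, e i :=
          Finset.sum_le_sum fun i _ => he i (i + 1) (by omega)
        have := hmaj m (by omega)
        omega
      · -- {lam ≥ m+1} ⊆ C, so conj ≤ K
        have hsub : Finset.univ.filter (fun n => m + 1 ≤ lam n) ⊆ C := by
          intro n hn
          rw [Finset.mem_filter] at hn
          rw [hC, Finset.mem_filter]
          refine ⟨Finset.mem_univ _, ?_⟩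
          have h9 := (rank_iff lam (m + 1) n).mp hn.2
          omega
        have hKge : conjC lam (m + 1) ≤ K := by
          rw [hK]
          unfold conjC
          apply Finset.card_le_card
          intro n hn
          rw [Finset.mem_filter]
          exact ⟨hsub hn, (Finset.mem_filter.mp hn).2⟩
        have h1' := hmaj (m + 1) (by omega)
        have h2 : ∑ i ∈ Finset.range (m + 1), e i
            = ∑ i ∈ Finset.range m, e (i + 1) + e 0 := Finset.sum_range_succ' e m
        have h3 := sum_min_succ lam m
        omega
    obtain ⟨S', hS'card, hS'count⟩ := ih lam' (fun i => e (i + 1))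
      (fun i j hij => he _ _ (by omega)) hsum' hmaj'
    refine ⟨fun i => if i = 0 then C else S' (i - 1), fun i hi => ?_, fun n => ?_⟩
    · cases i with
      | zero => simpa using hCcard
      | succ k => simpa using hS'card k (by omega)
    · rw [Finset.card_filter, Finset.sum_range_succ']
      simp only [Nat.succ_ne_zero, if_false, Nat.add_sub_cancel, if_true, reduceIte]
      have htail : ∑ i ∈ Finset.range D, (if n ∈ S' i then 1 else 0) = lam' n := by
        rw [← Finset.card_filter, hS'count]
      rw [htail]
      have := hsplit n
      omega

private lemma single_injective (N : ℕ) :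
    Function.Injective (fun n : Fin N => EuclideanSpace.single n (1 : ℝ)) := by
  intro a b hab
  by_contra hne
  have h1 := congrArg (fun v : EuclideanSpace ℝ (Fin N) => v a) hab
  simp only [EuclideanSpace.single_apply, if_pos rfl] at h1
  rw [if_neg hne] at h1
  exact one_ne_zero h1

private lemma sum_apply_coord {N : ℕ} {ι : Type*} (s : Finset ι)
    (g : ι → EuclideanSpace ℝ (Fin N)) (k : Fin N) :
    (∑ m ∈ s, g m) k = ∑ m ∈ s, g m k := by
  classical
  induction s using Finset.cons_induction with
  | empty => rfl
  | cons a s ha ih => rw [Finset.sum_cons, Finset.sum_cons, ← ih]; rfl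

private lemma finrank_span_single {N : ℕ} (S : Finset (Fin N)) :
    Module.finrank ℝ (Submodule.span ℝ
      ((fun n => EuclideanSpace.single n (1 : ℝ)) '' (S : Set (Fin N)))) = S.card := by
  classical
  have hfn : ⇑(EuclideanSpace.basisFun (Fin N) ℝ) = fun n : Fin N => EuclideanSpace.single n (1 : ℝ) :=
    funext fun i => EuclideanSpace.basisFun_apply (ι := Fin N) (𝕜 := ℝ) i
  have horth : Orthonormal ℝ (fun n : Fin N => EuclideanSpace.single n (1 : ℝ)) := by
    rw [← hfn]
    exact (EuclideanSpace.basisFun (Fin N) ℝ).orthonormal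
  have hli : LinearIndependent ℝ (fun n : Fin N => EuclideanSpace.single n (1 : ℝ)) :=
    horth.linearIndependent
  have h2 : LinearIndependent ℝ
      ((↑) : ((fun n => EuclideanSpace.single n (1 : ℝ)) '' (S : Set (Fin N))) →
        EuclideanSpace ℝ (Fin N)) := by
    rw [Set.image_eq_range]
    exact (linearIndepOn_id_range_iff ((single_injective N).comp Subtype.coe_injective)).mpr
      (hli.comp (fun y : (S : Set (Fin N)) => y.1) Subtype.coe_injective)
  rw [finrank_span_set_eq_card h2, Set.toFinset_image, Finset.toFinset_coe,
    Finset.card_image_of_injective _ (single_injective N)]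

private lemma proj_apply {N : ℕ} (S : Finset (Fin N)) (x : EuclideanSpace ℝ (Fin N)) (n : Fin N) :
    ((Submodule.span ℝ ((fun n => EuclideanSpace.single n (1 : ℝ)) '' (S : Set (Fin N)))).subtypeL
      ((Submodule.orthogonalProjection
        (Submodule.span ℝ ((fun n => EuclideanSpace.single n (1 : ℝ)) '' (S : Set (Fin N))))) x)) n
      = if n ∈ S then x n else 0 := by
  classical
  set W := Submodule.span ℝ ((fun n => EuclideanSpace.single n (1 : ℝ)) '' (S : Set (Fin N)))
    with hW
  set v : EuclideanSpace ℝ (Fin N) := ∑ m ∈ S, x m • EuclideanSpace.single m (1 : ℝ) with hv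
  have hvapp : ∀ k : Fin N, v k = if k ∈ S then x k else 0 := by
    intro k
    rw [hv, sum_apply_coord]
    simp only [PiLp.smul_apply, EuclideanSpace.single_apply, smul_eq_mul, mul_ite, mul_one,
      mul_zero]
    simp [Finset.sum_ite_eq]
  have hvW : v ∈ W := by
    apply Submodule.sum_mem
    intro m hm
    exact Submodule.smul_mem _ _ (Submodule.subset_span ⟨m, hm, rfl⟩)
  have hproj : ((Submodule.orthogonalProjection W x : W) : EuclideanSpace ℝ (Fin N)) = v := by
    rw [← Submodule.starProjection_apply]
    apply Submodule.eq_starProjection_of_mem_of_inner_eq_zero hvW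
    intro w hw
    induction hw using Submodule.span_induction with
    | mem y hy =>
      obtain ⟨m, hm, rfl⟩ := hy
      rw [real_inner_comm, EuclideanSpace.inner_single_left]
      simp only [map_one, one_mul]
      have hsub : (x - v) m = x m - v m := rfl
      rw [hsub, hvapp m, if_pos (Finset.mem_coe.mp hm)]
      exact sub_self _
    | zero => simp
    | add y z _ _ hy hz => rw [inner_add_right, hy, hz, add_zero]
    | smul a y _ hy => rw [inner_smul_right, hy, mul_zero]
  simp only [Submodule.subtypeL_apply]
  rw [hproj]
  exact hvapp n

private lemma sorted_sort_eq {k : ℕ} (f : Fin k → ℕ)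
    (hf : ∀ i j : Fin k, i ≤ j → f j ≤ f i) (s : Multiset ℕ)
    (hs : s = ↑(List.ofFn f)) (m : ℕ) :
    ((s.sort (· ≥ ·)).take m).sum
      = ∑ j ∈ Finset.univ.filter (fun j : Fin k => (j : ℕ) < m), f j := by
  have hsorted : (List.ofFn f).Pairwise (· ≥ ·) := by
    rw [List.pairwise_ofFn]
    intro i j hij
    exact hf i j hij.le
  have hperm : List.Perm (s.sort (· ≥ ·)) (List.ofFn f) := by
    rw [← Multiset.coe_eq_coe, Multiset.sort_eq, hs]
  have heq : s.sort (· ≥ ·) = List.ofFn f :=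
    List.Perm.eq_of_pairwise (fun a b _ _ h1 h2 => le_antisymm h2 h1) (Multiset.pairwise_sort _ _) hsorted hperm
  rw [heq, List.sum_take_ofFn]

private lemma sum_range_dite {D : ℕ} (f : Fin D → ℕ) (m : ℕ) :
    ∑ i ∈ Finset.range m, (if h : i < D then f ⟨i, h⟩ else 0)
      = ∑ j ∈ Finset.univ.filter (fun j : Fin D => (j : ℕ) < m), f j := by
  induction m with
  | zero => simp
  | succ m ih =>
    rw [Finset.sum_range_succ, ih]
    by_cases h : m < D
    · rw [dif_pos h]
      have hins : Finset.univ.filter (fun j : Fin D => (j : ℕ) < m + 1)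
          = insert (⟨m, h⟩ : Fin D) (Finset.univ.filter (fun j : Fin D => (j : ℕ) < m)) := by
        ext j
        simp only [Finset.mem_filter, Finset.mem_univ, true_and, Finset.mem_insert]
        constructor
        · intro hj
          rcases Nat.lt_succ_iff_lt_or_eq.mp hj with h1 | h1
          · exact Or.inr h1
          · exact Or.inl (Fin.ext h1)
        · rintro (rfl | h1)
          · exact Nat.lt_succ_self m
          · omega
      rw [hins, Finset.sum_insert (by simp)]
      omega
    · rw [dif_neg h, add_zero]
      congr 1
      ext j
      simp only [Finset.mem_filter, Finset.mem_univ, true_and]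
      have := j.isLt
      omega

/-- Let `λ_1, …, λ_N` be positive integers summing to `M ≥ N`, let
`d_1, …, d_D` be positive integers summing to `M`, and set `T = max_n λ_n`,
`a_n = #{r : λ_r ≥ n}`.  If `(a_n)_{n=1}^T` majorizes `(d_i)_{i=1}^D`, then
there exist subspaces `W_1, …, W_D` of `ℝ^N`, each spanned by a subset of the
standard orthonormal basis, with `dim W_i = d_i`, such that the sum of the
orthogonal projections onto the `W_i` is the diagonal operator
`diag(λ_1, …, λ_N)`. -/
theorem spectral_tetris_fusion_frame_integer_exists (N M D : ℕ) (hN : 0 < N)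
    (hNM : N ≤ M)
    (lam : Fin N → ℕ) (hlpos : ∀ n, 0 < lam n) (hlsum : ∑ n, lam n = M)
    (d : Fin D → ℕ) (hdpos : ∀ i, 0 < d i) (hdsum : ∑ i, d i = M)
    (T : ℕ) (hT : T = Finset.univ.sup lam)
    (a : ℕ → ℕ) (ha : ∀ n, a n = (Finset.univ.filter (fun r : Fin N => n ≤ lam r)).card)
    (hmaj : Multiset.Majorizes ((Multiset.range T).map (fun n => a (n + 1)))
      (Multiset.map d Finset.univ.val)) :
    ∃ W : Fin D → Submodule ℝ (EuclideanSpace ℝ (Fin N)),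
      (∀ i, ∃ S : Finset (Fin N),
        W i = Submodule.span ℝ ((fun n => EuclideanSpace.single n (1 : ℝ)) '' S)) ∧
      (∀ i, Module.finrank ℝ (W i) = d i) ∧
      ∀ (x : EuclideanSpace ℝ (Fin N)) (n : Fin N),
        (∑ i, ((W i).subtypeL (((W i).orthogonalProjection) x))) n =
          (lam n : ℝ) * x n := by
  classical
  have haconj : ∀ t, a t = conjC lam t := fun t => by rw [ha]; rfl
  have ha0 : ∀ t, T < t → a t = 0 := by
    intro t ht
    rw [ha, Finset.card_eq_zero, Finset.filter_eq_empty_iff]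
    intro r _
    have : lam r ≤ T := hT ▸ Finset.le_sup (Finset.mem_univ r)
    omega
  set π := Tuple.sort d with hπ
  set f : Fin D → ℕ := fun j => d (π j.rev) with hf
  have hfmono : ∀ i j : Fin D, i ≤ j → f j ≤ f i := by
    intro i j hij
    exact Tuple.monotone_sort d (Fin.rev_le_rev.mpr hij)
  have hemono : ∀ i j : ℕ, i ≤ j →
      (if h : j < D then f ⟨j, h⟩ else 0) ≤ (if h : i < D then f ⟨i, h⟩ else 0) := by
    intro i j hij
    by_cases hj : j < D
    · rw [dif_pos hj, dif_pos (lt_of_le_of_lt hij hj)]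
      exact hfmono _ _ hij
    · rw [dif_neg hj]
      exact Nat.zero_le _
  have hperm1 : Multiset.map d Finset.univ.val = ↑(List.ofFn f) := by
    have h1 : Finset.univ.val.map f = (↑(List.ofFn f) : Multiset ℕ) := Fin.univ_val_map f
    rw [← h1]
    have h2 : Finset.univ.val.map (⇑(Fin.revPerm.trans π)) = Finset.univ.val := by
      have h3 := Finset.map_univ_equiv (Fin.revPerm.trans π)
      calc Finset.univ.val.map (⇑(Fin.revPerm.trans π))
          = (Finset.univ.map (Fin.revPerm.trans π).toEmbedding).val := rfl
        _ = Finset.univ.val := by rw [h3]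
    calc Multiset.map d Finset.univ.val
        = Multiset.map d (Finset.univ.val.map (⇑(Fin.revPerm.trans π))) := by rw [h2]
      _ = Finset.univ.val.map f := by rw [Multiset.map_map]; rfl
  set g : Fin T → ℕ := fun t => a ((t : ℕ) + 1) with hg
  have hgmono : ∀ i j : Fin T, i ≤ j → g j ≤ g i := by
    intro i j hij
    show a ((j : ℕ) + 1) ≤ a ((i : ℕ) + 1)
    rw [ha, ha]
    apply Finset.card_le_card
    apply Finset.monotone_filter_right
    intro r hr
    have hij' : (i : ℕ) ≤ (j : ℕ) := hij
    omega
  have hperm2 : (Multiset.range T).map (fun n => a (n + 1)) = ↑(List.ofFn g) := by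
    rw [List.ofFn_eq_map]
    have h4 : (List.finRange T).map g = (List.range T).map (fun n => a (n + 1)) := by
      rw [← List.map_coe_finRange_eq_range, List.map_map]
      rfl
    rw [h4, ← Multiset.coe_range, Multiset.map_coe]
  -- majorization in functional form
  have hEmaj : ∀ m : ℕ, m ≤ D →
      ∑ i ∈ Finset.range m, (if h : i < D then f ⟨i, h⟩ else 0) ≤ ∑ n, min (lam n) m := by
    intro m _
    have h5 := hmaj.2 m
    rw [sorted_sort_eq f hfmono _ hperm1 m, sorted_sort_eq g hgmono _ hperm2 m] at h5
    rw [sum_range_dite]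
    have h6 : ∑ j ∈ Finset.univ.filter (fun j : Fin T => (j : ℕ) < m), g j
        = ∑ t ∈ Finset.range m, (if h : t < T then g ⟨t, h⟩ else 0) :=
      (sum_range_dite g m).symm
    have h7 : ∑ t ∈ Finset.range m, (if h : t < T then g ⟨t, h⟩ else 0)
        ≤ ∑ t ∈ Finset.range m, a (t + 1) := by
      apply Finset.sum_le_sum
      intro t _
      by_cases h : t < T
      · rw [dif_pos h]
      · rw [dif_neg h]
        exact Nat.zero_le _
    have h8 : ∑ t ∈ Finset.range m, a (t + 1) = ∑ n, min (lam n) m := by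
      rw [show (∑ t ∈ Finset.range m, a (t + 1)) = ∑ t ∈ Finset.range m, conjC lam (t + 1) from
        Finset.sum_congr rfl fun t _ => haconj (t + 1)]
      exact sum_conj_eq_sum_min lam m
    omega
  have hsum_f : ∑ j, f j = M := by
    have := Equiv.sum_comp (Fin.revPerm.trans π) d
    rw [← hdsum, ← this]
    rfl
  have hEsum : ∑ i ∈ Finset.range D, (if h : i < D then f ⟨i, h⟩ else 0) = ∑ n, lam n := by
    rw [sum_range_dite]
    have huniv : Finset.univ.filter (fun j : Fin D => (j : ℕ) < D) = Finset.univ := by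
      ext j
      simp [j.isLt]
    rw [huniv, hsum_f, hlsum]
  obtain ⟨S, hScard, hScount⟩ := core D lam (fun i => if h : i < D then f ⟨i, h⟩ else 0)
    hemono hEsum hEmaj
  set SS : Fin D → Finset (Fin N) := fun i => S (((π.symm i).rev : Fin D) : ℕ) with hSS
  have hSScard : ∀ i, (SS i).card = d i := by
    intro i
    rw [hSS]
    have h9 := hScard (((π.symm i).rev : Fin D) : ℕ) ((π.symm i).rev).isLt
    rw [h9, dif_pos ((π.symm i).rev).isLt]
    show f ⟨((π.symm i).rev : Fin D), _⟩ = d i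
    have : (⟨((π.symm i).rev : Fin D), ((π.symm i).rev).isLt⟩ : Fin D) = (π.symm i).rev :=
      Fin.ext rfl
    rw [this]
    show d (π ((π.symm i).rev).rev) = d i
    rw [Fin.rev_rev, Equiv.apply_symm_apply]
  have hSScount : ∀ n, (Finset.univ.filter (fun i : Fin D => n ∈ SS i)).card = lam n := by
    intro n
    calc (Finset.univ.filter (fun i : Fin D => n ∈ SS i)).card
        = ∑ i : Fin D, (if n ∈ SS i then 1 else 0) := Finset.card_filter _ _
      _ = ∑ i : Fin D, (if n ∈ S (((π.symm.trans Fin.revPerm) i : Fin D) : ℕ) then 1 else 0) :=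
          Finset.sum_congr rfl (fun i _ => rfl)
      _ = ∑ k : Fin D, (if n ∈ S (k : ℕ) then 1 else 0) :=
          Equiv.sum_comp (π.symm.trans Fin.revPerm) (fun k : Fin D => if n ∈ S (k : ℕ) then 1 else 0)
      _ = ∑ k ∈ Finset.range D, (if n ∈ S k then 1 else 0) :=
          Fin.sum_univ_eq_sum_range (fun k => if n ∈ S k then 1 else 0) D
      _ = ((Finset.range D).filter (fun k => n ∈ S k)).card := (Finset.card_filter _ _).symm
      _ = lam n := hScount n
  refine ⟨fun i => Submodule.span ℝ
      ((fun n => EuclideanSpace.single n (1 : ℝ)) '' ((SS i : Finset (Fin N)) : Set (Fin N))),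
    fun i => ⟨SS i, rfl⟩, fun i => ?_, fun x n => ?_⟩
  · rw [finrank_span_single, hSScard]
  · rw [sum_apply_coord]
    have h10 : ∀ i : Fin D, ((Submodule.span ℝ
        ((fun n => EuclideanSpace.single n (1 : ℝ)) '' ((SS i : Finset (Fin N)) : Set (Fin N)))).subtypeL
        ((Submodule.orthogonalProjection _) x)) n = if n ∈ SS i then x n else 0 :=
      fun i => proj_apply (SS i) x n
    rw [Finset.sum_congr rfl fun i _ => h10 i]
    rw [Finset.sum_ite, Finset.sum_const, Finset.sum_const_zero, add_zero, nsmul_eq_mul]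
    rw [hSScount n]
end

section
/- Let N < M < 2N be positive integers, K = M − N + 1, L = ⌊M/K⌋, and r = K(L+1) − M. If L(N−M) + N ≥ 0, then M − (r−1)·(L(N−M) + M) ≥ L(N−M) + M; that is, starting with correction factor M and subtracting r−1 stepsizes L(N−M)+M leaves an integer that is at least L(N−M)+M. -/
/-- Let `N < M < 2N`, `K = M − N + 1`, `L = ⌊M/K⌋`, `r = K(L+1) − M`.
If `L(N−M) + N ≥ 0`, then `M − (r−1)(L(N−M)+M) ≥ L(N−M)+M`: starting with
correction factor `M` and subtracting `r−1` stepsizes `L(N−M)+M` leaves an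
integer that is still at least `L(N−M)+M`. -/
theorem correction_factor_stays_valid (N M : ℕ) (hN : 0 < N) (h1 : N < M)
    (h2 : M < 2 * N) (K L : ℕ) (hK : K = M - N + 1) (hL : L = M / K)
    (r : ℤ) (hr : r = (K : ℤ) * ((L : ℤ) + 1) - M)
    (hpos : 0 ≤ (L : ℤ) * ((N : ℤ) - M) + N) :
    (L : ℤ) * ((N : ℤ) - M) + M ≤
      (M : ℤ) - (r - 1) * ((L : ℤ) * ((N : ℤ) - M) + M) := by
  have hKZ : (K : ℤ) = (M : ℤ) - N + 1 := by omega
  have hKL : (L : ℤ) * K ≤ M := by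
    have h := Nat.div_mul_le_self M K
    rw [← hL] at h
    exact_mod_cast h
  have hKr : 0 ≤ (K : ℤ) - r := by rw [hr]; nlinarith
  have key : 0 ≤ ((K : ℤ) - r) * ((L : ℤ) * ((N : ℤ) - M) + N) :=
    mul_nonneg hKr hpos
  nlinarith [key, hKZ, hr]
end
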